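/- arXiv:1906.10933 — 2 statements merged into one kernel-verified Lean document; each statement's English description precedes it below -/
import Mathlib

section
/- Let S : X → E be an admissible impact map and A ⊂ E an admissible acceptance set. Then the support function of the systemic acceptance set satisfies σ_{S^{-1}(A)} = usc(α), where usc denotes the σ(X',X)-upper semicontinuous hull. Moreover, if bar(A) ∩ E'_{++} ≠ ∅, then also σ_{S^{-1}(A)} = usc(α⁺). -/
open MeasureTheory Filter Set
open scoped ENNReal

noncomputable section

namespace SystemicRisk

variable {Ω : Type*} [MeasurableSpace Ω]

/-- A random variable is essentially bounded. -/
def EssBdd {μ : Measure Ω} (f : Ω →ₘ[μ] ℝ) : Prop :=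
  ∃ C : ℝ, ∀ᵐ ω ∂μ, |f ω| ≤ C

/-- The scalar pairing `E[U W]`. -/
def ip {μ : Measure Ω} (U W : Ω →ₘ[μ] ℝ) : ℝ := ∫ ω, U ω * W ω ∂μ

/-- The Köthe dual of a set of random variables. -/
def kdual {μ : Measure Ω} (L : Set (Ω →ₘ[μ] ℝ)) : Set (Ω →ₘ[μ] ℝ) :=
  {Z | ∀ f ∈ L, Integrable (fun ω => f ω * Z ω) μ}

/-- `nrm` is a Banach lattice norm on `L` (w.r.t. the a.s. order). -/
structure IsBLNorm {μ : Measure Ω} (L : Set (Ω →ₘ[μ] ℝ)) (nrm : (Ω →ₘ[μ] ℝ) → ℝ) : Prop where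
  nonneg : ∀ f ∈ L, 0 ≤ nrm f
  eq_zero_iff : ∀ f ∈ L, (nrm f = 0 ↔ f = 0)
  smul_eq : ∀ f ∈ L, ∀ c : ℝ, nrm (c • f) = |c| * nrm f
  triangle : ∀ f ∈ L, ∀ g ∈ L, nrm (f + g) ≤ nrm f + nrm g
  solid : ∀ f ∈ L, ∀ g ∈ L, |f| ≤ |g| → nrm f ≤ nrm g
  complete : ∀ u : ℕ → (Ω →ₘ[μ] ℝ), (∀ n, u n ∈ L) →
      (∀ ε : ℝ, 0 < ε → ∃ N : ℕ, ∀ m ≥ N, ∀ n ≥ N, nrm (u m - u n) < ε) →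
      ∃ f ∈ L, ∀ ε : ℝ, 0 < ε → ∃ N : ℕ, ∀ n ≥ N, nrm (u n - f) < ε

/-- `L` is an admissible space: a linear subspace of `L^0` which is a Banach lattice
(for the a.s. order, with norm `nrm`) satisfying `L^∞ ⊆ L ⊆ L^1`. -/
structure IsAdmissible {μ : Measure Ω} (L : Set (Ω →ₘ[μ] ℝ)) (nrm : (Ω →ₘ[μ] ℝ) → ℝ) : Prop where
  zero_mem : (0 : Ω →ₘ[μ] ℝ) ∈ L
  add_mem : ∀ f ∈ L, ∀ g ∈ L, f + g ∈ L
  smul_mem : ∀ (c : ℝ), ∀ f ∈ L, c • f ∈ L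
  sup_mem : ∀ f ∈ L, ∀ g ∈ L, f ⊔ g ∈ L
  inf_mem : ∀ f ∈ L, ∀ g ∈ L, f ⊓ g ∈ L
  linfty_subset : ∀ f, EssBdd f → f ∈ L
  subset_lone : ∀ f ∈ L, Integrable f μ
  banach : IsBLNorm L nrm

variable {d : ℕ}

/-- The product space `X = X_1 × ⋯ × X_d`. -/
def prodSet {μ : Measure Ω} (Li : Fin d → Set (Ω →ₘ[μ] ℝ)) : Set (Fin d → (Ω →ₘ[μ] ℝ)) :=
  {X | ∀ i, X i ∈ Li i}

/-- The vector pairing `E[⟨X,Z⟩] = ∑ i, E[X_i Z_i]`. -/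
def pairing {μ : Measure Ω} (X Z : Fin d → (Ω →ₘ[μ] ℝ)) : ℝ := ∑ i, ip (X i) (Z i)

/-- The constant random vector associated with `m ∈ ℝ^d`. -/
def cvec (μ : Measure Ω) (m : Fin d → ℝ) : Fin d → (Ω →ₘ[μ] ℝ) :=
  fun i => (AEEqFun.const Ω (m i) : Ω →ₘ[μ] ℝ)

/-- The weak topology `σ(P, D)` on a set of random vectors `P` induced by the pairing
with elements of `D`. -/
def wtop {μ : Measure Ω} (P D : Set (Fin d → (Ω →ₘ[μ] ℝ))) : TopologicalSpace ↥P :=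
  TopologicalSpace.induced
    (fun X : ↥P => fun Z : ↥D => pairing (X : Fin d → (Ω →ₘ[μ] ℝ)) (Z : Fin d → (Ω →ₘ[μ] ℝ)))
    Pi.topologicalSpace

/-- The weak topology `σ(P, D)` on a set of random variables `P` induced by the pairing
with elements of `D`. -/
def wtop1 {μ : Measure Ω} (P D : Set (Ω →ₘ[μ] ℝ)) : TopologicalSpace ↥P :=
  TopologicalSpace.induced
    (fun U : ↥P => fun W : ↥D => ip (U : Ω →ₘ[μ] ℝ) (W : Ω →ₘ[μ] ℝ))
    Pi.topologicalSpace

/-- An admissible impact map `S : X → E`. -/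
structure IsAdmissibleImpact {μ : Measure Ω} (XX XX' : Set (Fin d → (Ω →ₘ[μ] ℝ)))
    (EE EE' : Set (Ω →ₘ[μ] ℝ)) (S : (Fin d → (Ω →ₘ[μ] ℝ)) → (Ω →ₘ[μ] ℝ)) : Prop where
  mapsTo : ∀ X ∈ XX, S X ∈ EE
  nonconst : ∃ X ∈ XX, ∃ Y ∈ XX, S X ≠ S Y
  normalized : S 0 = 0
  mono : ∀ X ∈ XX, ∀ Y ∈ XX, X ≤ Y → S X ≤ S Y
  concave : ∀ X ∈ XX, ∀ Y ∈ XX, ∀ t : ℝ, 0 ≤ t → t ≤ 1 →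
      t • S X + (1 - t) • S Y ≤ S (t • X + (1 - t) • Y)
  usc : ∀ W ∈ EE', (0 : Ω →ₘ[μ] ℝ) ≤ W →
      @UpperSemicontinuous (↥XX) ℝ (wtop XX XX') _
        (fun X : ↥XX => ∫ ω, S (X : Fin d → (Ω →ₘ[μ] ℝ)) ω * W ω ∂μ)

/-- An admissible acceptance set `A ⊆ E` (relative to the impact map `S`). -/
structure IsAdmissibleAcceptance {μ : Measure Ω} (XX : Set (Fin d → (Ω →ₘ[μ] ℝ)))
    (EE EE' : Set (Ω →ₘ[μ] ℝ)) (S : (Fin d → (Ω →ₘ[μ] ℝ)) → (Ω →ₘ[μ] ℝ))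
    (A : Set (Ω →ₘ[μ] ℝ)) : Prop where
  subset : A ⊆ EE
  preimage_nonempty : ∃ X ∈ XX, S X ∈ A
  preimage_proper : ∃ X ∈ XX, S X ∉ A
  zero_mem : (0 : Ω →ₘ[μ] ℝ) ∈ A
  mono : ∀ U ∈ A, ∀ V ∈ EE, (0 : Ω →ₘ[μ] ℝ) ≤ V → U + V ∈ A
  convex : ∀ U ∈ A, ∀ V ∈ A, ∀ t : ℝ, 0 ≤ t → t ≤ 1 → t • U + (1 - t) • V ∈ A
  closed : @IsClosed (↥EE) (wtop1 EE EE') {U : ↥EE | (U : Ω →ₘ[μ] ℝ) ∈ A}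

/-- The systemic acceptance set `S⁻¹(A) = {X ∈ X : S(X) ∈ A}`. -/
def sysAcc {μ : Measure Ω} (XX : Set (Fin d → (Ω →ₘ[μ] ℝ)))
    (S : (Fin d → (Ω →ₘ[μ] ℝ)) → (Ω →ₘ[μ] ℝ)) (A : Set (Ω →ₘ[μ] ℝ)) :
    Set (Fin d → (Ω →ₘ[μ] ℝ)) :=
  {X ∈ XX | S X ∈ A}

/-- The "first allocate, then aggregate" systemic risk measure `ρ`. -/
def rho (μ : Measure Ω) (S : (Fin d → (Ω →ₘ[μ] ℝ)) → (Ω →ₘ[μ] ℝ)) (A : Set (Ω →ₘ[μ] ℝ))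
    (X : Fin d → (Ω →ₘ[μ] ℝ)) : EReal :=
  ⨅ m ∈ {m : Fin d → ℝ | S (X + cvec μ m) ∈ A}, ((∑ i, m i : ℝ) : EReal)

/-- The (lower) support function of a set of random vectors. -/
def suppV {μ : Measure Ω} (B : Set (Fin d → (Ω →ₘ[μ] ℝ))) (Z : Fin d → (Ω →ₘ[μ] ℝ)) : EReal :=
  ⨅ X ∈ B, ((pairing X Z : ℝ) : EReal)

/-- The barrier cone of a set of random vectors, inside the dual set `D`. -/
def barrV {μ : Measure Ω} (B D : Set (Fin d → (Ω →ₘ[μ] ℝ))) : Set (Fin d → (Ω →ₘ[μ] ℝ)) :=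
  {Z ∈ D | ⊥ < suppV B Z}

/-- The (lower) support function of a set of random variables. -/
def suppS {μ : Measure Ω} (A : Set (Ω →ₘ[μ] ℝ)) (W : Ω →ₘ[μ] ℝ) : EReal :=
  ⨅ U ∈ A, ((ip U W : ℝ) : EReal)

/-- The barrier cone of a set of random variables, inside the dual set `D`. -/
def barrS {μ : Measure Ω} (A D : Set (Ω →ₘ[μ] ℝ)) : Set (Ω →ₘ[μ] ℝ) :=
  {W ∈ D | ⊥ < suppS A W}

/-- The generic penalty function with dual variables `W` ranging over `K`. -/
def penalty {μ : Measure Ω} (XX : Set (Fin d → (Ω →ₘ[μ] ℝ)))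
    (A : Set (Ω →ₘ[μ] ℝ)) (S : (Fin d → (Ω →ₘ[μ] ℝ)) → (Ω →ₘ[μ] ℝ))
    (K : Set (Ω →ₘ[μ] ℝ)) (Z : Fin d → (Ω →ₘ[μ] ℝ)) : EReal :=
  ⨆ W ∈ K, (suppS A W +
    ⨅ X ∈ XX, ((pairing X Z - ∫ ω, S X ω * W ω ∂μ : ℝ) : EReal))

/-- a.s. strictly positive random variables. -/
def strictPos (μ : Measure Ω) : Set (Ω →ₘ[μ] ℝ) := {W | ∀ᵐ ω ∂μ, 0 < W ω}

/-- The penalty function `α`. -/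
def alpha {μ : Measure Ω} (XX : Set (Fin d → (Ω →ₘ[μ] ℝ))) (EE' : Set (Ω →ₘ[μ] ℝ))
    (A : Set (Ω →ₘ[μ] ℝ)) (S : (Fin d → (Ω →ₘ[μ] ℝ)) → (Ω →ₘ[μ] ℝ)) :
    (Fin d → (Ω →ₘ[μ] ℝ)) → EReal :=
  penalty XX A S (barrS A EE')

/-- The penalty function `α⁺`. -/
def alphaPlus {μ : Measure Ω} (XX : Set (Fin d → (Ω →ₘ[μ] ℝ))) (EE' : Set (Ω →ₘ[μ] ℝ))
    (A : Set (Ω →ₘ[μ] ℝ)) (S : (Fin d → (Ω →ₘ[μ] ℝ)) → (Ω →ₘ[μ] ℝ)) :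
    (Fin d → (Ω →ₘ[μ] ℝ)) → EReal :=
  penalty XX A S (barrS A EE' ∩ (strictPos μ ∪ {0}))

/-- a.s. strictly positive random vectors. -/
def strictPosV (μ : Measure Ω) (d : ℕ) : Set (Fin d → (Ω →ₘ[μ] ℝ)) :=
  {Z | ∀ i, ∀ᵐ ω ∂μ, 0 < Z i ω}

/-- The set `C` of nonnegative dual vectors with all components of expectation one. -/
def Cset {μ : Measure Ω} (XX' : Set (Fin d → (Ω →ₘ[μ] ℝ))) : Set (Fin d → (Ω →ₘ[μ] ℝ)) :=
  {Z ∈ XX' | (∀ i, (0 : Ω →ₘ[μ] ℝ) ≤ Z i) ∧ ∀ i, (∫ ω, Z i ω ∂μ) = 1}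

/-- A map with values in `[−∞,∞]` is proper on `P` if it never attains `−∞` on `P`
and is finite somewhere on `P`. -/
def ProperOn {β : Type*} (P : Set β) (f : β → EReal) : Prop :=
  (∀ x ∈ P, f x ≠ ⊥) ∧ ∃ x ∈ P, f x ≠ ⊤

/-- The positive part of an extended real number, as an extended nonnegative real. -/
def epos (x : EReal) : ℝ≥0∞ := if x = ⊤ then ⊤ else ENNReal.ofReal x.toReal

/-- The integral of an extended-real-valued function. -/
def eintegral (μ : Measure Ω) (g : Ω → EReal) : EReal :=
  ((∫⁻ ω, epos (g ω) ∂μ : ℝ≥0∞) : EReal) - ((∫⁻ ω, epos (-(g ω)) ∂μ : ℝ≥0∞) : EReal)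


/-- The upper semicontinuous hull of an extended-real-valued map (w.r.t. a topology `t`):
the smallest `t`-upper semicontinuous map dominating it. -/
def uscHull {β : Type*} (t : TopologicalSpace β) (f : β → EReal) : β → EReal :=
  fun x => ⨅ g ∈ {g : β → EReal | @UpperSemicontinuous β EReal t _ g ∧ ∀ y, f y ≤ g y}, g x


section Aux0


/-! ### EReal helpers -/

lemma ereal_le_coe_of_forall {x : EReal} {y : ℝ}
    (h : ∀ t : ℝ, (t : EReal) ≤ x → t ≤ y) : x ≤ (y : EReal) := by
  induction x using EReal.rec with
  | bot => exact bot_le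
  | coe r => exact EReal.coe_le_coe_iff.2 (h r le_rfl)
  | top =>
    exfalso
    have := h (y + 1) le_top
    linarith

lemma ereal_eq_bot_of_forall {x : EReal} (h : ∀ m : ℝ, x ≤ (m : EReal)) : x = ⊥ := by
  induction x using EReal.rec with
  | bot => rfl
  | coe r =>
    exfalso
    have := EReal.coe_le_coe_iff.1 (h (r - 1))
    linarith
  | top => exact absurd (h 0) (by simp)

lemma ereal_coe_le_of_forall_sub {k : ℝ} {x : EReal}
    (h : ∀ δ : ℝ, 0 < δ → ((k - δ : ℝ) : EReal) ≤ x) : (k : EReal) ≤ x := by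
  induction x using EReal.rec with
  | bot =>
    exfalso
    have := h 1 one_pos
    rw [le_bot_iff] at this
    exact EReal.coe_ne_bot _ this
  | coe r =>
    refine EReal.coe_le_coe_iff.2 ?_
    by_contra hc
    push_neg at hc
    have := EReal.coe_le_coe_iff.1 (h ((k - r) / 2) (by linarith))
    linarith
  | top => exact le_top

lemma ereal_exists_real_le {x : EReal} (h : x ≠ ⊥) : ∃ r : ℝ, (r : EReal) ≤ x := by
  induction x using EReal.rec with
  | bot => exact absurd rfl h
  | coe r => exact ⟨r, le_rfl⟩
  | top => exact ⟨0, le_top⟩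

lemma ereal_coe_of_ne_bot_le_zero {x : EReal} (h1 : x ≠ ⊥) (h2 : x ≤ 0) :
    ∃ r : ℝ, x = (r : EReal) := by
  induction x using EReal.rec with
  | bot => exact absurd rfl h1
  | coe r => exact ⟨r, rfl⟩
  | top => exact absurd h2 (by simp)

lemma ereal_add_ne_bot_left {x y : EReal} (h : x + y ≠ ⊥) : x ≠ ⊥ := by
  intro hx; rw [hx, EReal.bot_add] at h; exact h rfl

lemma ereal_add_ne_bot_right {x y : EReal} (h : x + y ≠ ⊥) : y ≠ ⊥ := by
  intro hy; rw [hy, EReal.add_bot] at h; exact h rfl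

/-! ### Finset min helper -/

lemma finset_min_pos {β : Type*} (F : Finset β) (e : β → ℝ) (he : ∀ i ∈ F, 0 < e i) :
    ∃ ε : ℝ, 0 < ε ∧ ∀ i ∈ F, ε ≤ e i := by
  rcases F.eq_empty_or_nonempty with h | h
  · exact ⟨1, one_pos, by simp [h]⟩
  · obtain ⟨b, hb, hbm⟩ := F.exists_min_image e h
    exact ⟨e b, he b hb, fun i hi => hbm i hi⟩

/-! ### Box neighbourhoods in weak topologies -/

lemma box_of_nhds {γ δ : Type*} (pr : γ → δ → ℝ) (p₀ : γ) {s : Set γ}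
    (hs : s ∈ @nhds γ (TopologicalSpace.induced pr Pi.topologicalSpace) p₀) :
    ∃ (F : Finset δ) (ε : ℝ), 0 < ε ∧
      ∀ q, (∀ i ∈ F, |pr q i - pr p₀ i| < ε) → q ∈ s := by
  classical
  rw [@nhds_induced] at hs
  obtain ⟨T, hT, hsub⟩ := Filter.mem_comap.1 hs
  rw [nhds_pi] at hT
  obtain ⟨I, hIfin, t, ht, hI⟩ := Filter.mem_pi.1 hT
  have hch : ∀ i : δ, ∃ e : ℝ, 0 < e ∧ (i ∈ I → Metric.ball (pr p₀ i) e ⊆ t i) := by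
    intro i
    by_cases hi : i ∈ I
    · obtain ⟨e, he, hball⟩ := Metric.mem_nhds_iff.1 (ht i)
      exact ⟨e, he, fun _ => hball⟩
    · exact ⟨1, one_pos, fun h => absurd h hi⟩
  choose e he1 he2 using hch
  obtain ⟨ε, hε, hεle⟩ := finset_min_pos hIfin.toFinset e
    (fun i _ => he1 i)
  refine ⟨hIfin.toFinset, ε, hε, fun q hq => ?_⟩
  apply hsub
  apply hI
  intro i hi
  apply he2 i hi
  rw [Metric.mem_ball, Real.dist_eq]
  exact lt_of_lt_of_le (hq i (hIfin.mem_toFinset.2 hi)) (hεle i (hIfin.mem_toFinset.2 hi))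

/-! ### The generic finite-dimensional separation lemma -/

lemma hypo_sep {V : Type*} [AddCommGroup V] [Module ℝ V] {P : Set V} (hP : Convex ℝ P)
    (φ : V → EReal)
    (hconc : ∀ x ∈ P, ∀ y ∈ P, ∀ t : ℝ, 0 < t → t < 1 → ∀ a b : ℝ,
      (a : EReal) ≤ φ x → (b : EReal) ≤ φ y →
      ((t * a + (1 - t) * b : ℝ) : EReal) ≤ φ (t • x + (1 - t) • y))
    {ι : Type*} [Fintype ι] (L : ι → V → ℝ)
    (hLaff : ∀ j, ∀ x ∈ P, ∀ y ∈ P, ∀ t : ℝ, 0 < t → t < 1 →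
      L j (t • x + (1 - t) • y) = t * L j x + (1 - t) * L j y)
    (v : ι → ℝ) {ε c c' : ℝ} (hε : 0 < ε) (hcc' : c < c')
    (hbox : ∀ x ∈ P, (∀ j, |L j x - v j| < ε) → φ x < (c : EReal))
    {x₀ : V} (hx₀ : x₀ ∈ P) {t₀ : ℝ} (ht₀ : (t₀ : EReal) ≤ φ x₀) :
    ∃ (lam : ι → ℝ) (a u : ℝ), a ≤ 0 ∧ a * c' < u ∧
      ∀ x ∈ P, ∀ t : ℝ, (t : EReal) ≤ φ x →
        u < (∑ j, lam j * (L j x - v j)) + a * t := by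
  classical
  set E := (ι → ℝ) × ℝ
  set D : Set E := {p | ∃ x ∈ P, (∀ j, p.1 j = L j x - v j) ∧ (p.2 : EReal) ≤ φ x} with hD
  -- D is convex
  have hDconv : Convex ℝ D := by
    rintro p ⟨x, hx, hpx, hpt⟩ q ⟨y, hy, hqy, hqt⟩ s t hs ht hst
    rcases eq_or_lt_of_le hs with hs0 | hs0
    · have hts : t = 1 := by linarith
      have heq : s • p + t • q = q := by rw [← hs0, hts]; simp
      rw [heq]; exact ⟨y, hy, hqy, hqt⟩
    rcases eq_or_lt_of_le ht with ht0 | ht0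
    · have hts : s = 1 := by linarith
      have heq : s • p + t • q = p := by rw [← ht0, hts]; simp
      rw [heq]; exact ⟨x, hx, hpx, hpt⟩
    have ht1 : t = 1 - s := by linarith
    have hs1 : s < 1 := by linarith
    refine ⟨s • x + (1 - s) • y, hP hx hy hs (by linarith) (by linarith), ?_, ?_⟩
    · intro j
      have hco : (s • p + t • q).1 j = s * p.1 j + t * q.1 j := rfl
      rw [hco, hLaff j x hx y hy s hs0 hs1, hpx j, hqy j, ht1]
      ring
    · have := hconc x hx y hy s hs0 hs1 p.2 q.2 hpt hqt
      have heq : (s • p + t • q).2 = s * p.2 + t * q.2 := rfl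
      rw [heq, ht1]
      exact this
  -- the point to separate
  set q₀ : E := (0, c') with hq₀
  have hδ : (0:ℝ) < min ε (c' - c) := lt_min hε (by linarith)
  have hqnot : q₀ ∉ closure D := by
    rw [Metric.mem_closure_iff]
    push_neg
    refine ⟨min ε (c' - c), hδ, ?_⟩
    rintro p ⟨x, hx, hpx, hpt⟩
    rw [dist_comm]
    by_contra hdist
    push_neg at hdist
    rw [Prod.dist_eq] at hdist
    have h1 : dist p.1 q₀.1 < min ε (c' - c) := lt_of_le_of_lt (le_max_left _ _) hdist
    have h2 : dist p.2 q₀.2 < min ε (c' - c) := lt_of_le_of_lt (le_max_right _ _) hdist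
    have hbox' : ∀ j, |L j x - v j| < ε := by
      intro j
      have := (dist_pi_lt_iff hδ).1 h1 j
      rw [hq₀] at this
      simp only [Real.dist_eq] at this
      rw [← hpx j]
      calc |p.1 j| = |p.1 j - 0| := by simp
      _ < min ε (c' - c) := this
      _ ≤ ε := min_le_left _ _
    have hφ := hbox x hx hbox'
    have hp2c : p.2 < c := by
      have := lt_of_le_of_lt hpt hφ
      exact_mod_cast this
    have : |p.2 - c'| < c' - c := lt_of_lt_of_le (by simpa [Real.dist_eq, hq₀] using h2) (min_le_right _ _)
    rw [abs_lt] at this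
    linarith
  -- Hahn-Banach separation
  obtain ⟨f, u, hfq, hfD⟩ := geometric_hahn_banach_point_closed
    (hDconv.closure) isClosed_closure hqnot
  set lam : ι → ℝ := fun j => f (Pi.single j 1, 0) with hlam
  set a : ℝ := f (0, 1) with ha
  have hf_eq : ∀ p : E, f p = (∑ j, lam j * p.1 j) + a * p.2 := by
    intro p
    have hp1 : (p.1, (0:ℝ)) = ∑ j, p.1 j • ((Pi.single j 1 : ι → ℝ), (0:ℝ)) := by
      apply Prod.ext
      · rw [Prod.fst_sum]
        funext i
        simp only [Prod.smul_fst, Finset.sum_apply, Pi.smul_apply, smul_eq_mul,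
          Pi.single_apply]
        simp [Finset.sum_ite_eq', mul_comm]
      · rw [Prod.snd_sum]
        simp
    have hp2 : ((0 : ι → ℝ), p.2) = p.2 • ((0 : ι → ℝ), (1:ℝ)) := by
      apply Prod.ext <;> simp
    have hp : p = (p.1, (0:ℝ)) + ((0 : ι → ℝ), p.2) := by
      apply Prod.ext <;> simp
    conv_lhs => rw [hp, hp1, hp2]
    rw [map_add, map_sum]
    congr 1
    · apply Finset.sum_congr rfl
      intro j _
      rw [f.map_smul]
      simp [hlam, mul_comm]
    · rw [f.map_smul]
      simp [ha, smul_eq_mul, mul_comm]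
  have hmemD : ∀ x ∈ P, ∀ t : ℝ, (t : EReal) ≤ φ x →
      ((fun j => L j x - v j : ι → ℝ), t) ∈ D := by
    intro x hx t htle
    exact ⟨x, hx, fun j => rfl, htle⟩
  have hfD' : ∀ p ∈ D, u < f p := fun p hp => hfD p (subset_closure hp)
  -- a ≤ 0
  have hC : ∀ t : ℝ, t ≤ t₀ → u < (∑ j, lam j * (L j x₀ - v j)) + a * t := by
    intro t hle
    have := hfD' _ (hmemD x₀ hx₀ t (le_trans (by exact_mod_cast EReal.coe_le_coe_iff.2 hle) ht₀))
    rw [hf_eq] at this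
    exact this
  have ha0 : a ≤ 0 := by
    by_contra hpos
    push_neg at hpos
    set C := ∑ j, lam j * (L j x₀ - v j)
    have ht' : min t₀ ((u - C - 1)/a) ≤ t₀ := min_le_left _ _
    have := hC _ ht'
    have hmul : a * min t₀ ((u - C - 1)/a) ≤ a * ((u - C - 1)/a) :=
      mul_le_mul_of_nonneg_left (min_le_right _ _) (le_of_lt hpos)
    rw [mul_div_cancel₀ _ (ne_of_gt hpos)] at hmul
    linarith
  refine ⟨lam, a, u, ha0, ?_, ?_⟩
  · have := hfq
    rw [hf_eq] at this
    simpa [hq₀] using this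
  · intro x hx t htle
    have := hfD' _ (hmemD x hx t htle)
    rw [hf_eq] at this
    exact this


end Aux0

section Aux1




variable {Ω : Type*} [MeasurableSpace Ω] {μ : Measure Ω}

lemma ip_comm (U W : Ω →ₘ[μ] ℝ) : ip U W = ip W U := by
  unfold ip; simp_rw [mul_comm]

lemma ip_add_left {U V W : Ω →ₘ[μ] ℝ} (hU : Integrable (fun ω => U ω * W ω) μ)
    (hV : Integrable (fun ω => V ω * W ω) μ) : ip (U + V) W = ip U W + ip V W := by
  unfold ip
  rw [← integral_add hU hV]
  apply integral_congr_ae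
  filter_upwards [AEEqFun.coeFn_add U V] with ω h
  rw [h]; simp [add_mul]

lemma ip_add_right {U V W : Ω →ₘ[μ] ℝ} (hU : Integrable (fun ω => W ω * U ω) μ)
    (hV : Integrable (fun ω => W ω * V ω) μ) : ip W (U + V) = ip W U + ip W V := by
  unfold ip
  rw [← integral_add hU hV]
  apply integral_congr_ae
  filter_upwards [AEEqFun.coeFn_add U V] with ω h
  rw [h]; simp [mul_add]

lemma ip_smul_left (c : ℝ) (U W : Ω →ₘ[μ] ℝ) : ip (c • U) W = c * ip U W := by
  unfold ip
  rw [← integral_const_mul]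
  apply integral_congr_ae
  filter_upwards [AEEqFun.coeFn_smul c U] with ω h
  rw [h]; simp [mul_assoc]

lemma ip_smul_right (c : ℝ) (U W : Ω →ₘ[μ] ℝ) : ip W (c • U) = c * ip W U := by
  rw [ip_comm, ip_smul_left, ip_comm]

lemma ip_zero_left (W : Ω →ₘ[μ] ℝ) : ip 0 W = 0 := by
  unfold ip
  rw [← integral_zero Ω ℝ (μ := μ)]
  apply integral_congr_ae
  filter_upwards [AEEqFun.coeFn_zero (μ := μ) (β := ℝ)] with ω h
  rw [h]; simp

lemma ip_zero_right (W : Ω →ₘ[μ] ℝ) : ip W 0 = 0 := by rw [ip_comm, ip_zero_left]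

lemma integrable_smul_right {U W : Ω →ₘ[μ] ℝ} (c : ℝ)
    (h : Integrable (fun ω => U ω * W ω) μ) :
    Integrable (fun ω => U ω * (c • W) ω) μ := by
  apply (h.const_mul c).congr
  filter_upwards [AEEqFun.coeFn_smul c W] with ω hw
  rw [hw]; simp; ring

lemma integrable_smul_left {U W : Ω →ₘ[μ] ℝ} (c : ℝ)
    (h : Integrable (fun ω => U ω * W ω) μ) :
    Integrable (fun ω => (c • U) ω * W ω) μ := by
  apply (h.const_mul c).congr
  filter_upwards [AEEqFun.coeFn_smul c U] with ω hw
  rw [hw]; simp; ring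

lemma integrable_add_right {U W₁ W₂ : Ω →ₘ[μ] ℝ}
    (h₁ : Integrable (fun ω => U ω * W₁ ω) μ) (h₂ : Integrable (fun ω => U ω * W₂ ω) μ) :
    Integrable (fun ω => U ω * (W₁ + W₂) ω) μ := by
  apply (h₁.add h₂).congr
  filter_upwards [AEEqFun.coeFn_add W₁ W₂] with ω hw
  rw [hw]; simp [mul_add]

lemma ip_lincomb_right {ι : Type*} (F : Finset ι) (U : Ω →ₘ[μ] ℝ) (lam : ι → ℝ)
    (W : ι → (Ω →ₘ[μ] ℝ)) (hint : ∀ j ∈ F, Integrable (fun ω => U ω * W j ω) μ) :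
    Integrable (fun ω => U ω * (∑ j ∈ F, lam j • W j) ω) μ ∧
      ip U (∑ j ∈ F, lam j • W j) = ∑ j ∈ F, lam j * ip U (W j) := by
  classical
  induction F using Finset.induction with
  | empty =>
    constructor
    · apply (integrable_zero Ω ℝ μ).congr
      filter_upwards [AEEqFun.coeFn_zero (μ := μ) (β := ℝ)] with ω h
      simp [Finset.sum_empty, h]
    · simp [ip_zero_right]
  | @insert j F hj ih =>
    have hjint : Integrable (fun ω => U ω * (lam j • W j) ω) μ :=
      integrable_smul_right _ (hint j (Finset.mem_insert_self j F))
    have hFint := (ih (fun k hk => hint k (Finset.mem_insert_of_mem hk))).1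
    have hFeq := (ih (fun k hk => hint k (Finset.mem_insert_of_mem hk))).2
    rw [Finset.sum_insert hj, Finset.sum_insert hj]
    refine ⟨integrable_add_right hjint hFint, ?_⟩
    rw [ip_add_right hjint hFint, ip_smul_right, hFeq]

lemma ip_lincomb_left {ι : Type*} (F : Finset ι) (U : Ω →ₘ[μ] ℝ) (lam : ι → ℝ)
    (W : ι → (Ω →ₘ[μ] ℝ)) (hint : ∀ j ∈ F, Integrable (fun ω => W j ω * U ω) μ) :
    Integrable (fun ω => (∑ j ∈ F, lam j • W j) ω * U ω) μ ∧
      ip (∑ j ∈ F, lam j • W j) U = ∑ j ∈ F, lam j * ip (W j) U := by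
  have hint' : ∀ j ∈ F, Integrable (fun ω => U ω * W j ω) μ := by
    intro j hj
    apply (hint j hj).congr
    filter_upwards with ω; ring
  obtain ⟨h1, h2⟩ := ip_lincomb_right F U lam W hint'
  constructor
  · apply h1.congr; filter_upwards with ω; ring
  · rw [ip_comm, h2]
    exact Finset.sum_congr rfl fun j _ => by rw [ip_comm]

lemma kdual_zero (L : Set (Ω →ₘ[μ] ℝ)) : (0 : Ω →ₘ[μ] ℝ) ∈ kdual L := by
  intro f _
  apply (integrable_zero Ω ℝ μ).congr
  filter_upwards [AEEqFun.coeFn_zero (μ := μ) (β := ℝ)] with ω h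
  simp [h]

lemma kdual_add {L : Set (Ω →ₘ[μ] ℝ)} {W₁ W₂ : Ω →ₘ[μ] ℝ}
    (h₁ : W₁ ∈ kdual L) (h₂ : W₂ ∈ kdual L) : W₁ + W₂ ∈ kdual L := fun f hf =>
  integrable_add_right (h₁ f hf) (h₂ f hf)

lemma kdual_smul {L : Set (Ω →ₘ[μ] ℝ)} (c : ℝ) {W : Ω →ₘ[μ] ℝ}
    (h : W ∈ kdual L) : c • W ∈ kdual L := fun f hf =>
  integrable_smul_right c (h f hf)

lemma kdual_lincomb {ι : Type*} {L : Set (Ω →ₘ[μ] ℝ)} (F : Finset ι) (lam : ι → ℝ)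
    {W : ι → (Ω →ₘ[μ] ℝ)} (h : ∀ j ∈ F, W j ∈ kdual L) :
    (∑ j ∈ F, lam j • W j) ∈ kdual L := by
  classical
  induction F using Finset.induction with
  | empty => simpa using kdual_zero L
  | @insert j F hj ih =>
    rw [Finset.sum_insert hj]
    exact kdual_add (kdual_smul _ (h j (Finset.mem_insert_self j F)))
      (ih fun k hk => h k (Finset.mem_insert_of_mem hk))


variable {d : ℕ}



section PairingAux
variable {Li : Fin d → Set (Ω →ₘ[μ] ℝ)}

lemma int_pair {X Z : Fin d → (Ω →ₘ[μ] ℝ)} (hX : X ∈ prodSet Li)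
    (hZ : Z ∈ prodSet fun i => kdual (Li i)) (i : Fin d) :
    Integrable (fun ω => X i ω * Z i ω) μ := hZ i (X i) (hX i)

lemma pairing_comm (X Z : Fin d → (Ω →ₘ[μ] ℝ)) : pairing X Z = pairing Z X := by
  unfold pairing
  exact Finset.sum_congr rfl fun i _ => ip_comm _ _

lemma pairing_zero_right (X : Fin d → (Ω →ₘ[μ] ℝ)) : pairing X 0 = 0 := by
  unfold pairing
  simp [ip_zero_right]

lemma pairing_zero_left (X : Fin d → (Ω →ₘ[μ] ℝ)) : pairing 0 X = 0 := by
  rw [pairing_comm, pairing_zero_right]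

lemma pairing_smul_right (c : ℝ) (X Z : Fin d → (Ω →ₘ[μ] ℝ)) :
    pairing X (c • Z) = c * pairing X Z := by
  unfold pairing
  rw [Finset.mul_sum]
  exact Finset.sum_congr rfl fun i _ => ip_smul_right c _ _

lemma pairing_smul_left (c : ℝ) (X Z : Fin d → (Ω →ₘ[μ] ℝ)) :
    pairing (c • X) Z = c * pairing X Z := by
  rw [pairing_comm, pairing_smul_right, pairing_comm]

lemma pairing_add_right {X Z Z' : Fin d → (Ω →ₘ[μ] ℝ)}
    (h : ∀ i, Integrable (fun ω => X i ω * Z i ω) μ)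
    (h' : ∀ i, Integrable (fun ω => X i ω * Z' i ω) μ) :
    pairing X (Z + Z') = pairing X Z + pairing X Z' := by
  unfold pairing
  rw [← Finset.sum_add_distrib]
  exact Finset.sum_congr rfl fun i _ => ip_add_right (h i) (h' i)

lemma pairing_add_left {X X' Z : Fin d → (Ω →ₘ[μ] ℝ)}
    (h : ∀ i, Integrable (fun ω => X i ω * Z i ω) μ)
    (h' : ∀ i, Integrable (fun ω => X' i ω * Z i ω) μ) :
    pairing (X + X') Z = pairing X Z + pairing X' Z := by
  unfold pairing
  rw [← Finset.sum_add_distrib]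
  refine Finset.sum_congr rfl fun i _ => ip_add_left (h i) (h' i)

lemma pairing_affine_right {X Z Z' : Fin d → (Ω →ₘ[μ] ℝ)} (t : ℝ)
    (h : ∀ i, Integrable (fun ω => X i ω * Z i ω) μ)
    (h' : ∀ i, Integrable (fun ω => X i ω * Z' i ω) μ) :
    pairing X (t • Z + (1 - t) • Z') = t * pairing X Z + (1 - t) * pairing X Z' := by
  have h1 : pairing X (t • Z + (1 - t) • Z') = pairing X (t • Z) + pairing X ((1 - t) • Z') :=
    pairing_add_right (fun i => integrable_smul_right t (h i))
      (fun i => integrable_smul_right (1 - t) (h' i))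
  rw [h1, pairing_smul_right, pairing_smul_right]

lemma pairing_lincomb_left {ι : Type*} (F : Finset ι) (lam : ι → ℝ)
    {Xs : ι → (Fin d → (Ω →ₘ[μ] ℝ))} {Z : Fin d → (Ω →ₘ[μ] ℝ)}
    (hint : ∀ j ∈ F, ∀ i, Integrable (fun ω => Xs j i ω * Z i ω) μ) :
    pairing (∑ j ∈ F, lam j • Xs j) Z = ∑ j ∈ F, lam j * pairing (Xs j) Z := by
  unfold pairing
  have hcoord : ∀ i : Fin d, (∑ j ∈ F, lam j • Xs j) i = ∑ j ∈ F, lam j • (Xs j i) := by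
    intro i
    rw [Finset.sum_apply]
    rfl
  calc ∑ i, ip ((∑ j ∈ F, lam j • Xs j) i) (Z i)
      = ∑ i, ∑ j ∈ F, lam j * ip (Xs j i) (Z i) := by
        refine Finset.sum_congr rfl fun i _ => ?_
        rw [hcoord i]
        exact (ip_lincomb_left F (Z i) lam (fun j => Xs j i)
          (fun j hj => hint j hj i)).2
    _ = ∑ j ∈ F, lam j * ∑ i, ip (Xs j i) (Z i) := by
        rw [Finset.sum_comm]
        exact Finset.sum_congr rfl fun j _ => by rw [Finset.mul_sum]

lemma pairing_lincomb_right {ι : Type*} (F : Finset ι) (lam : ι → ℝ)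
    {Zs : ι → (Fin d → (Ω →ₘ[μ] ℝ))} {X : Fin d → (Ω →ₘ[μ] ℝ)}
    (hint : ∀ j ∈ F, ∀ i, Integrable (fun ω => X i ω * Zs j i ω) μ) :
    pairing X (∑ j ∈ F, lam j • Zs j) = ∑ j ∈ F, lam j * pairing X (Zs j) := by
  rw [pairing_comm]
  rw [pairing_lincomb_left F lam (fun j hj i => by
    apply (hint j hj i).congr; filter_upwards with ω; ring)]
  exact Finset.sum_congr rfl fun j _ => by rw [pairing_comm]

lemma prodSet_zero (h : ∀ i, (0 : Ω →ₘ[μ] ℝ) ∈ Li i) : (0 : Fin d → (Ω →ₘ[μ] ℝ)) ∈ prodSet Li :=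
  fun i => h i

lemma prodSet_add {X Y : Fin d → (Ω →ₘ[μ] ℝ)}
    (hadd : ∀ i, ∀ f ∈ Li i, ∀ g ∈ Li i, f + g ∈ Li i)
    (hX : X ∈ prodSet Li) (hY : Y ∈ prodSet Li) : X + Y ∈ prodSet Li :=
  fun i => hadd i (X i) (hX i) (Y i) (hY i)

lemma prodSet_smul {X : Fin d → (Ω →ₘ[μ] ℝ)} (c : ℝ)
    (hsmul : ∀ i, ∀ (c : ℝ), ∀ f ∈ Li i, c • f ∈ Li i)
    (hX : X ∈ prodSet Li) : c • X ∈ prodSet Li :=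
  fun i => hsmul i c (X i) (hX i)

lemma prodSet_lincomb {ι : Type*} (F : Finset ι) (lam : ι → ℝ)
    {Xs : ι → (Fin d → (Ω →ₘ[μ] ℝ))}
    (h0 : ∀ i, (0 : Ω →ₘ[μ] ℝ) ∈ Li i)
    (hadd : ∀ i, ∀ f ∈ Li i, ∀ g ∈ Li i, f + g ∈ Li i)
    (hsmul : ∀ i, ∀ (c : ℝ), ∀ f ∈ Li i, c • f ∈ Li i)
    (hXs : ∀ j ∈ F, Xs j ∈ prodSet Li) :
    (∑ j ∈ F, lam j • Xs j) ∈ prodSet Li := by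
  classical
  induction F using Finset.induction with
  | empty => simpa using prodSet_zero h0
  | @insert j F hj ih =>
    rw [Finset.sum_insert hj]
    exact prodSet_add hadd (prodSet_smul _ hsmul (hXs j (Finset.mem_insert_self j F)))
      (ih fun k hk => hXs k (Finset.mem_insert_of_mem hk))

lemma convex_prodSet
    (hadd : ∀ i, ∀ f ∈ Li i, ∀ g ∈ Li i, f + g ∈ Li i)
    (hsmul : ∀ i, ∀ (c : ℝ), ∀ f ∈ Li i, c • f ∈ Li i) :
    Convex ℝ (prodSet Li) := by
  intro X hX Y hY a b _ _ _
  exact prodSet_add hadd (prodSet_smul a hsmul hX) (prodSet_smul b hsmul hY)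

lemma convex_kdual (L : Set (Ω →ₘ[μ] ℝ)) : Convex ℝ (kdual L) := by
  intro W hW W' hW' a b _ _ _
  exact kdual_add (kdual_smul a hW) (kdual_smul b hW')

end PairingAux

end Aux1

section Aux2
variable {Ω : Type*} [MeasurableSpace Ω] {μ : Measure Ω} {d : ℕ}
variable {Li : Fin d → Set (Ω →ₘ[μ] ℝ)} {nrmX : Fin d → ((Ω →ₘ[μ] ℝ) → ℝ)}
variable {EE : Set (Ω →ₘ[μ] ℝ)} {nrmE : (Ω →ₘ[μ] ℝ) → ℝ}
variable {S : (Fin d → (Ω →ₘ[μ] ℝ)) → (Ω →ₘ[μ] ℝ)} {A : Set (Ω →ₘ[μ] ℝ)}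
variable {K : Set (Ω →ₘ[μ] ℝ)}

/-- Weak duality: the penalty function is dominated by the support function of `S⁻¹(A)`. -/
lemma penalty_le_suppV (Z : Fin d → (Ω →ₘ[μ] ℝ)) :
    penalty (prodSet Li) A S K Z ≤ suppV (sysAcc (prodSet Li) S A) Z := by
  apply iSup₂_le
  intro W hW
  apply le_iInf₂
  intro X hX
  have h1 : suppS A W ≤ ((ip (S X) W : ℝ) : EReal) := iInf₂_le (S X) hX.2
  have h2 : (⨅ Y ∈ prodSet Li, ((pairing Y Z - ∫ ω, S Y ω * W ω ∂μ : ℝ) : EReal)) ≤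
      ((pairing X Z - ∫ ω, S X ω * W ω ∂μ : ℝ) : EReal) := iInf₂_le X hX.1
  calc suppS A W + ⨅ Y ∈ prodSet Li, ((pairing Y Z - ∫ ω, S Y ω * W ω ∂μ : ℝ) : EReal)
      ≤ ((ip (S X) W : ℝ) : EReal) + ((pairing X Z - ∫ ω, S X ω * W ω ∂μ : ℝ) : EReal) :=
        add_le_add h1 h2
    _ = ((pairing X Z : ℝ) : EReal) := by
        rw [← EReal.coe_add]
        norm_num [ip]

lemma suppS_le_zero (h0A : (0 : Ω →ₘ[μ] ℝ) ∈ A) (W : Ω →ₘ[μ] ℝ) :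
    suppS A W ≤ 0 := by
  have := iInf₂_le (f := fun U _ => ((ip U W : ℝ) : EReal)) 0 h0A
  rw [ip_zero_left] at this
  exact le_trans this (by norm_num)

lemma inner_inf_le_zero (hS : IsAdmissibleImpact (prodSet Li) (prodSet fun i => kdual (Li i)) EE (kdual EE) S)
    (hLi : ∀ i, IsAdmissible (Li i) (nrmX i)) (Z : Fin d → (Ω →ₘ[μ] ℝ)) (W : Ω →ₘ[μ] ℝ) :
    (⨅ Y ∈ prodSet Li, ((pairing Y Z - ∫ ω, S Y ω * W ω ∂μ : ℝ) : EReal)) ≤ 0 := by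
  have h0 : (0 : Fin d → (Ω →ₘ[μ] ℝ)) ∈ prodSet Li := prodSet_zero fun i => (hLi i).zero_mem
  have := iInf₂_le (f := fun Y (_ : Y ∈ prodSet Li) =>
    ((pairing Y Z - ∫ ω, S Y ω * W ω ∂μ : ℝ) : EReal)) 0 h0
  refine le_trans this ?_
  have he : (∫ ω, S 0 ω * W ω ∂μ) = 0 := by
    rw [hS.normalized]
    exact ip_zero_left W
  rw [pairing_zero_left, he]
  norm_num

/-- The penalty at `0` is nonnegative. -/
lemma penalty_zero_nonneg (hK0 : (0 : Ω →ₘ[μ] ℝ) ∈ K) (h0A : (0 : Ω →ₘ[μ] ℝ) ∈ A)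
    (hLi : ∀ i, IsAdmissible (Li i) (nrmX i))
    (hS : IsAdmissibleImpact (prodSet Li) (prodSet fun i => kdual (Li i)) EE (kdual EE) S) :
    (0 : EReal) ≤ penalty (prodSet Li) A S K (0 : Fin d → (Ω →ₘ[μ] ℝ)) := by
  have hterm : (0 : EReal) ≤ suppS A 0 +
      ⨅ Y ∈ prodSet Li, ((pairing Y (0 : Fin d → (Ω →ₘ[μ] ℝ)) - ∫ ω, S Y ω * (0 : Ω →ₘ[μ] ℝ) ω ∂μ : ℝ) : EReal) := by
    have h1 : (0:EReal) ≤ suppS A 0 := by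
      apply le_iInf₂
      intro U hU
      rw [ip_zero_right]
      norm_num
    have h2 : (0:EReal) ≤ ⨅ Y ∈ prodSet Li,
        ((pairing Y (0 : Fin d → (Ω →ₘ[μ] ℝ)) - ∫ ω, S Y ω * (0 : Ω →ₘ[μ] ℝ) ω ∂μ : ℝ) : EReal) := by
      apply le_iInf₂
      intro Y hY
      have he : (∫ ω, S Y ω * (0 : Ω →ₘ[μ] ℝ) ω ∂μ) = 0 := ip_zero_right (S Y)
      rw [pairing_zero_right, he]
      norm_num
    calc (0:EReal) = 0 + 0 := by norm_num
      _ ≤ _ := add_le_add h1 h2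
  exact le_trans hterm (le_iSup₂ (f := fun W (_ : W ∈ K) => suppS A W +
    ⨅ Y ∈ prodSet Li, ((pairing Y (0 : Fin d → (Ω →ₘ[μ] ℝ)) - ∫ ω, S Y ω * W ω ∂μ : ℝ) : EReal)) 0 hK0)

end Aux2

section Aux3
variable {Ω : Type*} [MeasurableSpace Ω] {μ : Measure Ω} {d : ℕ}
variable {Li : Fin d → Set (Ω →ₘ[μ] ℝ)} {nrmX : Fin d → ((Ω →ₘ[μ] ℝ) → ℝ)}
variable {EE : Set (Ω →ₘ[μ] ℝ)} {nrmE : (Ω →ₘ[μ] ℝ) → ℝ}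
variable {S : (Fin d → (Ω →ₘ[μ] ℝ)) → (Ω →ₘ[μ] ℝ)} {A : Set (Ω →ₘ[μ] ℝ)}
variable {K : Set (Ω →ₘ[μ] ℝ)}

lemma penalty_concave
    (hLi : ∀ i, IsAdmissible (Li i) (nrmX i))
    (hS : IsAdmissibleImpact (prodSet Li) (prodSet fun i => kdual (Li i)) EE (kdual EE) S)
    (hAsub : A ⊆ EE) (h0A : (0 : Ω →ₘ[μ] ℝ) ∈ A)
    (hKsub : K ⊆ kdual EE)
    (hKadd : ∀ W₁ ∈ K, ∀ W₂ ∈ K, W₁ + W₂ ∈ K)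
    (hKcone : ∀ W ∈ K, ∀ t : ℝ, 0 < t → t • W ∈ K) :
    ∀ x ∈ (prodSet fun i => kdual (Li i)), ∀ y ∈ (prodSet fun i => kdual (Li i)),
      ∀ t : ℝ, 0 < t → t < 1 → ∀ a b : ℝ,
      (a : EReal) ≤ penalty (prodSet Li) A S K x →
      (b : EReal) ≤ penalty (prodSet Li) A S K y →
      ((t * a + (1 - t) * b : ℝ) : EReal) ≤ penalty (prodSet Li) A S K (t • x + (1 - t) • y) := by
  intro x hx y hy t ht0 ht1 a b hax hby
  apply ereal_coe_le_of_forall_sub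
  intro δ hδ
  have hax' : ((a - δ : ℝ) : EReal) < penalty (prodSet Li) A S K x :=
    lt_of_lt_of_le (EReal.coe_lt_coe_iff.2 (by linarith)) hax
  have hby' : ((b - δ : ℝ) : EReal) < penalty (prodSet Li) A S K y :=
    lt_of_lt_of_le (EReal.coe_lt_coe_iff.2 (by linarith)) hby
  rw [penalty, lt_iSup_iff] at hax' hby'
  obtain ⟨W₁, hW₁'⟩ := hax'
  obtain ⟨W₂, hW₂'⟩ := hby'
  rw [lt_iSup_iff] at hW₁' hW₂'
  obtain ⟨hW₁K, hW₁⟩ := hW₁'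
  obtain ⟨hW₂K, hW₂⟩ := hW₂'
  have hne₁ : suppS A W₁ +
      (⨅ Y ∈ prodSet Li, ((pairing Y x - ∫ ω, S Y ω * W₁ ω ∂μ : ℝ) : EReal)) ≠ ⊥ :=
    ne_of_gt (lt_trans (EReal.bot_lt_coe _) hW₁)
  have hne₂ : suppS A W₂ +
      (⨅ Y ∈ prodSet Li, ((pairing Y y - ∫ ω, S Y ω * W₂ ω ∂μ : ℝ) : EReal)) ≠ ⊥ :=
    ne_of_gt (lt_trans (EReal.bot_lt_coe _) hW₂)
  obtain ⟨s₁, hs₁⟩ := ereal_coe_of_ne_bot_le_zero (ereal_add_ne_bot_left hne₁)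
    (suppS_le_zero h0A W₁)
  obtain ⟨i₁, hi₁⟩ := ereal_coe_of_ne_bot_le_zero (ereal_add_ne_bot_right hne₁)
    (inner_inf_le_zero hS hLi x W₁)
  obtain ⟨s₂, hs₂⟩ := ereal_coe_of_ne_bot_le_zero (ereal_add_ne_bot_left hne₂)
    (suppS_le_zero h0A W₂)
  obtain ⟨i₂, hi₂⟩ := ereal_coe_of_ne_bot_le_zero (ereal_add_ne_bot_right hne₂)
    (inner_inf_le_zero hS hLi y W₂)
  have hsum₁ : a - δ < s₁ + i₁ := by
    have h := hW₁
    rw [hs₁, hi₁, ← EReal.coe_add] at h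
    exact_mod_cast h
  have hsum₂ : b - δ < s₂ + i₂ := by
    have h := hW₂
    rw [hs₂, hi₂, ← EReal.coe_add] at h
    exact_mod_cast h
  have hWsK : t • W₁ + (1 - t) • W₂ ∈ K :=
    hKadd _ (hKcone _ hW₁K t ht0) _ (hKcone _ hW₂K (1 - t) (by linarith))
  -- bound the support part
  have hsupp : ((t * s₁ + (1 - t) * s₂ : ℝ) : EReal) ≤ suppS A (t • W₁ + (1 - t) • W₂) := by
    apply le_iInf₂
    intro U hU
    have hi1 : Integrable (fun ω => U ω * W₁ ω) μ := hKsub hW₁K U (hAsub hU)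
    have hi2 : Integrable (fun ω => U ω * W₂ ω) μ := hKsub hW₂K U (hAsub hU)
    have hip : ip U (t • W₁ + (1 - t) • W₂) = t * ip U W₁ + (1 - t) * ip U W₂ := by
      have h1 : ip U (t • W₁ + (1 - t) • W₂) = ip U (t • W₁) + ip U ((1 - t) • W₂) :=
        ip_add_right (integrable_smul_right t hi1) (integrable_smul_right (1 - t) hi2)
      rw [h1, ip_smul_right, ip_smul_right]
    have hb1 : s₁ ≤ ip U W₁ := by
      have h : suppS A W₁ ≤ ((ip U W₁ : ℝ) : EReal) := iInf₂_le U hU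
      rw [hs₁] at h
      exact_mod_cast h
    have hb2 : s₂ ≤ ip U W₂ := by
      have h : suppS A W₂ ≤ ((ip U W₂ : ℝ) : EReal) := iInf₂_le U hU
      rw [hs₂] at h
      exact_mod_cast h
    rw [hip]
    apply EReal.coe_le_coe_iff.2
    nlinarith [mul_le_mul_of_nonneg_left hb1 (le_of_lt ht0),
      mul_le_mul_of_nonneg_left hb2 (by linarith : (0:ℝ) ≤ 1 - t)]
  -- bound the inf part
  have hinner : ((t * i₁ + (1 - t) * i₂ : ℝ) : EReal) ≤
      ⨅ Y ∈ prodSet Li, ((pairing Y (t • x + (1 - t) • y) -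
        ∫ ω, S Y ω * (t • W₁ + (1 - t) • W₂) ω ∂μ : ℝ) : EReal) := by
    apply le_iInf₂
    intro Y hY
    have hpair : pairing Y (t • x + (1 - t) • y) = t * pairing Y x + (1 - t) * pairing Y y :=
      pairing_affine_right t (fun i => int_pair hY hx i) (fun i => int_pair hY hy i)
    have hSY : S Y ∈ EE := hS.mapsTo Y hY
    have hj1 : Integrable (fun ω => S Y ω * W₁ ω) μ := hKsub hW₁K (S Y) hSY
    have hj2 : Integrable (fun ω => S Y ω * W₂ ω) μ := hKsub hW₂K (S Y) hSY
    have hE : (∫ ω, S Y ω * (t • W₁ + (1 - t) • W₂) ω ∂μ) =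
        t * (∫ ω, S Y ω * W₁ ω ∂μ) + (1 - t) * (∫ ω, S Y ω * W₂ ω ∂μ) := by
      have h1 : ip (S Y) (t • W₁ + (1 - t) • W₂) = ip (S Y) (t • W₁) + ip (S Y) ((1 - t) • W₂) :=
        ip_add_right (integrable_smul_right t hj1) (integrable_smul_right (1 - t) hj2)
      have h2 : ip (S Y) (t • W₁) = t * ip (S Y) W₁ := ip_smul_right t _ _
      have h3 : ip (S Y) ((1 - t) • W₂) = (1 - t) * ip (S Y) W₂ := ip_smul_right (1 - t) _ _
      exact h1.trans (by rw [h2, h3]; rfl)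
    have hb1 : i₁ ≤ pairing Y x - ∫ ω, S Y ω * W₁ ω ∂μ := by
      have h : (⨅ Y ∈ prodSet Li, ((pairing Y x - ∫ ω, S Y ω * W₁ ω ∂μ : ℝ) : EReal)) ≤
          ((pairing Y x - ∫ ω, S Y ω * W₁ ω ∂μ : ℝ) : EReal) := iInf₂_le Y hY
      rw [hi₁] at h
      exact_mod_cast h
    have hb2 : i₂ ≤ pairing Y y - ∫ ω, S Y ω * W₂ ω ∂μ := by
      have h : (⨅ Y ∈ prodSet Li, ((pairing Y y - ∫ ω, S Y ω * W₂ ω ∂μ : ℝ) : EReal)) ≤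
          ((pairing Y y - ∫ ω, S Y ω * W₂ ω ∂μ : ℝ) : EReal) := iInf₂_le Y hY
      rw [hi₂] at h
      exact_mod_cast h
    rw [hpair, hE]
    apply EReal.coe_le_coe_iff.2
    nlinarith [mul_le_mul_of_nonneg_left hb1 (le_of_lt ht0),
      mul_le_mul_of_nonneg_left hb2 (by linarith : (0:ℝ) ≤ 1 - t)]
  have hterm : ((t * a + (1 - t) * b - δ : ℝ) : EReal) ≤
      suppS A (t • W₁ + (1 - t) • W₂) +
        ⨅ Y ∈ prodSet Li, ((pairing Y (t • x + (1 - t) • y) -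
          ∫ ω, S Y ω * (t • W₁ + (1 - t) • W₂) ω ∂μ : ℝ) : EReal) := by
    calc ((t * a + (1 - t) * b - δ : ℝ) : EReal)
        ≤ ((t * s₁ + (1 - t) * s₂ : ℝ) : EReal) + ((t * i₁ + (1 - t) * i₂ : ℝ) : EReal) := by
          rw [← EReal.coe_add]
          apply EReal.coe_le_coe_iff.2
          nlinarith [mul_le_mul_of_nonneg_left (le_of_lt hsum₁) (le_of_lt ht0),
            mul_le_mul_of_nonneg_left (le_of_lt hsum₂) (by linarith : (0:ℝ) ≤ 1 - t)]
      _ ≤ _ := add_le_add hsupp hinner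
  refine le_trans hterm (le_iSup₂ (f := fun W (_ : W ∈ K) => suppS A W +
    ⨅ Y ∈ prodSet Li, ((pairing Y (t • x + (1 - t) • y) -
      ∫ ω, S Y ω * W ω ∂μ : ℝ) : EReal)) _ hWsK)

end Aux3

section Aux4
variable {Ω : Type*} [MeasurableSpace Ω] {μ : Measure Ω} {d : ℕ}
variable {EE : Set (Ω →ₘ[μ] ℝ)} {nrmE : (Ω →ₘ[μ] ℝ) → ℝ} {A : Set (Ω →ₘ[μ] ℝ)}

/-- Elements of the barrier cone of a monotone acceptance set are nonnegative. -/
lemma barr_nonneg (hE : IsAdmissible EE nrmE) (h0A : (0 : Ω →ₘ[μ] ℝ) ∈ A)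
    (hAmono : ∀ U ∈ A, ∀ V ∈ EE, (0 : Ω →ₘ[μ] ℝ) ≤ V → U + V ∈ A)
    {W : Ω →ₘ[μ] ℝ} (hW : W ∈ barrS A (kdual EE)) : (0 : Ω →ₘ[μ] ℝ) ≤ W := by
  classical
  obtain ⟨hWk, hWbar⟩ := hW
  by_contra hneg
  have hWm : AEStronglyMeasurable (W : Ω → ℝ) μ := W.aestronglyMeasurable
  set g : Ω → ℝ := hWm.aemeasurable.mk W with hgdef
  have hgm : Measurable g := hWm.aemeasurable.measurable_mk
  have heq : (W : Ω → ℝ) =ᵐ[μ] g := hWm.aemeasurable.ae_eq_mk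
  set B : Set Ω := {ω | g ω < 0} with hBdef
  have hBm : MeasurableSet B := measurableSet_lt hgm measurable_const
  have hBpos : μ B ≠ 0 := by
    intro h0
    apply hneg
    rw [← AEEqFun.coeFn_le]
    have h1 : ∀ᵐ ω ∂μ, ¬ (g ω < 0) := by
      rw [ae_iff]
      simpa using h0
    filter_upwards [h1, heq, AEEqFun.coeFn_zero (μ := μ) (β := ℝ)] with ω hω h2 h3
    rw [h3, h2]
    simpa using not_lt.1 hω
  set v : Ω → ℝ := B.indicator (fun _ => (1:ℝ)) with hvdef
  have hvm : AEStronglyMeasurable v μ := (measurable_const.indicator hBm).aestronglyMeasurable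
  set V1 : Ω →ₘ[μ] ℝ := AEEqFun.mk v hvm with hV1def
  have hV1E : V1 ∈ EE := by
    apply hE.linfty_subset
    refine ⟨1, ?_⟩
    filter_upwards [AEEqFun.coeFn_mk v hvm] with ω h
    rw [h, hvdef]
    by_cases hω : ω ∈ B <;> simp [Set.indicator_apply, hω]
  have hV1pos : (0 : Ω →ₘ[μ] ℝ) ≤ V1 := by
    rw [← AEEqFun.coeFn_le]
    filter_upwards [AEEqFun.coeFn_mk v hvm, AEEqFun.coeFn_zero (μ := μ) (β := ℝ)] with ω h h0
    rw [h, h0, hvdef]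
    by_cases hω : ω ∈ B <;> simp [Set.indicator_apply, hω]
  have hκint : Integrable (fun ω => V1 ω * W ω) μ := hWk V1 hV1E
  have hae : (fun ω => V1 ω * W ω) =ᵐ[μ] B.indicator g := by
    filter_upwards [AEEqFun.coeFn_mk v hvm, heq] with ω h1 h2
    rw [h1, h2, hvdef]
    by_cases hω : ω ∈ B <;> simp [Set.indicator_apply, hω]
  have hint0 : Integrable (B.indicator g) μ := hκint.congr hae
  have hnonpos : ∀ ω, B.indicator g ω ≤ 0 := by
    intro ω
    by_cases hω : ω ∈ B
    · rw [Set.indicator_of_mem hω]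
      exact le_of_lt hω
    · rw [Set.indicator_of_notMem hω]
  have hκeq : ip V1 W = ∫ ω, B.indicator g ω ∂μ := integral_congr_ae hae
  have hκneg : ip V1 W < 0 := by
    rw [hκeq]
    rcases lt_or_eq_of_le (integral_nonpos hnonpos) with h | h
    · exact h
    · exfalso
      have hzero : (fun ω => - B.indicator g ω) =ᵐ[μ] 0 :=
        (integral_eq_zero_iff_of_nonneg (f := fun ω => - B.indicator g ω)
          (fun ω => by simpa using hnonpos ω) hint0.neg).1
          (by rw [integral_neg, h, neg_zero])
      have hzero' : ∀ᵐ ω ∂μ, - B.indicator g ω = 0 := hzero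
      have hsub : B ⊆ {ω | ¬ ((- B.indicator g ω) = 0)} := by
        intro ω hω
        simp only [Set.mem_setOf_eq, neg_eq_zero]
        rw [Set.indicator_of_mem hω]
        exact ne_of_lt hω
      exact hBpos (measure_mono_null hsub (ae_iff.1 hzero'))
  have hbot : suppS A W = ⊥ := by
    apply ereal_eq_bot_of_forall
    intro m
    obtain ⟨n, hn⟩ := exists_nat_ge (m / ip V1 W)
    have hsmulmem : (n:ℝ) • V1 ∈ EE := hE.smul_mem _ _ hV1E
    have hsmulpos : (0 : Ω →ₘ[μ] ℝ) ≤ (n:ℝ) • V1 := by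
      rw [← AEEqFun.coeFn_le]
      rw [← AEEqFun.coeFn_le] at hV1pos
      filter_upwards [hV1pos, AEEqFun.coeFn_smul (n:ℝ) V1,
        AEEqFun.coeFn_zero (μ := μ) (β := ℝ)] with ω h1 h2 h3
      rw [h3, h2]
      simp only [Pi.smul_apply, smul_eq_mul]
      rw [h3] at h1
      have : (0:ℝ) ≤ V1 ω := h1
      positivity
    have hUn : (0 : Ω →ₘ[μ] ℝ) + (n:ℝ) • V1 ∈ A := hAmono 0 h0A _ hsmulmem hsmulpos
    have h1 : suppS A W ≤ ((ip ((0 : Ω →ₘ[μ] ℝ) + (n:ℝ) • V1) W : ℝ) : EReal) :=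
      iInf₂_le _ hUn
    have h2 : ip ((0 : Ω →ₘ[μ] ℝ) + (n:ℝ) • V1) W = (n:ℝ) * ip V1 W := by
      have hz : Integrable (fun ω => (0 : Ω →ₘ[μ] ℝ) ω * W ω) μ := by
        apply (integrable_zero Ω ℝ μ).congr
        filter_upwards [AEEqFun.coeFn_zero (μ := μ) (β := ℝ)] with ω h
        rw [h]; simp
      rw [ip_add_left hz (integrable_smul_left _ hκint), ip_zero_left, ip_smul_left]
      ring
    rw [h2] at h1
    refine le_trans h1 (EReal.coe_le_coe_iff.2 ?_)
    exact (div_le_iff_of_neg hκneg).1 hn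
  rw [hbot] at hWbar
  exact lt_irrefl _ hWbar

end Aux4

section Aux5
variable {Ω : Type*} [MeasurableSpace Ω] {μ : Measure Ω} {d : ℕ}
variable {Li : Fin d → Set (Ω →ₘ[μ] ℝ)} {nrmX : Fin d → ((Ω →ₘ[μ] ℝ) → ℝ)}
variable {EE : Set (Ω →ₘ[μ] ℝ)} {nrmE : (Ω →ₘ[μ] ℝ) → ℝ}
variable {S : (Fin d → (Ω →ₘ[μ] ℝ)) → (Ω →ₘ[μ] ℝ)} {A : Set (Ω →ₘ[μ] ℝ)}
variable {K : Set (Ω →ₘ[μ] ℝ)}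

lemma suppV_usc :
    @UpperSemicontinuous (↥(prodSet fun i => kdual (Li i))) EReal
      (wtop (prodSet fun i => kdual (Li i)) (prodSet Li)) _
      (fun Z : ↥(prodSet fun i => kdual (Li i)) =>
        suppV (sysAcc (prodSet Li) S A) (Z : Fin d → (Ω →ₘ[μ] ℝ))) := by
  letI t' : TopologicalSpace (↥(prodSet fun i => kdual (Li i))) :=
    wtop (prodSet fun i => kdual (Li i)) (prodSet Li)
  intro Z₀ y hy
  obtain ⟨X, hXlt⟩ := iInf_lt_iff.1 (show (⨅ X ∈ sysAcc (prodSet Li) S A,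
    ((pairing X (Z₀ : Fin d → (Ω →ₘ[μ] ℝ)) : ℝ) : EReal)) < y from hy)
  obtain ⟨hX, hXlt⟩ := iInf_lt_iff.1 hXlt
  have hXmem : X ∈ prodSet Li := hX.1
  have h0 : Continuous fun Z : ↥(prodSet fun i => kdual (Li i)) =>
      (fun Xs : ↥(prodSet Li) => pairing (Z : Fin d → (Ω →ₘ[μ] ℝ)) (Xs : Fin d → (Ω →ₘ[μ] ℝ))) :=
    continuous_induced_dom
  have hc1 : Continuous fun Z : ↥(prodSet fun i => kdual (Li i)) =>
      pairing (Z : Fin d → (Ω →ₘ[μ] ℝ)) X :=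
    (continuous_apply (⟨X, hXmem⟩ : ↥(prodSet Li))).comp h0
  have hc2 : Continuous fun Z : ↥(prodSet fun i => kdual (Li i)) =>
      ((pairing X (Z : Fin d → (Ω →ₘ[μ] ℝ)) : ℝ) : EReal) := by
    have heq : (fun Z : ↥(prodSet fun i => kdual (Li i)) =>
        ((pairing X (Z : Fin d → (Ω →ₘ[μ] ℝ)) : ℝ) : EReal)) =
        fun Z : ↥(prodSet fun i => kdual (Li i)) =>
        ((pairing (Z : Fin d → (Ω →ₘ[μ] ℝ)) X : ℝ) : EReal) := by
      funext Z
      rw [pairing_comm]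
    rw [heq]
    exact continuous_coe_real_ereal.comp hc1
  have hev : ∀ᶠ (Z : ↥(prodSet fun i => kdual (Li i))) in @nhds _ t' Z₀,
      ((pairing X (Z : Fin d → (Ω →ₘ[μ] ℝ)) : ℝ) : EReal) < y :=
    hc2.continuousAt.preimage_mem_nhds (Iio_mem_nhds hXlt)
  filter_upwards [hev] with Z hZ
  exact lt_of_le_of_lt (iInf₂_le X hX) hZ

lemma uscHull_penalty_le_suppV (Z : ↥(prodSet fun i => kdual (Li i))) :
    uscHull (wtop (prodSet fun i => kdual (Li i)) (prodSet Li))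
      (fun Z' : ↥(prodSet fun i => kdual (Li i)) =>
        penalty (prodSet Li) A S K (Z' : Fin d → (Ω →ₘ[μ] ℝ))) Z ≤
      suppV (sysAcc (prodSet Li) S A) (Z : Fin d → (Ω →ₘ[μ] ℝ)) := by
  exact iInf₂_le (fun Z' : ↥(prodSet fun i => kdual (Li i)) =>
      suppV (sysAcc (prodSet Li) S A) (Z' : Fin d → (Ω →ₘ[μ] ℝ)))
    ⟨suppV_usc, fun Z' => penalty_le_suppV _⟩

end Aux5

section Aux6
variable {Ω : Type*} [MeasurableSpace Ω] {μ : Measure Ω} {d : ℕ}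
variable {Li : Fin d → Set (Ω →ₘ[μ] ℝ)} {nrmX : Fin d → ((Ω →ₘ[μ] ℝ) → ℝ)}
variable {EE : Set (Ω →ₘ[μ] ℝ)} {nrmE : (Ω →ₘ[μ] ℝ) → ℝ}
variable {S : (Fin d → (Ω →ₘ[μ] ℝ)) → (Ω →ₘ[μ] ℝ)} {A : Set (Ω →ₘ[μ] ℝ)}

/-- Separation step 1: a point of `E` outside `A` can be separated from `A` by an
element of the Köthe dual. -/
lemma sep_exists_W (hE : IsAdmissible EE nrmE)
    (hA : IsAdmissibleAcceptance (prodSet Li) EE (kdual EE) S A)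
    {X : Fin d → (Ω →ₘ[μ] ℝ)} (hXE : S X ∈ EE) (hSX : S X ∉ A) :
    ∃ (W₀ : Ω →ₘ[μ] ℝ) (s₀ : ℝ), W₀ ∈ kdual EE ∧ (0 : Ω →ₘ[μ] ℝ) ≤ W₀ ∧
      (∀ U ∈ A, s₀ ≤ ip U W₀) ∧ ip (S X) W₀ < s₀ := by
  classical
  letI tE : TopologicalSpace (↥EE) := wtop1 EE (kdual EE)
  set pS : ↥EE := ⟨S X, hXE⟩ with hpS
  have hopen : IsOpen {U : ↥EE | (U : Ω →ₘ[μ] ℝ) ∈ A}ᶜ := hA.closed.isOpen_compl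
  have hmem : {U : ↥EE | (U : Ω →ₘ[μ] ℝ) ∈ A}ᶜ ∈ @nhds _ tE pS := hopen.mem_nhds hSX
  obtain ⟨F, ε, hε, hbox⟩ := box_of_nhds
    (fun U : ↥EE => fun W : ↥(kdual EE) => ip (U : Ω →ₘ[μ] ℝ) (W : Ω →ₘ[μ] ℝ)) pS hmem
  have hconvA : Convex ℝ A := by
    intro U hU V hV a b ha hb hab
    have hb' : b = 1 - a := by linarith
    rw [hb']
    exact hA.convex U hU V hV a ha (by linarith)
  obtain ⟨lam, a, u, ha0, hacu, hmain⟩ := hypo_sep (V := Ω →ₘ[μ] ℝ) hconvA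
    (fun _ => (0 : EReal))
    (by
      intro x hx y hy t ht0 ht1 a b hax hby
      have hax' : a ≤ 0 := by exact_mod_cast hax
      have hby' : b ≤ 0 := by exact_mod_cast hby
      have h : (t * a + (1 - t) * b : ℝ) ≤ 0 := by nlinarith
      exact_mod_cast h)
    (L := fun (j : ↥F) (U : Ω →ₘ[μ] ℝ) => ip U ((j : ↥(kdual EE)) : Ω →ₘ[μ] ℝ))
    (by
      intro j x hx y hy t ht0 ht1
      have hj : ((j : ↥(kdual EE)) : Ω →ₘ[μ] ℝ) ∈ kdual EE := (j : ↥(kdual EE)).2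
      have hix : Integrable (fun ω => x ω * ((j : ↥(kdual EE)) : Ω →ₘ[μ] ℝ) ω) μ :=
        hj x (hA.subset hx)
      have hiy : Integrable (fun ω => y ω * ((j : ↥(kdual EE)) : Ω →ₘ[μ] ℝ) ω) μ :=
        hj y (hA.subset hy)
      have h1 : ip (t • x + (1 - t) • y) ((j : ↥(kdual EE)) : Ω →ₘ[μ] ℝ) =
          ip (t • x) ((j : ↥(kdual EE)) : Ω →ₘ[μ] ℝ) +
          ip ((1 - t) • y) ((j : ↥(kdual EE)) : Ω →ₘ[μ] ℝ) :=
        ip_add_left (integrable_smul_left t hix) (integrable_smul_left (1 - t) hiy)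
      rw [h1, ip_smul_left, ip_smul_left])
    (v := fun j => ip (S X) ((j : ↥(kdual EE)) : Ω →ₘ[μ] ℝ))
    (hε := hε) (hcc' := (by norm_num : (-1:ℝ) < 0))
    (hbox := by
      intro U hU hUbox
      exfalso
      have hq : (⟨U, hA.subset hU⟩ : ↥EE) ∈ {U : ↥EE | (U : Ω →ₘ[μ] ℝ) ∈ A}ᶜ := by
        apply hbox
        intro i hi
        exact hUbox ⟨i, hi⟩
      exact hq hU)
    (hx₀ := hA.zero_mem) (ht₀ := le_refl ((0:ℝ) : EReal))
  have hu : 0 < u := by simpa using hacu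
  set W₀ : Ω →ₘ[μ] ℝ := ∑ j : ↥F, lam j • ((j : ↥(kdual EE)) : Ω →ₘ[μ] ℝ) with hW₀def
  have hW₀k : W₀ ∈ kdual EE :=
    kdual_lincomb Finset.univ lam (fun j _ => (j : ↥(kdual EE)).2)
  have hipW₀ : ∀ U ∈ EE, ip U W₀ = ∑ j : ↥F, lam j * ip U ((j : ↥(kdual EE)) : Ω →ₘ[μ] ℝ) := by
    intro U hU
    exact (ip_lincomb_right Finset.univ U lam _ (fun j _ => (j : ↥(kdual EE)).2 U hU)).2
  set s₀ : ℝ := ip (S X) W₀ + u with hs₀def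
  have hsep : ∀ U ∈ A, s₀ ≤ ip U W₀ := by
    intro U hU
    have h := hmain U hU 0 (le_refl _)
    rw [mul_zero, add_zero] at h
    have h2 : ∑ j : ↥F, lam j * (ip U ((j : ↥(kdual EE)) : Ω →ₘ[μ] ℝ) -
        ip (S X) ((j : ↥(kdual EE)) : Ω →ₘ[μ] ℝ)) = ip U W₀ - ip (S X) W₀ := by
      rw [hipW₀ U (hA.subset hU), hipW₀ (S X) hXE, ← Finset.sum_sub_distrib]
      exact Finset.sum_congr rfl fun j _ => by ring
    rw [h2] at h
    rw [hs₀def]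
    linarith
  have hlt : ip (S X) W₀ < s₀ := by rw [hs₀def]; linarith
  have hW₀bar : W₀ ∈ barrS A (kdual EE) := by
    refine ⟨hW₀k, ?_⟩
    have hle : ((s₀ : ℝ) : EReal) ≤ suppS A W₀ :=
      le_iInf₂ fun U hU => EReal.coe_le_coe_iff.2 (hsep U hU)
    exact lt_of_lt_of_le (EReal.bot_lt_coe _) hle
  exact ⟨W₀, s₀, hW₀k, barr_nonneg hE hA.zero_mem hA.mono hW₀bar, hsep, hlt⟩

end Aux6

section Aux7
variable {Ω : Type*} [MeasurableSpace Ω] {μ : Measure Ω} {d : ℕ}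
variable {Li : Fin d → Set (Ω →ₘ[μ] ℝ)} {nrmX : Fin d → ((Ω →ₘ[μ] ℝ) → ℝ)}
variable {EE : Set (Ω →ₘ[μ] ℝ)} {nrmE : (Ω →ₘ[μ] ℝ) → ℝ}
variable {S : (Fin d → (Ω →ₘ[μ] ℝ)) → (Ω →ₘ[μ] ℝ)} {A : Set (Ω →ₘ[μ] ℝ)}

/-- Separation step 2: if `S X ∉ A` has a separating dual element, then the penalty
function admits no affine majorant with slope `X`. -/
lemma sep_step2
    (hLi : ∀ i, IsAdmissible (Li i) (nrmX i)) (hE : IsAdmissible EE nrmE)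
    (hS : IsAdmissibleImpact (prodSet Li) (prodSet fun i => kdual (Li i)) EE (kdual EE) S)
    (hA : IsAdmissibleAcceptance (prodSet Li) EE (kdual EE) S A)
    {K : Set (Ω →ₘ[μ] ℝ)}
    {X : Fin d → (Ω →ₘ[μ] ℝ)} (hX : X ∈ prodSet Li)
    {W₀ : Ω →ₘ[μ] ℝ} {s₀ : ℝ}
    (hW₀K : ∀ t : ℝ, 0 < t → t • W₀ ∈ K)
    (hW₀k : W₀ ∈ kdual EE) (hW₀pos : (0 : Ω →ₘ[μ] ℝ) ≤ W₀)
    (hs₀ : ∀ U ∈ A, s₀ ≤ ip U W₀) (hlt : ip (S X) W₀ < s₀)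
    {C : ℝ}
    (hmaj : ∀ Z ∈ (prodSet fun i => kdual (Li i)),
      penalty (prodSet Li) A S K Z ≤ ((pairing X Z - C : ℝ) : EReal)) :
    False := by
  classical
  set φX : ℝ := ip (S X) W₀ with hφXdef
  set gap : ℝ := s₀ - φX with hgapdef
  have hgap : 0 < gap := by rw [hgapdef]; linarith
  have husc := hS.usc W₀ hW₀k hW₀pos
  have hlt' : (fun Y : ↥(prodSet Li) => ∫ ω, S (Y : Fin d → (Ω →ₘ[μ] ℝ)) ω * W₀ ω ∂μ)
      ⟨X, hX⟩ < φX + gap / 3 := by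
    dsimp only
    have : (∫ ω, S X ω * W₀ ω ∂μ) = φX := rfl
    rw [this]
    linarith
  have hev := husc ⟨X, hX⟩ (φX + gap / 3) hlt'
  obtain ⟨F, ε, hε, hbox⟩ := box_of_nhds
    (fun Y : ↥(prodSet Li) => fun Z : ↥(prodSet fun i => kdual (Li i)) =>
      pairing (Y : Fin d → (Ω →ₘ[μ] ℝ)) (Z : Fin d → (Ω →ₘ[μ] ℝ)))
    ⟨X, hX⟩ hev
  have hconvP : Convex ℝ (prodSet Li) :=
    convex_prodSet (fun i => (hLi i).add_mem) (fun i => (hLi i).smul_mem)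
  obtain ⟨lam, a, u, ha0, hacu, hmain⟩ := hypo_sep (V := Fin d → (Ω →ₘ[μ] ℝ)) hconvP
    (fun Y => ((∫ ω, S Y ω * W₀ ω ∂μ : ℝ) : EReal))
    (by
      intro x hx y hy t ht0 ht1 a b hax hby
      have hax' : a ≤ ∫ ω, S x ω * W₀ ω ∂μ := by exact_mod_cast hax
      have hby' : b ≤ ∫ ω, S y ω * W₀ ω ∂μ := by exact_mod_cast hby
      have hcomb : (t • x + (1 - t) • y) ∈ prodSet Li :=
        prodSet_add (fun i => (hLi i).add_mem)
          (prodSet_smul t (fun i => (hLi i).smul_mem) hx)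
          (prodSet_smul (1 - t) (fun i => (hLi i).smul_mem) hy)
      have hSx : S x ∈ EE := hS.mapsTo x hx
      have hSy : S y ∈ EE := hS.mapsTo y hy
      have hScomb : S (t • x + (1 - t) • y) ∈ EE := hS.mapsTo _ hcomb
      have hix : Integrable (fun ω => S x ω * W₀ ω) μ := hW₀k (S x) hSx
      have hiy : Integrable (fun ω => S y ω * W₀ ω) μ := hW₀k (S y) hSy
      have hicomb : Integrable (fun ω => S (t • x + (1 - t) • y) ω * W₀ ω) μ :=
        hW₀k _ hScomb
      have hmix : t • S x + (1 - t) • S y ∈ EE :=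
        hE.add_mem _ (hE.smul_mem t _ hSx) _ (hE.smul_mem (1 - t) _ hSy)
      have himix : Integrable (fun ω => (t • S x + (1 - t) • S y) ω * W₀ ω) μ :=
        hW₀k _ hmix
      have hcon := hS.concave x hx y hy t (le_of_lt ht0) (le_of_lt ht1)
      have haecon : (fun ω => (t • S x + (1 - t) • S y) ω * W₀ ω) ≤ᵐ[μ]
          (fun ω => S (t • x + (1 - t) • y) ω * W₀ ω) := by
        have h1 := AEEqFun.coeFn_le.2 hcon
        have h2 := AEEqFun.coeFn_le.2 hW₀pos
        filter_upwards [h1, h2, AEEqFun.coeFn_zero (μ := μ) (β := ℝ)] with ω hω hω2 hω3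
        have hW0 : (0:ℝ) ≤ W₀ ω := by rw [hω3] at hω2; exact hω2
        exact mul_le_mul_of_nonneg_right hω hW0
      have hint : (∫ ω, (t • S x + (1 - t) • S y) ω * W₀ ω ∂μ) ≤
          ∫ ω, S (t • x + (1 - t) • y) ω * W₀ ω ∂μ :=
        integral_mono_ae himix hicomb haecon
      have hdecomp : (∫ ω, (t • S x + (1 - t) • S y) ω * W₀ ω ∂μ) =
          t * (∫ ω, S x ω * W₀ ω ∂μ) + (1 - t) * (∫ ω, S y ω * W₀ ω ∂μ) := by
        have h1 : ip (t • S x + (1 - t) • S y) W₀ = ip (t • S x) W₀ + ip ((1 - t) • S y) W₀ :=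
          ip_add_left (integrable_smul_left t hix) (integrable_smul_left (1 - t) hiy)
        have h2 : ip (t • S x) W₀ = t * ip (S x) W₀ := ip_smul_left t _ _
        have h3 : ip ((1 - t) • S y) W₀ = (1 - t) * ip (S y) W₀ := ip_smul_left (1 - t) _ _
        exact h1.trans (by rw [h2, h3]; rfl)
      apply EReal.coe_le_coe_iff.2
      rw [hdecomp] at hint
      nlinarith [mul_le_mul_of_nonneg_left hax' (le_of_lt ht0),
        mul_le_mul_of_nonneg_left hby' (by linarith : (0:ℝ) ≤ 1 - t)])
    (L := fun (j : ↥F) (Y : Fin d → (Ω →ₘ[μ] ℝ)) =>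
      pairing Y ((j : ↥(prodSet fun i => kdual (Li i))) : Fin d → (Ω →ₘ[μ] ℝ)))
    (by
      intro j x hx y hy t ht0 ht1
      have hjm := (j : ↥(prodSet fun i => kdual (Li i))).2
      have h0 : pairing (t • x + (1 - t) • y)
          ((j : ↥(prodSet fun i => kdual (Li i))) : Fin d → (Ω →ₘ[μ] ℝ)) =
          pairing (t • x) ((j : ↥(prodSet fun i => kdual (Li i))) : Fin d → (Ω →ₘ[μ] ℝ)) +
          pairing ((1 - t) • y) ((j : ↥(prodSet fun i => kdual (Li i))) : Fin d → (Ω →ₘ[μ] ℝ)) :=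
        pairing_add_left (fun i => integrable_smul_left t (int_pair hx hjm i))
          (fun i => integrable_smul_left (1 - t) (int_pair hy hjm i))
      rw [h0, pairing_smul_left, pairing_smul_left])
    (v := fun j => pairing X ((j : ↥(prodSet fun i => kdual (Li i))) : Fin d → (Ω →ₘ[μ] ℝ)))
    (hε := hε) (hcc' := (by linarith : φX + gap / 3 < φX + gap / 2))
    (hbox := by
      intro Y hY hYbox
      have hq := hbox ⟨Y, hY⟩ (fun i hi => hYbox ⟨i, hi⟩)
      exact EReal.coe_lt_coe_iff.2 hq)
    (hx₀ := hX) (t₀ := φX) (ht₀ := le_of_eq rfl)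
  -- the vertical case is impossible
  have ha2 : a < 0 := by
    rcases lt_or_eq_of_le ha0 with h | h
    · exact h
    · exfalso
      have h1 := hmain X hX φX (le_of_eq rfl)
      have hz : (∑ j : {x // x ∈ F}, lam j * (pairing X
          ((j : ↥(prodSet fun i => kdual (Li i))) : Fin d → (Ω →ₘ[μ] ℝ)) - pairing X
          ((j : ↥(prodSet fun i => kdual (Li i))) : Fin d → (Ω →ₘ[μ] ℝ)))) = 0 := by simp
      rw [hz, h, zero_add, zero_mul] at h1
      have h2 : 0 < u := by rw [h] at hacu; simpa using hacu
      linarith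
  set b₂ : ℝ := -a with hb₂def
  have hb₂ : 0 < b₂ := by rw [hb₂def]; linarith
  set Zt : Fin d → (Ω →ₘ[μ] ℝ) := ∑ j : ↥F, lam j •
    ((j : ↥(prodSet fun i => kdual (Li i))) : Fin d → (Ω →ₘ[μ] ℝ)) with hZtdef
  have hZtmem : Zt ∈ (prodSet fun i => kdual (Li i)) :=
    prodSet_lincomb Finset.univ lam (fun i => kdual_zero _)
      (fun i f hf g hg => kdual_add hf hg) (fun i c f hf => kdual_smul c hf)
      (fun j _ => (j : ↥(prodSet fun i => kdual (Li i))).2)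
  have hsumY : ∀ Y ∈ prodSet Li, (∑ j : ↥F, lam j *
      pairing Y ((j : ↥(prodSet fun i => kdual (Li i))) : Fin d → (Ω →ₘ[μ] ℝ))) =
      pairing Y Zt := by
    intro Y hY
    rw [hZtdef]
    exact (pairing_lincomb_right Finset.univ lam
      (fun j _ i => int_pair hY (j : ↥(prodSet fun i => kdual (Li i))).2 i)).symm
  -- affine majorant of φ
  have hmaj₂ : ∀ Y ∈ prodSet Li, b₂ * (∫ ω, S Y ω * W₀ ω ∂μ) ≤
      pairing Y Zt - pairing X Zt - u := by
    intro Y hY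
    have h := hmain Y hY (∫ ω, S Y ω * W₀ ω ∂μ) (le_of_eq rfl)
    have hsub : (∑ j : ↥F, lam j * (pairing Y
        ((j : ↥(prodSet fun i => kdual (Li i))) : Fin d → (Ω →ₘ[μ] ℝ)) - pairing X
        ((j : ↥(prodSet fun i => kdual (Li i))) : Fin d → (Ω →ₘ[μ] ℝ)))) =
        pairing Y Zt - pairing X Zt := by
      rw [← hsumY Y hY, ← hsumY X hX, ← Finset.sum_sub_distrib]
      exact Finset.sum_congr rfl fun j _ => by ring
    rw [hsub] at h
    have : a * (∫ ω, S Y ω * W₀ ω ∂μ) = - (b₂ * (∫ ω, S Y ω * W₀ ω ∂μ)) := by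
      rw [hb₂def]; ring
    rw [this] at h
    linarith
  have hq : 0 < b₂ * s₀ + u := by
    clear_value φX gap b₂ Zt
    have h1 : -(b₂ * (φX + gap / 2)) < u := by
      have hba : -(b₂ * (φX + gap / 2)) = a * (φX + gap / 2) := by rw [hb₂def]; ring
      rw [hba]; exact hacu
    have h3 : φX + gap / 2 < s₀ := by rw [hgapdef]; linarith
    have h4 : b₂ * (φX + gap / 2) < b₂ * s₀ := mul_lt_mul_of_pos_left h3 hb₂
    nlinarith [h1, h4]
  -- scaling contradiction
  set r : ℝ := (|C| + 1) / (b₂ * s₀ + u) with hrdef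
  have hr : 0 < r := div_pos (by positivity) hq
  have hZr : r • Zt ∈ (prodSet fun i => kdual (Li i)) :=
    prodSet_smul r (fun i c f hf => kdual_smul c hf) hZtmem
  have hWr : (r * b₂) • W₀ ∈ K := hW₀K _ (by positivity)
  have hpen_lb : ((r * b₂ * s₀ + r * (pairing X Zt + u) : ℝ) : EReal) ≤
      penalty (prodSet Li) A S K (r • Zt) := by
    have h1 : ((r * b₂ * s₀ : ℝ) : EReal) ≤ suppS A ((r * b₂) • W₀) := by
      apply le_iInf₂
      intro U hU
      rw [ip_smul_right]
      apply EReal.coe_le_coe_iff.2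
      have hm := mul_le_mul_of_nonneg_left (hs₀ U hU) (le_of_lt (mul_pos hr hb₂))
      linarith
    have h2 : ((r * (pairing X Zt + u) : ℝ) : EReal) ≤
        ⨅ Y ∈ prodSet Li, ((pairing Y (r • Zt) - ∫ ω, S Y ω * ((r * b₂) • W₀) ω ∂μ : ℝ) : EReal) := by
      apply le_iInf₂
      intro Y hY
      have hip1 : pairing Y (r • Zt) = r * pairing Y Zt := pairing_smul_right r Y Zt
      have hip2 : (∫ ω, S Y ω * ((r * b₂) • W₀) ω ∂μ) = (r * b₂) * (∫ ω, S Y ω * W₀ ω ∂μ) :=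
        ip_smul_right (r * b₂) W₀ (S Y)
      rw [hip1, hip2]
      apply EReal.coe_le_coe_iff.2
      have h3 := hmaj₂ Y hY
      nlinarith [mul_le_mul_of_nonneg_left h3 (le_of_lt hr)]
    calc ((r * b₂ * s₀ + r * (pairing X Zt + u) : ℝ) : EReal)
        = ((r * b₂ * s₀ : ℝ) : EReal) + ((r * (pairing X Zt + u) : ℝ) : EReal) := by
          rw [← EReal.coe_add]
      _ ≤ suppS A ((r * b₂) • W₀) +
          ⨅ Y ∈ prodSet Li, ((pairing Y (r • Zt) - ∫ ω, S Y ω * ((r * b₂) • W₀) ω ∂μ : ℝ) : EReal) :=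
          add_le_add h1 h2
      _ ≤ _ := le_iSup₂ (f := fun W (_ : W ∈ K) => suppS A W +
          ⨅ Y ∈ prodSet Li, ((pairing Y (r • Zt) - ∫ ω, S Y ω * W ω ∂μ : ℝ) : EReal)) _ hWr
  have hub := hmaj (r • Zt) hZr
  have hcontr : r * b₂ * s₀ + r * (pairing X Zt + u) ≤ pairing X (r • Zt) - C := by
    have := le_trans hpen_lb hub
    exact_mod_cast this
  rw [pairing_smul_right] at hcontr
  have hfinal : r * (b₂ * s₀ + u) ≤ -C := by nlinarith
  have hr2 : r * (b₂ * s₀ + u) = |C| + 1 := by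
    rw [hrdef]; field_simp
  rw [hr2] at hfinal
  have habs : -C ≤ |C| := neg_le_abs C
  linarith

end Aux7

section Aux8
variable {Ω : Type*} [MeasurableSpace Ω] {μ : Measure Ω} {d : ℕ}
variable {Li : Fin d → Set (Ω →ₘ[μ] ℝ)} {nrmX : Fin d → ((Ω →ₘ[μ] ℝ) → ℝ)}
variable {EE : Set (Ω →ₘ[μ] ℝ)} {nrmE : (Ω →ₘ[μ] ℝ) → ℝ}
variable {S : (Fin d → (Ω →ₘ[μ] ℝ)) → (Ω →ₘ[μ] ℝ)} {A : Set (Ω →ₘ[μ] ℝ)}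

lemma main_eq
    (hLi : ∀ i, IsAdmissible (Li i) (nrmX i)) (hE : IsAdmissible EE nrmE)
    (hS : IsAdmissibleImpact (prodSet Li) (prodSet fun i => kdual (Li i)) EE (kdual EE) S)
    (hA : IsAdmissibleAcceptance (prodSet Li) EE (kdual EE) S A)
    {K : Set (Ω →ₘ[μ] ℝ)}
    (hK0 : (0 : Ω →ₘ[μ] ℝ) ∈ K)
    (hKsub : K ⊆ kdual EE)
    (hKadd : ∀ W₁ ∈ K, ∀ W₂ ∈ K, W₁ + W₂ ∈ K)
    (hKcone : ∀ W ∈ K, ∀ t : ℝ, 0 < t → t • W ∈ K)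
    (hKsep : ∀ X ∈ prodSet Li, S X ∉ A → ∃ (W₀ : Ω →ₘ[μ] ℝ) (s₀ : ℝ),
      (∀ t : ℝ, 0 < t → t • W₀ ∈ K) ∧ W₀ ∈ kdual EE ∧ (0 : Ω →ₘ[μ] ℝ) ≤ W₀ ∧
      (∀ U ∈ A, s₀ ≤ ip U W₀) ∧ ip (S X) W₀ < s₀) :
    ∀ Z : ↥(prodSet fun i => kdual (Li i)),
      suppV (sysAcc (prodSet Li) S A) (Z : Fin d → (Ω →ₘ[μ] ℝ)) =
        uscHull (wtop (prodSet fun i => kdual (Li i)) (prodSet Li))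
          (fun Z' : ↥(prodSet fun i => kdual (Li i)) =>
            penalty (prodSet Li) A S K (Z' : Fin d → (Ω →ₘ[μ] ℝ))) Z := by
  intro Z₀
  apply le_antisymm
  · -- hard direction
    apply le_iInf₂
    rintro g ⟨hgusc, hgdom⟩
    by_contra hcon
    push_neg at hcon
    obtain ⟨c, hc1, hc2⟩ := EReal.exists_between_coe_real hcon
    obtain ⟨c', hc1', hc2'⟩ := EReal.exists_between_coe_real hc2
    have hcc' : c < c' := by exact_mod_cast hc1'
    have hev := hgusc Z₀ (c : EReal) hc1
    obtain ⟨F, ε, hε, hbox⟩ := box_of_nhds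
      (fun Z : ↥(prodSet fun i => kdual (Li i)) => fun Xs : ↥(prodSet Li) =>
        pairing (Z : Fin d → (Ω →ₘ[μ] ℝ)) (Xs : Fin d → (Ω →ₘ[μ] ℝ))) Z₀ hev
    have hconvP : Convex ℝ (prodSet fun i => kdual (Li i)) :=
      convex_prodSet (fun i f hf g' hg' => kdual_add hf hg') (fun i c'' f hf => kdual_smul c'' hf)
    have h0mem : (0 : Fin d → (Ω →ₘ[μ] ℝ)) ∈ (prodSet fun i => kdual (Li i)) :=
      prodSet_zero fun i => kdual_zero (Li i)
    have hpen0 : ((0:ℝ) : EReal) ≤ penalty (prodSet Li) A S K (0 : Fin d → (Ω →ₘ[μ] ℝ)) := by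
      rw [EReal.coe_zero]
      exact penalty_zero_nonneg hK0 hA.zero_mem hLi hS
    obtain ⟨lam, a, u, ha0, hacu, hmain⟩ := hypo_sep (V := Fin d → (Ω →ₘ[μ] ℝ)) hconvP
      (penalty (prodSet Li) A S K)
      (penalty_concave hLi hS hA.subset hA.zero_mem hKsub hKadd hKcone)
      (L := fun (j : ↥F) (Zv : Fin d → (Ω →ₘ[μ] ℝ)) =>
        pairing Zv ((j : ↥(prodSet Li)) : Fin d → (Ω →ₘ[μ] ℝ)))
      (by
        intro j x hx y hy t ht0 ht1
        have hjm := (j : ↥(prodSet Li)).2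
        rw [pairing_comm (t • x + (1 - t) • y), pairing_affine_right t
          (fun i => int_pair hjm hx i) (fun i => int_pair hjm hy i),
          pairing_comm _ x, pairing_comm _ y])
      (v := fun j => pairing (Z₀ : Fin d → (Ω →ₘ[μ] ℝ))
        ((j : ↥(prodSet Li)) : Fin d → (Ω →ₘ[μ] ℝ)))
      (hε := hε) (hcc' := hcc')
      (hbox := by
        intro Zv hZv hZvbox
        have hq := hbox ⟨Zv, hZv⟩ (fun i hi => hZvbox ⟨i, hi⟩)
        exact lt_of_le_of_lt (hgdom ⟨Zv, hZv⟩) hq)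
      (hx₀ := h0mem) (ht₀ := hpen0)
    -- the linear functional
    set Xt : Fin d → (Ω →ₘ[μ] ℝ) := ∑ j : ↥F, lam j •
      ((j : ↥(prodSet Li)) : Fin d → (Ω →ₘ[μ] ℝ)) with hXtdef
    have hXtmem : Xt ∈ prodSet Li :=
      prodSet_lincomb Finset.univ lam (fun i => (hLi i).zero_mem)
        (fun i => (hLi i).add_mem) (fun i => (hLi i).smul_mem)
        (fun j _ => (j : ↥(prodSet Li)).2)
    have hsumZ : ∀ Zv ∈ (prodSet fun i => kdual (Li i)),
        (∑ j : ↥F, lam j * pairing Zv ((j : ↥(prodSet Li)) : Fin d → (Ω →ₘ[μ] ℝ))) =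
        pairing Xt Zv := by
      intro Zv hZv
      calc (∑ j : ↥F, lam j * pairing Zv ((j : ↥(prodSet Li)) : Fin d → (Ω →ₘ[μ] ℝ)))
          = ∑ j : ↥F, lam j * pairing ((j : ↥(prodSet Li)) : Fin d → (Ω →ₘ[μ] ℝ)) Zv :=
            Finset.sum_congr rfl fun j _ => by rw [pairing_comm]
        _ = pairing Xt Zv := by
            rw [hXtdef]
            exact (pairing_lincomb_left Finset.univ lam
              (fun j _ i => int_pair (j : ↥(prodSet Li)).2 hZv i)).symm
    have hsub : ∀ Zv ∈ (prodSet fun i => kdual (Li i)),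
        (∑ j : ↥F, lam j * (pairing Zv ((j : ↥(prodSet Li)) : Fin d → (Ω →ₘ[μ] ℝ)) -
          pairing (Z₀ : Fin d → (Ω →ₘ[μ] ℝ)) ((j : ↥(prodSet Li)) : Fin d → (Ω →ₘ[μ] ℝ)))) =
        pairing Xt Zv - pairing Xt (Z₀ : Fin d → (Ω →ₘ[μ] ℝ)) := by
      intro Zv hZv
      rw [← hsumZ Zv hZv, ← hsumZ _ Z₀.2, ← Finset.sum_sub_distrib]
      exact Finset.sum_congr rfl fun j _ => by ring
    have hZ0 : pairing Xt (Z₀ : Fin d → (Ω →ₘ[μ] ℝ)) < -u := by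
      have h := hmain 0 h0mem 0 hpen0
      have he : (∑ j : ↥F, lam j * (pairing (0 : Fin d → (Ω →ₘ[μ] ℝ))
          ((j : ↥(prodSet Li)) : Fin d → (Ω →ₘ[μ] ℝ)) -
          pairing (Z₀ : Fin d → (Ω →ₘ[μ] ℝ)) ((j : ↥(prodSet Li)) : Fin d → (Ω →ₘ[μ] ℝ)))) =
          - pairing Xt (Z₀ : Fin d → (Ω →ₘ[μ] ℝ)) := by
        rw [hsub 0 h0mem, pairing_zero_right]
        ring
      rw [he, mul_zero, add_zero] at h
      linarith
    rcases lt_or_eq_of_le ha0 with ha2 | ha2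
    · -- non-vertical case
      obtain ⟨b, hbdef, hb⟩ : ∃ b : ℝ, b = -a ∧ 0 < b := ⟨-a, rfl, by linarith⟩
      have ha' : a = -b := by rw [hbdef]; ring
      have hXsmem : b⁻¹ • Xt ∈ prodSet Li :=
        prodSet_smul b⁻¹ (fun i => (hLi i).smul_mem) hXtmem
      have hmaj : ∀ Zv ∈ (prodSet fun i => kdual (Li i)),
          penalty (prodSet Li) A S K Zv ≤
          ((pairing (b⁻¹ • Xt) Zv - (pairing Xt (Z₀ : Fin d → (Ω →ₘ[μ] ℝ)) + u) / b : ℝ) : EReal) := by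
        intro Zv hZv
        apply ereal_le_coe_of_forall
        intro t ht
        have h := hmain Zv hZv t ht
        rw [hsub Zv hZv, ha'] at h
        have h2 : t < (pairing Xt Zv - pairing Xt (Z₀ : Fin d → (Ω →ₘ[μ] ℝ)) - u) / b :=
          (lt_div_iff₀ hb).2 (by nlinarith)
        have h3 : (pairing Xt Zv - pairing Xt (Z₀ : Fin d → (Ω →ₘ[μ] ℝ)) - u) / b =
            b⁻¹ * pairing Xt Zv - (pairing Xt (Z₀ : Fin d → (Ω →ₘ[μ] ℝ)) + u) / b := by
          field_simp
          ring
        rw [pairing_smul_left]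
        linarith [h3 ▸ h2]
      have hSXA : S (b⁻¹ • Xt) ∈ A := by
        by_contra hnot
        obtain ⟨W₀, s₀, hWK, hWk, hWpos, hWs, hWlt⟩ := hKsep _ hXsmem hnot
        exact sep_step2 hLi hE hS hA hXsmem hWK hWk hWpos hWs hWlt hmaj
      have hσ : suppV (sysAcc (prodSet Li) S A) (Z₀ : Fin d → (Ω →ₘ[μ] ℝ)) ≤
          ((pairing (b⁻¹ • Xt) (Z₀ : Fin d → (Ω →ₘ[μ] ℝ)) : ℝ) : EReal) :=
        iInf₂_le _ ⟨hXsmem, hSXA⟩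
      have hval : pairing (b⁻¹ • Xt) (Z₀ : Fin d → (Ω →ₘ[μ] ℝ)) < c' := by
        rw [pairing_smul_left]
        have h1 : b⁻¹ * pairing Xt (Z₀ : Fin d → (Ω →ₘ[μ] ℝ)) < b⁻¹ * (-u) :=
          mul_lt_mul_of_pos_left hZ0 (inv_pos.2 hb)
        have h2 : -(b * c') < u := by
          have := hacu
          rw [ha'] at this
          linarith [this]
        have h3 : b⁻¹ * (-u) < c' := by
          rw [inv_mul_eq_div, div_lt_iff₀ hb]
          linarith
        linarith
      exact absurd (lt_of_le_of_lt hσ (lt_trans (EReal.coe_lt_coe_iff.2 hval) hc2'))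
        (lt_irrefl _)
    · -- vertical case
      have upos : 0 < u := by
        rw [ha2] at hacu
        simpa using hacu
      obtain ⟨Xh, hXhmem, hXhA⟩ := hA.preimage_nonempty
      obtain ⟨r, hrdef, hr⟩ : ∃ r : ℝ, r = max 1 ((pairing Xh (Z₀ : Fin d → (Ω →ₘ[μ] ℝ)) - c') / u + 1) ∧ 0 < r :=
        ⟨_, rfl, lt_of_lt_of_le one_pos (le_max_left _ _)⟩
      have hXsmem : Xh + r • Xt ∈ prodSet Li :=
        prodSet_add (fun i => (hLi i).add_mem) hXhmem
          (prodSet_smul r (fun i => (hLi i).smul_mem) hXtmem)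
      have hmaj : ∀ Zv ∈ (prodSet fun i => kdual (Li i)),
          penalty (prodSet Li) A S K Zv ≤
          ((pairing (Xh + r • Xt) Zv -
            r * (pairing Xt (Z₀ : Fin d → (Ω →ₘ[μ] ℝ)) + u) : ℝ) : EReal) := by
        intro Zv hZv
        apply ereal_le_coe_of_forall
        intro t ht
        have h := hmain Zv hZv t ht
        rw [hsub Zv hZv, ha2, zero_mul, add_zero] at h
        have h2 : (t : EReal) ≤ ((pairing Xh Zv : ℝ) : EReal) :=
          le_trans ht (le_trans (penalty_le_suppV Zv) (iInf₂_le Xh ⟨hXhmem, hXhA⟩))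
        have h2' : t ≤ pairing Xh Zv := by exact_mod_cast h2
        have hps : pairing (Xh + r • Xt) Zv = pairing Xh Zv + r * pairing Xt Zv := by
          have hps1 : pairing (Xh + r • Xt) Zv = pairing Xh Zv + pairing (r • Xt) Zv :=
            pairing_add_left (fun i => int_pair hXhmem hZv i)
              (fun i => integrable_smul_left r (int_pair hXtmem hZv i))
          rw [hps1, pairing_smul_left]
        rw [hps]
        have h3 : 0 < r * (pairing Xt Zv - pairing Xt (Z₀ : Fin d → (Ω →ₘ[μ] ℝ)) - u) :=
          mul_pos hr (by linarith)
        nlinarith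
      have hSXA : S (Xh + r • Xt) ∈ A := by
        by_contra hnot
        obtain ⟨W₀, s₀, hWK, hWk, hWpos, hWs, hWlt⟩ := hKsep _ hXsmem hnot
        exact sep_step2 hLi hE hS hA hXsmem hWK hWk hWpos hWs hWlt hmaj
      have hσ : suppV (sysAcc (prodSet Li) S A) (Z₀ : Fin d → (Ω →ₘ[μ] ℝ)) ≤
          ((pairing (Xh + r • Xt) (Z₀ : Fin d → (Ω →ₘ[μ] ℝ)) : ℝ) : EReal) :=
        iInf₂_le _ ⟨hXsmem, hSXA⟩
      have hval : pairing (Xh + r • Xt) (Z₀ : Fin d → (Ω →ₘ[μ] ℝ)) < c' := by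
        have hps : pairing (Xh + r • Xt) (Z₀ : Fin d → (Ω →ₘ[μ] ℝ)) =
            pairing Xh (Z₀ : Fin d → (Ω →ₘ[μ] ℝ)) +
            r * pairing Xt (Z₀ : Fin d → (Ω →ₘ[μ] ℝ)) := by
          have hps1 : pairing (Xh + r • Xt) (Z₀ : Fin d → (Ω →ₘ[μ] ℝ)) =
              pairing Xh (Z₀ : Fin d → (Ω →ₘ[μ] ℝ)) + pairing (r • Xt) (Z₀ : Fin d → (Ω →ₘ[μ] ℝ)) :=
            pairing_add_left (fun i => int_pair hXhmem Z₀.2 i)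
              (fun i => integrable_smul_left r (int_pair hXtmem Z₀.2 i))
          rw [hps1, pairing_smul_left]
        rw [hps]
        have h4 : r * pairing Xt (Z₀ : Fin d → (Ω →ₘ[μ] ℝ)) < r * (-u) :=
          mul_lt_mul_of_pos_left hZ0 hr
        have h5 : (pairing Xh (Z₀ : Fin d → (Ω →ₘ[μ] ℝ)) - c') / u + 1 ≤ r := by
          rw [hrdef]; exact le_max_right _ _
        have h6 : ((pairing Xh (Z₀ : Fin d → (Ω →ₘ[μ] ℝ)) - c') / u + 1) * u ≤ r * u :=
          mul_le_mul_of_nonneg_right h5 (le_of_lt upos)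
        have h7 : ((pairing Xh (Z₀ : Fin d → (Ω →ₘ[μ] ℝ)) - c') / u + 1) * u =
            pairing Xh (Z₀ : Fin d → (Ω →ₘ[μ] ℝ)) - c' + u := by
          field_simp
        nlinarith
      exact absurd (lt_of_le_of_lt hσ (lt_trans (EReal.coe_lt_coe_iff.2 hval) hc2'))
        (lt_irrefl _)
  · exact uscHull_penalty_le_suppV Z₀

end Aux8

section Aux9
variable {Ω : Type*} [MeasurableSpace Ω] {μ : Measure Ω} {d : ℕ}
variable {EE : Set (Ω →ₘ[μ] ℝ)} {nrmE : (Ω →ₘ[μ] ℝ) → ℝ} {A : Set (Ω →ₘ[μ] ℝ)}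

lemma suppS_real_lb {W : Ω →ₘ[μ] ℝ} (h : ⊥ < suppS A W) :
    ∃ s : ℝ, ∀ U ∈ A, s ≤ ip U W := by
  obtain ⟨s, hs⟩ := ereal_exists_real_le h.ne'
  refine ⟨s, fun U hU => ?_⟩
  have h2 : suppS A W ≤ ((ip U W : ℝ) : EReal) := iInf₂_le U hU
  exact_mod_cast le_trans hs h2

lemma suppS_lb_mem {W : Ω →ₘ[μ] ℝ} {s : ℝ} (h : ∀ U ∈ A, s ≤ ip U W) :
    ((s : ℝ) : EReal) ≤ suppS A W :=
  le_iInf₂ fun U hU => EReal.coe_le_coe_iff.2 (h U hU)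

lemma barr_zero_mem (h0A : (0 : Ω →ₘ[μ] ℝ) ∈ A) :
    (0 : Ω →ₘ[μ] ℝ) ∈ barrS A (kdual EE) := by
  refine ⟨kdual_zero _, lt_of_lt_of_le (EReal.bot_lt_coe 0)
    (suppS_lb_mem fun U hU => ?_)⟩
  rw [ip_zero_right]

lemma barr_add (hAsub : A ⊆ EE) {W₁ W₂ : Ω →ₘ[μ] ℝ}
    (h₁ : W₁ ∈ barrS A (kdual EE)) (h₂ : W₂ ∈ barrS A (kdual EE)) :
    W₁ + W₂ ∈ barrS A (kdual EE) := by
  obtain ⟨s₁, hs₁⟩ := suppS_real_lb h₁.2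
  obtain ⟨s₂, hs₂⟩ := suppS_real_lb h₂.2
  refine ⟨kdual_add h₁.1 h₂.1, lt_of_lt_of_le (EReal.bot_lt_coe (s₁ + s₂))
    (suppS_lb_mem fun U hU => ?_)⟩
  rw [ip_add_right (h₁.1 U (hAsub hU)) (h₂.1 U (hAsub hU))]
  exact add_le_add (hs₁ U hU) (hs₂ U hU)

lemma barr_smul (hAsub : A ⊆ EE) {W : Ω →ₘ[μ] ℝ}
    (h : W ∈ barrS A (kdual EE)) {t : ℝ} (ht : 0 < t) :
    t • W ∈ barrS A (kdual EE) := by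
  obtain ⟨s, hs⟩ := suppS_real_lb h.2
  refine ⟨kdual_smul t h.1, lt_of_lt_of_le (EReal.bot_lt_coe (t * s))
    (suppS_lb_mem fun U hU => ?_)⟩
  rw [ip_smul_right]
  exact mul_le_mul_of_nonneg_left (hs U hU) ht.le

end Aux9

/-- the support function of `S⁻¹(A)` is the `σ(X',X)`-upper semicontinuous hull
of `α` (and of `α⁺` provided `bar(A) ∩ E'₊₊ ≠ ∅`). -/
theorem statement10 {μ : Measure Ω} [IsProbabilityMeasure μ] {d : ℕ}
    (Li : Fin d → Set (Ω →ₘ[μ] ℝ)) (nrmX : Fin d → ((Ω →ₘ[μ] ℝ) → ℝ))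
    (EE : Set (Ω →ₘ[μ] ℝ)) (nrmE : (Ω →ₘ[μ] ℝ) → ℝ)
    (S : (Fin d → (Ω →ₘ[μ] ℝ)) → (Ω →ₘ[μ] ℝ)) (A : Set (Ω →ₘ[μ] ℝ))
    (hLi : ∀ i, IsAdmissible (Li i) (nrmX i))
    (hE : IsAdmissible EE nrmE)
    (hS : IsAdmissibleImpact (prodSet Li) (prodSet fun i => kdual (Li i)) EE (kdual EE) S)
    (hA : IsAdmissibleAcceptance (prodSet Li) EE (kdual EE) S A) :
    (∀ Z : ↥(prodSet fun i => kdual (Li i)),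
      suppV (sysAcc (prodSet Li) S A) (Z : Fin d → (Ω →ₘ[μ] ℝ)) =
        uscHull (wtop (prodSet fun i => kdual (Li i)) (prodSet Li))
          (fun Z' : ↥(prodSet fun i => kdual (Li i)) =>
            alpha (prodSet Li) (kdual EE) A S (Z' : Fin d → (Ω →ₘ[μ] ℝ))) Z) ∧
    ((barrS A (kdual EE) ∩ strictPos μ).Nonempty →
      ∀ Z : ↥(prodSet fun i => kdual (Li i)),
        suppV (sysAcc (prodSet Li) S A) (Z : Fin d → (Ω →ₘ[μ] ℝ)) =
          uscHull (wtop (prodSet fun i => kdual (Li i)) (prodSet Li))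
            (fun Z' : ↥(prodSet fun i => kdual (Li i)) =>
              alphaPlus (prodSet Li) (kdual EE) A S (Z' : Fin d → (Ω →ₘ[μ] ℝ))) Z) := by
  have hAsub := hA.subset
  have hsep_barr : ∀ X ∈ prodSet Li, S X ∉ A → ∃ (W₀ : Ω →ₘ[μ] ℝ) (s₀ : ℝ),
      (∀ t : ℝ, 0 < t → t • W₀ ∈ barrS A (kdual EE)) ∧ W₀ ∈ kdual EE ∧
      (0 : Ω →ₘ[μ] ℝ) ≤ W₀ ∧ (∀ U ∈ A, s₀ ≤ ip U W₀) ∧ ip (S X) W₀ < s₀ := by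
    intro X hX hSX
    obtain ⟨W₀, s₀, hWk, hWpos, hWs, hWlt⟩ := sep_exists_W hE hA (hS.mapsTo X hX) hSX
    have hbar : W₀ ∈ barrS A (kdual EE) :=
      ⟨hWk, lt_of_lt_of_le (EReal.bot_lt_coe s₀) (suppS_lb_mem hWs)⟩
    exact ⟨W₀, s₀, fun t ht => barr_smul hAsub hbar ht, hWk, hWpos, hWs, hWlt⟩
  constructor
  · intro Z
    exact main_eq hLi hE hS hA (barr_zero_mem hA.zero_mem) (fun W hW => hW.1)
      (fun W₁ h₁ W₂ h₂ => barr_add hAsub h₁ h₂)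
      (fun W hW t ht => barr_smul hAsub hW ht) hsep_barr Z
  · intro hne Z
    have hK0 : (0 : Ω →ₘ[μ] ℝ) ∈ barrS A (kdual EE) ∩ (strictPos μ ∪ {0}) :=
      ⟨barr_zero_mem hA.zero_mem, Or.inr rfl⟩
    have hKsub : barrS A (kdual EE) ∩ (strictPos μ ∪ {0}) ⊆ kdual EE :=
      fun W hW => hW.1.1
    have hKadd : ∀ W₁ ∈ barrS A (kdual EE) ∩ (strictPos μ ∪ {0}),
        ∀ W₂ ∈ barrS A (kdual EE) ∩ (strictPos μ ∪ {0}),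
        W₁ + W₂ ∈ barrS A (kdual EE) ∩ (strictPos μ ∪ {0}) := by
      intro W₁ h₁ W₂ h₂
      refine ⟨barr_add hAsub h₁.1 h₂.1, ?_⟩
      rcases h₁.2 with p₁ | z₁ <;> rcases h₂.2 with p₂ | z₂
      · left
        have p₁' : ∀ᵐ ω ∂μ, 0 < W₁ ω := p₁
        have p₂' : ∀ᵐ ω ∂μ, 0 < W₂ ω := p₂
        show ∀ᵐ ω ∂μ, 0 < (W₁ + W₂) ω
        filter_upwards [p₁', p₂', AEEqFun.coeFn_add W₁ W₂] with ω a b hc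
        rw [hc]
        exact add_pos a b
      · have hz : W₂ = 0 := z₂
        left
        rw [hz, add_zero]
        exact p₁
      · have hz : W₁ = 0 := z₁
        left
        rw [hz, zero_add]
        exact p₂
      · have hz₁ : W₁ = 0 := z₁
        have hz₂ : W₂ = 0 := z₂
        right
        rw [hz₁, hz₂, add_zero]
        rfl
    have hKcone : ∀ W ∈ barrS A (kdual EE) ∩ (strictPos μ ∪ {0}),
        ∀ t : ℝ, 0 < t → t • W ∈ barrS A (kdual EE) ∩ (strictPos μ ∪ {0}) := by
      intro W hW t ht
      refine ⟨barr_smul hAsub hW.1 ht, ?_⟩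
      rcases hW.2 with p | z
      · left
        have p' : ∀ᵐ ω ∂μ, 0 < W ω := p
        show ∀ᵐ ω ∂μ, 0 < (t • W) ω
        filter_upwards [p', AEEqFun.coeFn_smul t W] with ω hp hsm
        rw [hsm]
        simp only [Pi.smul_apply, smul_eq_mul]
        exact mul_pos ht hp
      · have hz : W = 0 := z
        right
        rw [hz, smul_zero]
        rfl
    have hKsep : ∀ X ∈ prodSet Li, S X ∉ A → ∃ (W₀ : Ω →ₘ[μ] ℝ) (s₀ : ℝ),
        (∀ t : ℝ, 0 < t → t • W₀ ∈ barrS A (kdual EE) ∩ (strictPos μ ∪ {0})) ∧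
        W₀ ∈ kdual EE ∧ (0 : Ω →ₘ[μ] ℝ) ≤ W₀ ∧
        (∀ U ∈ A, s₀ ≤ ip U W₀) ∧ ip (S X) W₀ < s₀ := by
      intro X hX hSX
      obtain ⟨W₀, s₀, hWk, hWpos, hWs, hWlt⟩ := sep_exists_W hE hA (hS.mapsTo X hX) hSX
      obtain ⟨Wh, hWhbar, hWhpos⟩ := hne
      obtain ⟨sh, hsh⟩ := suppS_real_lb hWhbar.2
      have hgap : 0 < s₀ - ip (S X) W₀ := by linarith
      obtain ⟨s, hsdef, hs⟩ : ∃ s : ℝ,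
          s = min 1 ((s₀ - ip (S X) W₀) / (2 * (|ip (S X) Wh - sh| + 1))) ∧ 0 < s :=
        ⟨_, rfl, lt_min one_pos (div_pos hgap (by positivity))⟩
      have hsmall : s * (ip (S X) Wh - sh) < s₀ - ip (S X) W₀ := by
        have h1 : s ≤ (s₀ - ip (S X) W₀) / (2 * (|ip (S X) Wh - sh| + 1)) :=
          hsdef ▸ min_le_right _ _
        have h2 : ip (S X) Wh - sh ≤ |ip (S X) Wh - sh| := le_abs_self _
        have h3 : (0:ℝ) ≤ |ip (S X) Wh - sh| := abs_nonneg _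
        have h4 : s * (ip (S X) Wh - sh) ≤ s * |ip (S X) Wh - sh| :=
          mul_le_mul_of_nonneg_left h2 hs.le
        have h5 : s * |ip (S X) Wh - sh| ≤
            ((s₀ - ip (S X) W₀) / (2 * (|ip (S X) Wh - sh| + 1))) * |ip (S X) Wh - sh| :=
          mul_le_mul_of_nonneg_right h1 h3
        have h6 : ((s₀ - ip (S X) W₀) / (2 * (|ip (S X) Wh - sh| + 1))) * |ip (S X) Wh - sh| <
            s₀ - ip (S X) W₀ := by
          rw [div_mul_eq_mul_div, div_lt_iff₀ (by positivity)]
          nlinarith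
        linarith
      have hWpk : W₀ + s • Wh ∈ kdual EE := kdual_add hWk (kdual_smul s hWhbar.1)
      have hs₀p : ∀ U ∈ A, s₀ + s * sh ≤ ip U (W₀ + s • Wh) := by
        intro U hU
        rw [ip_add_right (hWk U (hAsub hU))
          (integrable_smul_right s (hWhbar.1 U (hAsub hU))), ip_smul_right]
        have h7 := mul_le_mul_of_nonneg_left (hsh U hU) hs.le
        have h8 := hWs U hU
        linarith
      have hWpbar : W₀ + s • Wh ∈ barrS A (kdual EE) :=
        ⟨hWpk, lt_of_lt_of_le (EReal.bot_lt_coe _) (suppS_lb_mem hs₀p)⟩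
      have hW0ae : ∀ᵐ ω ∂μ, 0 ≤ W₀ ω := by
        have h := AEEqFun.coeFn_le.2 hWpos
        filter_upwards [h, AEEqFun.coeFn_zero (μ := μ) (β := ℝ)] with ω h1 h2
        rw [h2] at h1
        exact h1
      have hWppos : ∀ᵐ ω ∂μ, 0 < (W₀ + s • Wh) ω := by
        have hp : ∀ᵐ ω ∂μ, 0 < Wh ω := hWhpos
        filter_upwards [hp, hW0ae, AEEqFun.coeFn_add W₀ (s • Wh),
          AEEqFun.coeFn_smul s Wh] with ω h1 h2 h3 h4
        rw [h3]
        simp only [Pi.add_apply]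
        rw [h4]
        simp only [Pi.smul_apply, smul_eq_mul]
        nlinarith [mul_pos hs h1]
      have hWple : (0 : Ω →ₘ[μ] ℝ) ≤ W₀ + s • Wh := by
        rw [← AEEqFun.coeFn_le]
        filter_upwards [hWppos, AEEqFun.coeFn_zero (μ := μ) (β := ℝ)] with ω h1 h2
        rw [h2]
        exact le_of_lt h1
      have hltp : ip (S X) (W₀ + s • Wh) < s₀ + s * sh := by
        rw [ip_add_right (hWk (S X) (hS.mapsTo X hX))
          (integrable_smul_right s (hWhbar.1 (S X) (hS.mapsTo X hX))), ip_smul_right]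
        linarith
      refine ⟨W₀ + s • Wh, s₀ + s * sh, ?_, hWpk, hWple, hs₀p, hltp⟩
      intro t ht
      refine ⟨barr_smul hAsub hWpbar ht, Or.inl ?_⟩
      show ∀ᵐ ω ∂μ, 0 < (t • (W₀ + s • Wh)) ω
      filter_upwards [hWppos, AEEqFun.coeFn_smul t (W₀ + s • Wh)] with ω h1 h2
      rw [h2]
      simp only [Pi.smul_apply, smul_eq_mul]
      exact mul_pos ht h1
    exact main_eq hLi hE hS hA hK0 hKsub hKadd hKcone hKsep Z


end SystemicRisk
end
end

section
/- Let S : X → E be an admissible impact map and A ⊂ E an admissible acceptance set. For Z ∈ X' define K_Z : X × E' → [−∞,∞] by K_Z(X,W) := σ_A(W) + E[⟨X,Z⟩] − E[S(X)W]. Then the following statements are equivalent: (a) σ_{S^{-1}(A)} = α; (b) α is σ(X',X)-upper semicontinuous; (c) for every Z ∈ X', inf_{X ∈ X} sup_{W ∈ E'} K_Z(X,W) = sup_{W ∈ E'} inf_{X ∈ X} K_Z(X,W). -/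
open MeasureTheory Filter Set
open scoped ENNReal

noncomputable section

namespace SystemicRisk

variable {Ω : Type*} [MeasurableSpace Ω]

variable {d : ℕ}

/-- The Lagrangian-type function `K_Z(X,W) = σ_A(W) + E[⟨X,Z⟩] − E[S(X)W]`. -/
def KZ {μ : Measure Ω} {d : ℕ} (A : Set (Ω →ₘ[μ] ℝ))
    (S : (Fin d → (Ω →ₘ[μ] ℝ)) → (Ω →ₘ[μ] ℝ)) (Z : Fin d → (Ω →ₘ[μ] ℝ))
    (X : Fin d → (Ω →ₘ[μ] ℝ)) (W : Ω →ₘ[μ] ℝ) : EReal :=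
  suppS A W + ((pairing X Z - ∫ ω, S X ω * W ω ∂μ : ℝ) : EReal)

section Generic

theorem weak_dual_char {E F : Type*} [AddCommGroup E] [Module ℝ E] [AddCommGroup F] [Module ℝ F]
    (B : E →ₗ[ℝ] F →ₗ[ℝ] ℝ) (f : WeakBilin B →L[ℝ] ℝ) : ∃ y : F, ∀ x, f x = B x y := by
  have hcont : Continuous f := f.continuous
  have h1 : f ⁻¹' (Metric.ball (0:ℝ) 1) ∈ nhds (0 : WeakBilin B) := by
    have : Metric.ball (f 0) 1 ∈ nhds (f 0) := Metric.ball_mem_nhds _ one_pos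
    simpa [map_zero] using hcont.continuousAt.preimage_mem_nhds (by simpa [map_zero] using this)
  obtain ⟨U, hU, hUsub⟩ := (LinearMap.hasBasis_weakBilin B).mem_iff.mp h1
  obtain ⟨s, r, hr, rfl⟩ := B.toSeminormFamily.basisSets_iff.mp hU
  set L : s → (WeakBilin B →ₗ[ℝ] ℝ) := fun y => B.flip ↑y with hL
  have hker : ⨅ y : s, LinearMap.ker (L y) ≤ LinearMap.ker (f.toLinearMap) := by
    intro x hx
    simp only [Submodule.mem_iInf, LinearMap.mem_ker, hL, LinearMap.flip_apply] at hx
    have hx0 : ∀ t : ℝ, (t • x) ∈ Seminorm.ball (s.sup B.toSeminormFamily) 0 r := by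
      intro t
      refine (Seminorm.mem_ball_zero (p := s.sup B.toSeminormFamily) (y := (t • x : E))).mpr ?_
      have h2 : (s.sup B.toSeminormFamily) (t • x) ≤ 0 := by
        apply Seminorm.finset_sup_apply_le le_rfl
        intro y hy
        have hxy : B x y = 0 := hx ⟨y, hy⟩
        change ‖B (t • x) y‖ ≤ 0
        have key : ∀ (z : E) (c : ℝ), B (c • z) y = c * B z y := fun z c => by simp
        calc ‖B (t • x) y‖ = ‖t * B x y‖ := congrArg _ (key x t)
          _ ≤ 0 := by simp [hxy]
      exact lt_of_le_of_lt h2 hr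
    have hbd : ∀ t : ℝ, |t| * |f x| < 1 := by
      intro t
      have h3 := hUsub (hx0 t)
      simp only [Set.mem_preimage, Metric.mem_ball, dist_zero_right, Real.norm_eq_abs] at h3
      calc |t| * |f x| = |f (t • x)| := by rw [_root_.map_smul]; simp [abs_mul]
        _ < 1 := h3
    by_contra hfx
    have hfx' : f x ≠ 0 := by
      intro h
      exact hfx (by simpa [LinearMap.mem_ker] using h)
    have h4 := hbd (2 / |f x|)
    rw [abs_div, abs_abs, abs_two, div_mul_cancel₀] at h4
    · norm_num at h4
    · exact abs_ne_zero.mpr hfx'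
  have hspan := mem_span_of_iInf_ker_le_ker hker
  rw [Submodule.mem_span_range_iff_exists_fun] at hspan
  obtain ⟨c, hc⟩ := hspan
  refine ⟨∑ i : s, c i • (i : F), fun x => ?_⟩
  have := congrFun (congrArg (fun (g : WeakBilin B →ₗ[ℝ] ℝ) => (g : WeakBilin B → ℝ)) hc) x
  simp only [LinearMap.coe_sum, Finset.sum_apply, LinearMap.smul_apply, smul_eq_mul] at this
  calc f x = ∑ i : s, c i * (L i) x := by rw [this]; rfl
    _ = ∑ i : s, (B x) (c i • (i : F)) := by
        apply Finset.sum_congr rfl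
        intro i _
        rw [_root_.map_smul, smul_eq_mul]
        rfl
    _ = (B x) (∑ i : s, c i • (i : F)) := (map_sum (B x) _ _).symm

/-- Hahn-Banach separation in a weak topology, with the separating functional realized in `F`. -/
theorem weak_separation {E F : Type*} [AddCommGroup E] [Module ℝ E] [AddCommGroup F] [Module ℝ F]
    (B : E →ₗ[ℝ] F →ₗ[ℝ] ℝ) {C : Set (WeakBilin B)} (hc : Convex ℝ C) (hcl : IsClosed C)
    {x₀ : WeakBilin B} (hx : x₀ ∉ C) :
    ∃ (y : F) (u : ℝ), B x₀ y < u ∧ ∀ a ∈ C, u < B a y := by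
  obtain ⟨f, u, hfx, hfa⟩ := geometric_hahn_banach_point_closed hc hcl hx
  obtain ⟨y, hy⟩ := weak_dual_char B f
  exact ⟨y, u, hy x₀ ▸ hfx, fun a ha => hy a ▸ hfa a ha⟩

/-- The pairing on a product with `ℝ`. -/
def prodBilin {E F : Type*} [AddCommGroup E] [Module ℝ E] [AddCommGroup F] [Module ℝ F]
    (B : E →ₗ[ℝ] F →ₗ[ℝ] ℝ) : (E × ℝ) →ₗ[ℝ] (F × ℝ) →ₗ[ℝ] ℝ :=
  LinearMap.mk₂ ℝ (fun x y => B x.1 y.1 + x.2 * y.2)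
    (fun x x' y => by simp only [Prod.fst_add, Prod.snd_add, map_add, LinearMap.add_apply]; ring)
    (fun c x y => by
      simp only [Prod.smul_fst, Prod.smul_snd, _root_.map_smul, LinearMap.smul_apply,
        smul_eq_mul]
      ring)
    (fun x y y' => by simp only [Prod.fst_add, Prod.snd_add, map_add, LinearMap.add_apply]; ring)
    (fun c x y => by
      simp only [Prod.smul_fst, Prod.smul_snd, _root_.map_smul, smul_eq_mul]
      ring)

theorem prodBilin_apply {E F : Type*} [AddCommGroup E] [Module ℝ E] [AddCommGroup F] [Module ℝ F]
    (B : E →ₗ[ℝ] F →ₗ[ℝ] ℝ) (x : E × ℝ) (y : F × ℝ) :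
    prodBilin B x y = B x.1 y.1 + x.2 * y.2 := rfl

theorem prodBilin_topology {E F : Type*} [AddCommGroup E] [Module ℝ E] [AddCommGroup F]
    [Module ℝ F] (B : E →ₗ[ℝ] F →ₗ[ℝ] ℝ) :
    (WeakBilin.instTopologicalSpace (prodBilin B)) =
      @instTopologicalSpaceProd E ℝ (WeakBilin.instTopologicalSpace B) inferInstance := by
  letI : TopologicalSpace E := WeakBilin.instTopologicalSpace B
  apply le_antisymm
  · apply le_inf
    · refine continuous_iff_le_induced.mp (?_ :
        @Continuous (WeakBilin (prodBilin B)) (WeakBilin B)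
          (WeakBilin.instTopologicalSpace (prodBilin B)) (WeakBilin.instTopologicalSpace B)
          Prod.fst)
      apply WeakBilin.continuous_of_continuous_eval
      intro y
      exact (WeakBilin.eval_continuous (prodBilin B) (y, 0)).congr
        (fun a => (prodBilin_apply B (a : E × ℝ) _).trans (by simp))
    · refine continuous_iff_le_induced.mp (?_ :
        @Continuous (WeakBilin (prodBilin B)) ℝ
          (WeakBilin.instTopologicalSpace (prodBilin B)) inferInstance Prod.snd)
      exact (WeakBilin.eval_continuous (prodBilin B) (0, 1)).congr
        (fun a => (prodBilin_apply B (a : E × ℝ) _).trans (by simp))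
  · refine continuous_id_iff_le.mp (?_ :
      @Continuous (E × ℝ) (E × ℝ) (@instTopologicalSpaceProd E ℝ
        (WeakBilin.instTopologicalSpace B) inferInstance)
        (WeakBilin.instTopologicalSpace (prodBilin B)) id)
    apply WeakBilin.continuous_of_continuous_eval
    intro y
    have h : Continuous fun a : E × ℝ => B a.1 y.1 + a.2 * y.2 :=
      ((WeakBilin.eval_continuous B y.1).comp continuous_fst).add
        (continuous_snd.mul continuous_const)
    exact h.congr (fun a => by rw [prodBilin_apply]; rfl)

end Generic

namespace SystemicRisk2

open SystemicRisk

variable {Ω : Type*} [MeasurableSpace Ω] {μ : Measure Ω}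

/-! ### Integral / pairing lemmas -/

theorem ip_congr_right {U W W' : Ω →ₘ[μ] ℝ} (h : W = W') : ip U W = ip U W' := by rw [h]

theorem ip_add_left {U V W : Ω →ₘ[μ] ℝ} (hU : Integrable (fun ω => U ω * W ω) μ)
    (hV : Integrable (fun ω => V ω * W ω) μ) : ip (U + V) W = ip U W + ip V W := by
  unfold ip
  rw [← integral_add hU hV]
  apply integral_congr_ae
  filter_upwards [AEEqFun.coeFn_add U V] with ω h
  rw [h]; simp only [Pi.add_apply]; ring

theorem ip_smul_left (c : ℝ) (U W : Ω →ₘ[μ] ℝ) : ip (c • U) W = c * ip U W := by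
  unfold ip
  rw [← integral_const_mul]
  apply integral_congr_ae
  filter_upwards [AEEqFun.coeFn_smul c U] with ω h
  rw [h]; simp; ring

theorem ip_add_right {U W W' : Ω →ₘ[μ] ℝ} (hW : Integrable (fun ω => U ω * W ω) μ)
    (hW' : Integrable (fun ω => U ω * W' ω) μ) : ip U (W + W') = ip U W + ip U W' := by
  unfold ip
  rw [← integral_add hW hW']
  apply integral_congr_ae
  filter_upwards [AEEqFun.coeFn_add W W'] with ω h
  rw [h]; simp only [Pi.add_apply]; ring

theorem ip_smul_right (c : ℝ) (U W : Ω →ₘ[μ] ℝ) : ip U (c • W) = c * ip U W := by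
  unfold ip
  rw [← integral_const_mul]
  apply integral_congr_ae
  filter_upwards [AEEqFun.coeFn_smul c W] with ω h
  rw [h]; simp; ring

theorem ip_zero_left (W : Ω →ₘ[μ] ℝ) : ip (0 : Ω →ₘ[μ] ℝ) W = 0 := by
  unfold ip
  rw [← integral_zero Ω ℝ (μ := μ)]
  apply integral_congr_ae
  filter_upwards [(AEEqFun.coeFn_zero : (0 : Ω →ₘ[μ] ℝ) =ᵐ[μ] 0)] with ω h
  rw [h]; simp

theorem ip_zero_right (U : Ω →ₘ[μ] ℝ) : ip U (0 : Ω →ₘ[μ] ℝ) = 0 := by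
  unfold ip
  rw [← integral_zero Ω ℝ (μ := μ)]
  apply integral_congr_ae
  filter_upwards [(AEEqFun.coeFn_zero : (0 : Ω →ₘ[μ] ℝ) =ᵐ[μ] 0)] with ω h
  rw [h]; simp

theorem ip_comm (U W : Ω →ₘ[μ] ℝ) : ip U W = ip W U := by
  unfold ip
  exact integral_congr_ae (Filter.Eventually.of_forall fun ω => mul_comm _ _)

theorem ip_mono_left {U V W : Ω →ₘ[μ] ℝ} (hUV : U ≤ V) (hW : (0 : Ω →ₘ[μ] ℝ) ≤ W)
    (hU : Integrable (fun ω => U ω * W ω) μ) (hV : Integrable (fun ω => V ω * W ω) μ) :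
    ip U W ≤ ip V W := by
  apply integral_mono_ae hU hV
  filter_upwards [AEEqFun.coeFn_le.mpr hUV, AEEqFun.coeFn_le.mpr hW,
    (AEEqFun.coeFn_zero : (0 : Ω →ₘ[μ] ℝ) =ᵐ[μ] 0)] with ω h1 h2 h3
  have h2' : 0 ≤ W ω := by rw [h3] at h2; exact h2
  exact mul_le_mul_of_nonneg_right h1 h2'

/-! ### Submodules -/

/-- The Köthe dual as a submodule. -/
def kdualSub (L : Set (Ω →ₘ[μ] ℝ)) : Submodule ℝ (Ω →ₘ[μ] ℝ) where
  carrier := kdual L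
  zero_mem' := by
    intro f _
    refine (integrable_zero _ _ _).congr ?_
    filter_upwards [(AEEqFun.coeFn_zero : (0 : Ω →ₘ[μ] ℝ) =ᵐ[μ] 0)] with ω h
    rw [h]; simp
  add_mem' := by
    intro Z Z' hZ hZ' f hf
    refine ((hZ f hf).add (hZ' f hf)).congr ?_
    filter_upwards [AEEqFun.coeFn_add Z Z'] with ω h
    rw [h]; simp; ring
  smul_mem' := by
    intro c Z hZ f hf
    refine ((hZ f hf).const_mul c).congr ?_
    filter_upwards [AEEqFun.coeFn_smul c Z] with ω h
    rw [h]; simp; ring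

/-- An admissible space as a submodule. -/
def adSub (L : Set (Ω →ₘ[μ] ℝ)) (nrm : (Ω →ₘ[μ] ℝ) → ℝ) (hL : IsAdmissible L nrm) :
    Submodule ℝ (Ω →ₘ[μ] ℝ) where
  carrier := L
  zero_mem' := hL.zero_mem
  add_mem' := fun hf hg => hL.add_mem _ hf _ hg
  smul_mem' := fun c _ hf => hL.smul_mem c _ hf

variable {d : ℕ}

/-- The product space as a submodule. -/
def XSub (Li : Fin d → Set (Ω →ₘ[μ] ℝ)) (nrmX : Fin d → ((Ω →ₘ[μ] ℝ) → ℝ))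
    (hLi : ∀ i, IsAdmissible (Li i) (nrmX i)) : Submodule ℝ (Fin d → (Ω →ₘ[μ] ℝ)) where
  carrier := prodSet Li
  zero_mem' := fun i => (hLi i).zero_mem
  add_mem' := fun hf hg i => (hLi i).add_mem _ (hf i) _ (hg i)
  smul_mem' := fun c _ hf i => (hLi i).smul_mem c _ (hf i)

/-- The dual product space as a submodule. -/
def DSub (Li : Fin d → Set (Ω →ₘ[μ] ℝ)) : Submodule ℝ (Fin d → (Ω →ₘ[μ] ℝ)) where
  carrier := prodSet fun i => kdual (Li i)
  zero_mem' := fun i => (kdualSub (Li i)).zero_mem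
  add_mem' := fun hf hg i => (kdualSub (Li i)).add_mem (hf i) (hg i)
  smul_mem' := fun c _ hf i => (kdualSub (Li i)).smul_mem c (hf i)

end SystemicRisk2

namespace SystemicRisk2
open SystemicRisk

variable {Ω : Type*} [MeasurableSpace Ω] {μ : Measure Ω} {d : ℕ}

theorem pairing_add_left {X X' Z : Fin d → (Ω →ₘ[μ] ℝ)}
    (h : ∀ i, Integrable (fun ω => X i ω * Z i ω) μ)
    (h' : ∀ i, Integrable (fun ω => X' i ω * Z i ω) μ) :
    pairing (X + X') Z = pairing X Z + pairing X' Z := by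
  unfold pairing
  rw [← Finset.sum_add_distrib]
  exact Finset.sum_congr rfl fun i _ => ip_add_left (h i) (h' i)

theorem pairing_smul_left (c : ℝ) (X Z : Fin d → (Ω →ₘ[μ] ℝ)) :
    pairing (c • X) Z = c * pairing X Z := by
  unfold pairing
  rw [Finset.mul_sum]
  exact Finset.sum_congr rfl fun i _ => ip_smul_left c (X i) (Z i)

theorem pairing_add_right {X Z Z' : Fin d → (Ω →ₘ[μ] ℝ)}
    (h : ∀ i, Integrable (fun ω => X i ω * Z i ω) μ)
    (h' : ∀ i, Integrable (fun ω => X i ω * Z' i ω) μ) :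
    pairing X (Z + Z') = pairing X Z + pairing X Z' := by
  unfold pairing
  rw [← Finset.sum_add_distrib]
  exact Finset.sum_congr rfl fun i _ => ip_add_right (h i) (h' i)

theorem pairing_smul_right (c : ℝ) (X Z : Fin d → (Ω →ₘ[μ] ℝ)) :
    pairing X (c • Z) = c * pairing X Z := by
  unfold pairing
  rw [Finset.mul_sum]
  exact Finset.sum_congr rfl fun i _ => ip_smul_right c (X i) (Z i)

theorem pairing_comm (X Z : Fin d → (Ω →ₘ[μ] ℝ)) : pairing X Z = pairing Z X :=
  Finset.sum_congr rfl fun i _ => ip_comm (X i) (Z i)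

theorem pairing_zero_right (X : Fin d → (Ω →ₘ[μ] ℝ)) : pairing X 0 = 0 :=
  Finset.sum_eq_zero fun i _ => ip_zero_right (X i)

theorem pairing_zero_left (Z : Fin d → (Ω →ₘ[μ] ℝ)) : pairing 0 Z = 0 :=
  Finset.sum_eq_zero fun i _ => ip_zero_left (Z i)

section Bilin

variable (Li : Fin d → Set (Ω →ₘ[μ] ℝ)) (nrmX : Fin d → ((Ω →ₘ[μ] ℝ) → ℝ))
  (EE : Set (Ω →ₘ[μ] ℝ)) (nrmE : (Ω →ₘ[μ] ℝ) → ℝ)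

/-- The pairing between `E` and its Köthe dual as a bilinear map. -/
def BE (hE : IsAdmissible EE nrmE) :
    ↥(adSub EE nrmE hE) →ₗ[ℝ] ↥(kdualSub (μ := μ) EE) →ₗ[ℝ] ℝ :=
  LinearMap.mk₂ ℝ (fun U W => ip (U : Ω →ₘ[μ] ℝ) (W : Ω →ₘ[μ] ℝ))
    (fun U U' W => by
      rw [Submodule.coe_add]
      exact ip_add_left (W.2 _ U.2) (W.2 _ U'.2))
    (fun c U W => by rw [Submodule.coe_smul, smul_eq_mul]; exact ip_smul_left c _ _)
    (fun U W W' => by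
      rw [Submodule.coe_add]
      exact ip_add_right (W.2 _ U.2) (W'.2 _ U.2))
    (fun c U W => by rw [Submodule.coe_smul, smul_eq_mul]; exact ip_smul_right c _ _)

variable (hLi : ∀ i, IsAdmissible (Li i) (nrmX i))

/-- The pairing between `X` and `X'` as a bilinear map. -/
def BX : ↥(XSub Li nrmX hLi) →ₗ[ℝ] ↥(DSub (μ := μ) Li) →ₗ[ℝ] ℝ :=
  LinearMap.mk₂ ℝ (fun X Z => pairing (X : Fin d → (Ω →ₘ[μ] ℝ)) (Z : Fin d → (Ω →ₘ[μ] ℝ)))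
    (fun X X' Z => by
      rw [Submodule.coe_add]
      exact pairing_add_left (fun i => Z.2 i _ (X.2 i)) (fun i => Z.2 i _ (X'.2 i)))
    (fun c X Z => by rw [Submodule.coe_smul, smul_eq_mul]; exact pairing_smul_left c _ _)
    (fun X Z Z' => by
      rw [Submodule.coe_add]
      exact pairing_add_right (fun i => Z.2 i _ (X.2 i)) (fun i => Z'.2 i _ (X.2 i)))
    (fun c X Z => by rw [Submodule.coe_smul, smul_eq_mul]; exact pairing_smul_right c _ _)

/-- The pairing between `X'` and `X` as a bilinear map. -/
def BXd : ↥(DSub (μ := μ) Li) →ₗ[ℝ] ↥(XSub Li nrmX hLi) →ₗ[ℝ] ℝ :=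
  LinearMap.mk₂ ℝ (fun Z X => pairing (Z : Fin d → (Ω →ₘ[μ] ℝ)) (X : Fin d → (Ω →ₘ[μ] ℝ)))
    (fun Z Z' X => by
      rw [Submodule.coe_add]
      rw [pairing_comm, pairing_comm (Z : Fin d → (Ω →ₘ[μ] ℝ)), pairing_comm (Z' : Fin d → (Ω →ₘ[μ] ℝ))]
      exact pairing_add_right (fun i => Z.2 i _ (X.2 i)) (fun i => Z'.2 i _ (X.2 i)))
    (fun c Z X => by rw [Submodule.coe_smul, smul_eq_mul]; exact pairing_smul_left c _ _)
    (fun Z X X' => by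
      rw [Submodule.coe_add]
      rw [pairing_comm, pairing_comm (Z : Fin d → (Ω →ₘ[μ] ℝ)) (X : Fin d → (Ω →ₘ[μ] ℝ)),
        pairing_comm (Z : Fin d → (Ω →ₘ[μ] ℝ)) (X' : Fin d → (Ω →ₘ[μ] ℝ))]
      exact pairing_add_left (fun i => Z.2 i _ (X.2 i)) (fun i => Z.2 i _ (X'.2 i)))
    (fun c Z X => by rw [Submodule.coe_smul, smul_eq_mul]; exact pairing_smul_right c _ _)

-- topology identifications
example (hE : IsAdmissible EE nrmE) :
    wtop1 EE (kdual EE) = WeakBilin.instTopologicalSpace (BE EE nrmE hE) := rfl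

example : wtop (prodSet Li) (prodSet fun i => kdual (Li i)) =
    WeakBilin.instTopologicalSpace (BX Li nrmX hLi) := rfl

example : wtop (prodSet fun i => kdual (Li i)) (prodSet Li) =
    WeakBilin.instTopologicalSpace (BXd Li nrmX hLi) := rfl

end Bilin
end SystemicRisk2

section ERealHelpers

open EReal

theorem ereal_le_of_forall_real_lt {x b : EReal}
    (h : ∀ r : ℝ, (r : EReal) < x → (r : EReal) ≤ b) : x ≤ b := by
  by_contra hc
  push_neg at hc
  obtain ⟨r, hr1, hr2⟩ := EReal.exists_between_coe_real hc
  exact absurd (h r hr2) (not_le.mpr hr1)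

theorem ereal_neg_add_cancel (a : ℝ) (x : EReal) : ((-a : ℝ) : EReal) + ((a : EReal) + x) = x := by
  induction x using EReal.rec
  · simp
  · norm_cast; ring
  · rw [EReal.coe_add_top, EReal.coe_add_top]

theorem ereal_add_le_add_iff_left (a : ℝ) {x y : EReal} :
    (a : EReal) + x ≤ (a : EReal) + y ↔ x ≤ y := by
  constructor
  · intro h
    have h2 := add_le_add_right h ((-a : ℝ) : EReal)
    rwa [ereal_neg_add_cancel, ereal_neg_add_cancel] at h2
  · intro h
    exact add_le_add_right h _

/-- Adding a fixed real is an order isomorphism of `EReal`. -/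
def erealAddIso (a : ℝ) : EReal ≃o EReal where
  toFun x := (a : EReal) + x
  invFun x := ((-a : ℝ) : EReal) + x
  left_inv x := ereal_neg_add_cancel a x
  right_inv x := by
    have := ereal_neg_add_cancel (-a) x
    rwa [neg_neg] at this
  map_rel_iff' := by intro x y; exact ereal_add_le_add_iff_left a

theorem ereal_real_add_iInf {ι : Sort*} (a : ℝ) (f : ι → EReal) :
    (a : EReal) + ⨅ i, f i = ⨅ i, ((a : EReal) + f i) :=
  (erealAddIso a).map_iInf f

theorem ereal_real_add_biInf {ι : Type*} (s : Set ι) (a : ℝ) (f : ι → EReal) :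
    (a : EReal) + ⨅ i ∈ s, f i = ⨅ i ∈ s, ((a : EReal) + f i) := by
  rw [iInf_subtype', iInf_subtype', ereal_real_add_iInf]

theorem ereal_top_le_iSup_of_forall {ι : Sort*} {f : ι → EReal}
    (h : ∀ M : ℝ, ∃ i, (M : EReal) ≤ f i) : (⨆ i, f i) = ⊤ := by
  refine le_antisymm le_top ?_
  by_contra hc
  push_neg at hc
  obtain ⟨r, hr1, hr2⟩ := EReal.exists_between_coe_real hc
  obtain ⟨i, hi⟩ := h r
  exact absurd (hi.trans (le_iSup f i)) (not_le.mpr hr1)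

end ERealHelpers

namespace SystemicRisk2
open SystemicRisk

variable {Ω : Type*} [MeasurableSpace Ω] {μ : Measure Ω} {d : ℕ}

theorem suppS_le_ip {A : Set (Ω →ₘ[μ] ℝ)} {U : Ω →ₘ[μ] ℝ} (hU : U ∈ A) (W : Ω →ₘ[μ] ℝ) :
    suppS A W ≤ ((ip U W : ℝ) : EReal) := by
  unfold suppS
  exact iInf₂_le U hU

theorem suppS_nonpos {A : Set (Ω →ₘ[μ] ℝ)} (h0 : (0 : Ω →ₘ[μ] ℝ) ∈ A) (W : Ω →ₘ[μ] ℝ) :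
    suppS A W ≤ 0 := by
  have := suppS_le_ip h0 W
  rwa [ip_zero_left] at this

theorem suppS_zero {A : Set (Ω →ₘ[μ] ℝ)} (h0 : (0 : Ω →ₘ[μ] ℝ) ∈ A) :
    suppS A (0 : Ω →ₘ[μ] ℝ) = 0 := by
  refine le_antisymm ?_ ?_
  · have := suppS_le_ip h0 (0 : Ω →ₘ[μ] ℝ)
    rwa [ip_zero_left] at this
  · refine le_iInf₂ fun U hU => ?_
    rw [ip_zero_right]
    exact le_refl _

theorem suppS_ne_top {A : Set (Ω →ₘ[μ] ℝ)} (h0 : (0 : Ω →ₘ[μ] ℝ) ∈ A) (W : Ω →ₘ[μ] ℝ) :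
    suppS A W ≠ ⊤ := by
  intro h
  have := suppS_nonpos h0 W
  rw [h] at this
  simp at this

/-- On the barrier cone the support function is a real number. -/
theorem suppS_real {A : Set (Ω →ₘ[μ] ℝ)} (h0 : (0 : Ω →ₘ[μ] ℝ) ∈ A) {W : Ω →ₘ[μ] ℝ}
    {D : Set (Ω →ₘ[μ] ℝ)} (hW : W ∈ barrS A D) :
    (((suppS A W).toReal : ℝ) : EReal) = suppS A W :=
  EReal.coe_toReal (suppS_ne_top h0 W) (by
    have := hW.2
    exact fun h => absurd this (by simp [h]))

theorem barrS_zero_mem {A D : Set (Ω →ₘ[μ] ℝ)} (h0 : (0 : Ω →ₘ[μ] ℝ) ∈ A)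
    (hD : (0 : Ω →ₘ[μ] ℝ) ∈ D) : (0 : Ω →ₘ[μ] ℝ) ∈ barrS A D := by
  refine ⟨hD, ?_⟩
  rw [suppS_zero h0]
  exact bot_lt_iff_ne_bot.mpr (by simp)

end SystemicRisk2

namespace SystemicRisk2
open SystemicRisk

variable {Ω : Type*} [MeasurableSpace Ω] {μ : Measure Ω} {d : ℕ}
variable {Li : Fin d → Set (Ω →ₘ[μ] ℝ)} {nrmX : Fin d → ((Ω →ₘ[μ] ℝ) → ℝ)}
  {EE : Set (Ω →ₘ[μ] ℝ)} {nrmE : (Ω →ₘ[μ] ℝ) → ℝ}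
  {S : (Fin d → (Ω →ₘ[μ] ℝ)) → (Ω →ₘ[μ] ℝ)} {A : Set (Ω →ₘ[μ] ℝ)}

/-- Separation of a point of `E` from the acceptance set. -/
theorem sep_E (hE : IsAdmissible EE nrmE)
    (hA : IsAdmissibleAcceptance (prodSet Li) EE (kdual EE) S A)
    {U₀ : Ω →ₘ[μ] ℝ} (hU₀ : U₀ ∈ EE) (hU₀A : U₀ ∉ A) :
    ∃ W ∈ kdual EE, ∃ u : ℝ, ip U₀ W < u ∧ ∀ U ∈ A, u < ip U W := by
  set C : Set (WeakBilin (BE EE nrmE hE)) :=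
    {U : WeakBilin (BE EE nrmE hE) | Subtype.val U ∈ A} with hC
  have hconv : Convex ℝ C := by
    intro x hx y hy a b ha hb hab
    have h1 := hA.convex _ hx _ hy a ha (by linarith)
    show Subtype.val (a • x + b • y) ∈ A
    have hcoe : Subtype.val (a • x + b • y) =
        a • Subtype.val x + b • Subtype.val y := rfl
    rw [hcoe]
    have hb' : b = 1 - a := by linarith
    rw [hb']
    exact h1
  have hcl : IsClosed C := hA.closed
  have hx0 : (⟨U₀, hU₀⟩ : WeakBilin (BE EE nrmE hE)) ∉ C := hU₀A
  obtain ⟨y, u, h1, h2⟩ := weak_separation _ hconv hcl hx0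
  exact ⟨↑y, y.2, u, h1, fun U hU => h2 ⟨U, hA.subset hU⟩ hU⟩

/-- Dual characterization of membership in `A`. -/
theorem mem_A_of (hE : IsAdmissible EE nrmE)
    (hA : IsAdmissibleAcceptance (prodSet Li) EE (kdual EE) S A)
    {U : Ω →ₘ[μ] ℝ} (hU : U ∈ EE)
    (h : ∀ W ∈ barrS A (kdual EE), suppS A W ≤ ((ip U W : ℝ) : EReal)) : U ∈ A := by
  by_contra hUA
  obtain ⟨W, hW, u, h1, h2⟩ := sep_E hE hA hU hUA
  have hsupp : ((u : ℝ) : EReal) ≤ suppS A W :=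
    le_iInf₂ fun V hV => by exact_mod_cast (h2 V hV).le
  have hWb : W ∈ barrS A (kdual EE) :=
    ⟨hW, lt_of_lt_of_le (by exact_mod_cast bot_lt_iff_ne_bot.mpr (by simp) : (⊥ : EReal) < (u : EReal)) hsupp⟩
  have h3 := (h W hWb).trans_lt (by exact_mod_cast h1 : ((ip U W : ℝ) : EReal) < (u : EReal))
  exact absurd hsupp (not_le.mpr h3)

/-- Nonnegativity of integrals against elements of the barrier cone. -/
theorem ip_nonneg_of_barr (hE : IsAdmissible EE nrmE)
    (hA : IsAdmissibleAcceptance (prodSet Li) EE (kdual EE) S A)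
    {W : Ω →ₘ[μ] ℝ} (hW : W ∈ barrS A (kdual EE))
    {V : Ω →ₘ[μ] ℝ} (hV : V ∈ EE) (hV0 : (0 : Ω →ₘ[μ] ℝ) ≤ V) : 0 ≤ ip V W := by
  by_contra hc
  push_neg at hc
  -- suppS A W ≤ n * ip V W for all n
  have key : ∀ n : ℕ, suppS A W ≤ (((n : ℝ) * ip V W : ℝ) : EReal) := by
    intro n
    have hnV : ((n : ℝ) • V) ∈ EE := hE.smul_mem _ _ hV
    have hnV0 : (0 : Ω →ₘ[μ] ℝ) ≤ (n : ℝ) • V := by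
      rw [← AEEqFun.coeFn_le]
      filter_upwards [AEEqFun.coeFn_smul (n : ℝ) V,
        (AEEqFun.coeFn_zero : (0 : Ω →ₘ[μ] ℝ) =ᵐ[μ] 0), AEEqFun.coeFn_le.mpr hV0,
        (AEEqFun.coeFn_zero : (0 : Ω →ₘ[μ] ℝ) =ᵐ[μ] 0)] with ω h1 h2 h3
      rw [h1, h2]
      rw [h2] at h3
      simpa using mul_nonneg (Nat.cast_nonneg n) h3
    have hmem : (0 : Ω →ₘ[μ] ℝ) + (n : ℝ) • V ∈ A := hA.mono 0 hA.zero_mem _ hnV hnV0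
    have := suppS_le_ip hmem W
    rwa [ip_add_left (by
        refine (integrable_zero _ _ _).congr ?_
        filter_upwards [(AEEqFun.coeFn_zero : (0 : Ω →ₘ[μ] ℝ) =ᵐ[μ] 0)] with ω h
        rw [h]; simp) (hW.1 _ hnV), ip_zero_left, zero_add, ip_smul_left] at this
  -- contradiction with suppS A W > ⊥
  set s₀ := (suppS A W).toReal
  have hs₀ : ((s₀ : ℝ) : EReal) = suppS A W := suppS_real hA.zero_mem hW
  obtain ⟨n, hn⟩ := exists_nat_gt ((-s₀) / (-(ip V W)) + 1)
  have hlt : (n : ℝ) * ip V W < s₀ := by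
    have hpos : 0 < -(ip V W) := by linarith
    have h5 : (-s₀) / (-(ip V W)) < (n : ℝ) := by linarith
    have h6 : -s₀ < (n : ℝ) * (-(ip V W)) := (div_lt_iff₀ hpos).mp h5
    have h7 : (n : ℝ) * ip V W = -((n : ℝ) * (-(ip V W))) := by ring
    rw [h7]
    linarith
  have := key n
  rw [← hs₀] at this
  exact absurd (by exact_mod_cast this : s₀ ≤ (n : ℝ) * ip V W) (not_le.mpr hlt)

/-- The AEEqFun `1` belongs to `E`. -/
theorem one_mem_EE (hE : IsAdmissible EE nrmE) : (1 : Ω →ₘ[μ] ℝ) ∈ EE :=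
  hE.linfty_subset _ ⟨1, by
    filter_upwards [AEEqFun.coeFn_one (μ := μ) (β := ℝ)] with ω h
    rw [h]; simp⟩

/-- Elements of the Köthe dual of `E` are integrable. -/
theorem integrable_of_kdual (hE : IsAdmissible EE nrmE) {W : Ω →ₘ[μ] ℝ}
    (hW : W ∈ kdual EE) : Integrable (⇑W) μ := by
  refine (hW _ (one_mem_EE hE)).congr ?_
  filter_upwards [AEEqFun.coeFn_one (μ := μ) (β := ℝ)] with ω h
  rw [h]; simp

/-- Elements of the barrier cone are nonnegative. -/
theorem barr_nonneg (hE : IsAdmissible EE nrmE)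
    (hA : IsAdmissibleAcceptance (prodSet Li) EE (kdual EE) S A)
    {W : Ω →ₘ[μ] ℝ} (hW : W ∈ barrS A (kdual EE)) : (0 : Ω →ₘ[μ] ℝ) ≤ W := by
  have hsm : AEStronglyMeasurable (⇑W) μ := W.aestronglyMeasurable
  set g : Ω → ℝ := hsm.mk ⇑W with hg
  have hgm : StronglyMeasurable g := hsm.stronglyMeasurable_mk
  have hge : ⇑W =ᵐ[μ] g := hsm.ae_eq_mk
  set s : Set Ω := {ω | g ω < 0} with hsdef
  have hs : MeasurableSet s := measurableSet_lt hgm.measurable measurable_const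
  set V : Ω →ₘ[μ] ℝ := AEEqFun.mk (s.indicator (fun _ => (1 : ℝ)))
    ((stronglyMeasurable_const.indicator hs).aestronglyMeasurable) with hVdef
  have hVcoe : ⇑V =ᵐ[μ] s.indicator (fun _ => 1) := AEEqFun.coeFn_mk _ _
  have hVE : V ∈ EE := hE.linfty_subset V ⟨1, by
    filter_upwards [hVcoe] with ω h
    rw [h]
    by_cases hω : ω ∈ s <;> simp [Set.indicator_apply, hω]⟩
  have hV0 : (0 : Ω →ₘ[μ] ℝ) ≤ V := by
    rw [← AEEqFun.coeFn_le]
    filter_upwards [hVcoe, (AEEqFun.coeFn_zero : (0 : Ω →ₘ[μ] ℝ) =ᵐ[μ] 0)] with ω h1 h2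
    rw [h1, h2]
    by_cases hω : ω ∈ s <;> simp [Set.indicator_apply, hω]
  have hip : 0 ≤ ip V W := ip_nonneg_of_barr hE hA hW hVE hV0
  have hiW : Integrable (⇑W) μ := integrable_of_kdual hE hW.1
  have hig : Integrable g μ := hiW.congr hge
  have hip2 : ip V W = ∫ ω in s, g ω ∂μ := by
    unfold ip
    rw [← integral_indicator hs]
    apply integral_congr_ae
    filter_upwards [hVcoe, hge] with ω h1 h2
    rw [h1, h2]
    by_cases hω : ω ∈ s <;> simp [Set.indicator_apply, hω]
  have hμs : μ s = 0 := by
    by_contra hμ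
    have hsub : s ⊆ Function.support (fun ω => -(g ω)) ∩ s := by
      intro ω hω
      refine ⟨?_, hω⟩
      have : g ω < 0 := hω
      simp only [Function.mem_support]
      intro hcon
      nlinarith
    have hposμ : 0 < μ (Function.support (fun ω => -(g ω)) ∩ s) :=
      lt_of_lt_of_le (pos_iff_ne_zero.mpr hμ) (measure_mono hsub)
    have hnn : 0 ≤ᵐ[μ.restrict s] (fun ω => -(g ω)) := by
      refine (ae_restrict_iff' hs).mpr (Filter.Eventually.of_forall fun ω hω => ?_)
      have : g ω < 0 := hω
      simp only [Pi.zero_apply]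
      linarith
    have hpos := (setIntegral_pos_iff_support_of_nonneg_ae hnn
      (hig.neg.integrableOn)).mpr hposμ
    rw [integral_neg] at hpos
    have : 0 ≤ ∫ ω in s, g ω ∂μ := hip2 ▸ hip
    linarith
  rw [← AEEqFun.coeFn_le]
  have hae : ∀ᵐ ω ∂μ, 0 ≤ g ω := by
    rw [ae_iff]
    have : {ω | ¬ 0 ≤ g ω} = s := by
      ext ω
      simp [hsdef, not_le]
    rwa [this]
  filter_upwards [hge, (AEEqFun.coeFn_zero : (0 : Ω →ₘ[μ] ℝ) =ᵐ[μ] 0), hae] with ω h1 h2 h3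
  rw [h1, h2]
  exact h3

end SystemicRisk2

theorem ereal_biInf_const {ι : Type*} {s : Set ι} (hs : s.Nonempty) (c : EReal) :
    (⨅ i ∈ s, c) = c := by
  rw [iInf_subtype']
  haveI := hs.to_subtype
  exact iInf_const

theorem ereal_lt_biSup_iff {ι : Type*} {s : Set ι} {f : ι → EReal} {x : EReal} :
    (x < ⨆ i ∈ s, f i) ↔ ∃ i ∈ s, x < f i := by
  rw [iSup_subtype', lt_iSup_iff]
  constructor
  · rintro ⟨⟨i, hi⟩, h⟩; exact ⟨i, hi, h⟩
  · rintro ⟨i, hi, h⟩; exact ⟨⟨i, hi⟩, h⟩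

theorem ereal_biInf_lt_iff {ι : Type*} {s : Set ι} {f : ι → EReal} {x : EReal} :
    (⨅ i ∈ s, f i < x) ↔ ∃ i ∈ s, f i < x := by
  rw [iInf_subtype', iInf_lt_iff]
  constructor
  · rintro ⟨⟨i, hi⟩, h⟩; exact ⟨i, hi, h⟩
  · rintro ⟨i, hi, h⟩; exact ⟨⟨i, hi⟩, h⟩

namespace SystemicRisk2
open SystemicRisk

variable {Ω : Type*} [MeasurableSpace Ω] {μ : Measure Ω} {d : ℕ}
variable {Li : Fin d → Set (Ω →ₘ[μ] ℝ)} {nrmX : Fin d → ((Ω →ₘ[μ] ℝ) → ℝ)}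
  {EE : Set (Ω →ₘ[μ] ℝ)} {nrmE : (Ω →ₘ[μ] ℝ) → ℝ}
  {S : (Fin d → (Ω →ₘ[μ] ℝ)) → (Ω →ₘ[μ] ℝ)} {A : Set (Ω →ₘ[μ] ℝ)}

theorem integ_mul_smul_right {U W : Ω →ₘ[μ] ℝ} (c : ℝ)
    (h : Integrable (fun ω => U ω * W ω) μ) :
    Integrable (fun ω => U ω * (c • W) ω) μ := by
  refine (h.const_mul c).congr ?_
  filter_upwards [AEEqFun.coeFn_smul c W] with ω hω
  rw [hω]; simp; ring

theorem ereal_add_biInf_coe {ι : Type*} (a : EReal) (ha : a ≠ ⊤) {s : Set ι}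
    (hs : s.Nonempty) (f : ι → ℝ) :
    a + ⨅ i ∈ s, ((f i : ℝ) : EReal) = ⨅ i ∈ s, (a + ((f i : ℝ) : EReal)) := by
  induction a using EReal.rec with
  | bot =>
    rw [EReal.bot_add]
    have : ∀ i ∈ s, (⊥ : EReal) + ((f i : ℝ) : EReal) = ⊥ := fun i _ => EReal.bot_add _
    rw [show (⨅ i ∈ s, ((⊥ : EReal) + ((f i : ℝ) : EReal))) = ⨅ i ∈ s, (⊥ : EReal) from
      iInf_congr fun i => iInf_congr fun hi => this i hi]
    rw [ereal_biInf_const hs]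
  | coe a => exact ereal_real_add_biInf s a _
  | top => exact absurd rfl ha

/-- The value of the inner infimum of `K_Z` at a fixed `W`. -/
theorem iInf_KZ_eq (hLi : ∀ i, IsAdmissible (Li i) (nrmX i))
    (hW0 : (0 : Ω →ₘ[μ] ℝ) ∈ A) (Z : Fin d → (Ω →ₘ[μ] ℝ)) (W : Ω →ₘ[μ] ℝ) :
    (⨅ X ∈ prodSet Li, KZ A S Z X W) =
      suppS A W + ⨅ X ∈ prodSet Li, ((pairing X Z - ∫ ω, S X ω * W ω ∂μ : ℝ) : EReal) := by
  have hne : (prodSet Li).Nonempty := ⟨0, fun i => (hLi i).zero_mem⟩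
  rw [ereal_add_biInf_coe _ (suppS_ne_top hW0 W) hne]
  rfl

/-- `sup inf K = α`. -/
theorem supinf_eq_alpha (hLi : ∀ i, IsAdmissible (Li i) (nrmX i))
    (hA0 : (0 : Ω →ₘ[μ] ℝ) ∈ A) (Z : Fin d → (Ω →ₘ[μ] ℝ)) :
    (⨆ W ∈ kdual EE, ⨅ X ∈ prodSet Li, KZ A S Z X W) =
      alpha (prodSet Li) (kdual EE) A S Z := by
  have hne : (prodSet Li).Nonempty := ⟨0, fun i => (hLi i).zero_mem⟩
  apply le_antisymm
  · refine iSup₂_le fun W hW => ?_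
    rw [iInf_KZ_eq hLi hA0]
    by_cases hbarr : (⊥ : EReal) < suppS A W
    · exact le_iSup₂ (f := fun W _ => suppS A W +
        ⨅ X ∈ prodSet Li, ((pairing X Z - ip (S X) W : ℝ) : EReal)) W ⟨hW, hbarr⟩
    · have hbot : suppS A W = ⊥ := by
        rcases eq_or_lt_of_le (bot_le : (⊥:EReal) ≤ suppS A W) with h | h
        · exact h.symm
        · exact absurd h hbarr
      rw [hbot, EReal.bot_add]
      exact bot_le
  · refine iSup₂_le fun W hW => ?_
    rw [← iInf_KZ_eq hLi hA0]
    exact le_iSup₂ (f := fun W _ => ⨅ X ∈ prodSet Li, KZ A S Z X W) W hW.1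

/-- `α ≤ σ`. -/
theorem alpha_le_suppV
    (hS : IsAdmissibleImpact (prodSet Li) (prodSet fun i => kdual (Li i)) EE (kdual EE) S)
    (Z : Fin d → (Ω →ₘ[μ] ℝ)) :
    alpha (prodSet Li) (kdual EE) A S Z ≤ suppV (sysAcc (prodSet Li) S A) Z := by
  refine iSup₂_le fun W hW => le_iInf₂ fun X hX => ?_
  have h1 : suppS A W ≤ ((ip (S X) W : ℝ) : EReal) := suppS_le_ip hX.2 W
  have h2 : (⨅ X' ∈ prodSet Li, ((pairing X' Z - ip (S X') W : ℝ) : EReal)) ≤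
      ((pairing X Z - ip (S X) W : ℝ) : EReal) := iInf₂_le X hX.1
  calc suppS A W + ⨅ X' ∈ prodSet Li, ((pairing X' Z - ∫ ω, S X' ω * W ω ∂μ : ℝ) : EReal)
      ≤ ((ip (S X) W : ℝ) : EReal) + ((pairing X Z - ip (S X) W : ℝ) : EReal) :=
        add_le_add h1 h2
    _ = ((pairing X Z : ℝ) : EReal) := by
        rw [← EReal.coe_add]
        norm_num

/-- `inf sup K ≤ σ`. -/
theorem infsup_le_suppV (Z : Fin d → (Ω →ₘ[μ] ℝ)) :
    (⨅ X ∈ prodSet Li, ⨆ W ∈ kdual EE, KZ A S Z X W) ≤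
      suppV (sysAcc (prodSet Li) S A) Z := by
  refine le_iInf₂ fun X hX => ?_
  refine (iInf₂_le X hX.1).trans (iSup₂_le fun W hW => ?_)
  have h1 : suppS A W ≤ ((ip (S X) W : ℝ) : EReal) := suppS_le_ip hX.2 W
  calc suppS A W + ((pairing X Z - ∫ ω, S X ω * W ω ∂μ : ℝ) : EReal)
      ≤ ((ip (S X) W : ℝ) : EReal) + ((pairing X Z - ip (S X) W : ℝ) : EReal) :=
        add_le_add_left h1 _
    _ = ((pairing X Z : ℝ) : EReal) := by
        rw [← EReal.coe_add]
        norm_num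

/-- `σ ≤ inf sup K` (uses separation). -/
theorem suppV_le_infsup (hE : IsAdmissible EE nrmE)
    (hS : IsAdmissibleImpact (prodSet Li) (prodSet fun i => kdual (Li i)) EE (kdual EE) S)
    (hA : IsAdmissibleAcceptance (prodSet Li) EE (kdual EE) S A)
    (Z : Fin d → (Ω →ₘ[μ] ℝ)) :
    suppV (sysAcc (prodSet Li) S A) Z ≤
      (⨅ X ∈ prodSet Li, ⨆ W ∈ kdual EE, KZ A S Z X W) := by
  refine le_iInf₂ fun X hX => ?_
  by_cases hSX : S X ∈ A
  · have h1 : suppV (sysAcc (prodSet Li) S A) Z ≤ ((pairing X Z : ℝ) : EReal) :=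
      iInf₂_le X ⟨hX, hSX⟩
    refine h1.trans ?_
    have h2 : KZ A S Z X 0 = ((pairing X Z : ℝ) : EReal) := by
      unfold KZ
      rw [suppS_zero hA.zero_mem, show (∫ ω, S X ω * (0 : Ω →ₘ[μ] ℝ) ω ∂μ) = ip (S X) 0 from rfl,
        ip_zero_right, zero_add]
      norm_num
    rw [← h2]
    exact le_iSup₂ (f := fun W _ => KZ A S Z X W) (0 : Ω →ₘ[μ] ℝ) (kdualSub EE).zero_mem
  · -- the inner sup is ⊤
    obtain ⟨W₀, hW₀, u, hu1, hu2⟩ := sep_E hE hA (hS.mapsTo X hX) hSX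
    set ε := u - ip (S X) W₀ with hε
    have hεpos : 0 < ε := by simp [hε]; linarith
    have htop : (⨆ W ∈ kdual EE, KZ A S Z X W) = ⊤ := by
      rw [iSup_subtype']
      apply ereal_top_le_iSup_of_forall
      intro M
      obtain ⟨n, hn⟩ := exists_nat_gt ((M - pairing X Z) / ε)
      have hnW : ((n : ℝ) • W₀) ∈ kdual EE := (kdualSub EE).smul_mem _ hW₀
      refine ⟨⟨_, hnW⟩, ?_⟩
      have hsupp : ((((n : ℝ) * u : ℝ)) : EReal) ≤ suppS A ((n : ℝ) • W₀) := by
        refine le_iInf₂ fun U hU => ?_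
        rw [ip_smul_right]
        have : u ≤ ip U W₀ := (hu2 U hU).le
        exact_mod_cast mul_le_mul_of_nonneg_left this (Nat.cast_nonneg n)
      have hip : (∫ ω, S X ω * ((n : ℝ) • W₀) ω ∂μ) = (n : ℝ) * ip (S X) W₀ :=
        ip_smul_right (n : ℝ) (S X) W₀
      have hM : M ≤ pairing X Z + (n : ℝ) * ε := by
        rcases le_or_gt M (pairing X Z) with h | h
        · nlinarith [mul_nonneg (Nat.cast_nonneg (α := ℝ) n) hεpos.le]
        · have := (div_lt_iff₀ hεpos).mp hn
          linarith
      show (M : EReal) ≤ KZ A S Z X ((n : ℝ) • W₀)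
      unfold KZ
      rw [hip]
      calc (M : EReal) ≤ (((pairing X Z + (n:ℝ) * ε : ℝ)) : EReal) := by exact_mod_cast hM
        _ = (((n : ℝ) * u : ℝ) : EReal) +
            ((pairing X Z - (n : ℝ) * ip (S X) W₀ : ℝ) : EReal) := by
              rw [← EReal.coe_add]
              norm_cast
              simp [hε]
              ring
        _ ≤ _ := add_le_add_left hsupp _
    calc suppV (sysAcc (prodSet Li) S A) Z ≤ ⊤ := le_top
      _ = ⨆ W ∈ kdual EE, KZ A S Z X W := htop.symm

end SystemicRisk2

namespace SystemicRisk2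
open SystemicRisk

variable {Ω : Type*} [MeasurableSpace Ω] {μ : Measure Ω} {d : ℕ}
variable {Li : Fin d → Set (Ω →ₘ[μ] ℝ)} {nrmX : Fin d → ((Ω →ₘ[μ] ℝ) → ℝ)}
  {EE : Set (Ω →ₘ[μ] ℝ)} {nrmE : (Ω →ₘ[μ] ℝ) → ℝ}
  {S : (Fin d → (Ω →ₘ[μ] ℝ)) → (Ω →ₘ[μ] ℝ)} {A : Set (Ω →ₘ[μ] ℝ)}

theorem integ_mul_smul_left {U W : Ω →ₘ[μ] ℝ} (c : ℝ)
    (h : Integrable (fun ω => U ω * W ω) μ) :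
    Integrable (fun ω => (c • U) ω * W ω) μ := by
  refine (h.const_mul c).congr ?_
  filter_upwards [AEEqFun.coeFn_smul c U] with ω hω
  rw [hω]; simp; ring

theorem integ_mul_add_left {U V W : Ω →ₘ[μ] ℝ}
    (hU : Integrable (fun ω => U ω * W ω) μ) (hV : Integrable (fun ω => V ω * W ω) μ) :
    Integrable (fun ω => (U + V) ω * W ω) μ := by
  refine (hU.add hV).congr ?_
  filter_upwards [AEEqFun.coeFn_add U V] with ω hω
  rw [hω]; simp only [Pi.add_apply]; ring

set_option maxHeartbeats 1000000 in
/-- Approximate subgradient at `Y` of the concave u.s.c. function `X ↦ E[S(X) W]`: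
the hard direction of Fenchel–Moreau duality on the `X` side. -/
theorem fenchel_X (hLi : ∀ i, IsAdmissible (Li i) (nrmX i)) (hE : IsAdmissible EE nrmE)
    (hS : IsAdmissibleImpact (prodSet Li) (prodSet fun i => kdual (Li i)) EE (kdual EE) S)
    {W : Ω →ₘ[μ] ℝ} (hW : W ∈ kdual EE) (hW0 : (0 : Ω →ₘ[μ] ℝ) ≤ W)
    {Y : Fin d → (Ω →ₘ[μ] ℝ)} (hY : Y ∈ prodSet Li) {ε : ℝ} (hε : 0 < ε) :
    ∃ Z ∈ prodSet fun i => kdual (Li i), ∀ X ∈ prodSet Li,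
      pairing Y Z - ip (S Y) W - ε ≤ pairing X Z - ip (S X) W := by
  classical
  set B := BX Li nrmX hLi with hB
  set φ : ↥(XSub Li nrmX hLi) → ℝ := fun X => ip (S (Subtype.val X)) W with hφ
  have husc : @UpperSemicontinuous (WeakBilin B) ℝ (WeakBilin.instTopologicalSpace B) _ φ :=
    hS.usc W hW hW0
  -- the hypograph
  set H : Set (WeakBilin (prodBilin B)) := {p | p.2 ≤ φ p.1} with hH
  have hint : ∀ (X : Fin d → (Ω →ₘ[μ] ℝ)), X ∈ prodSet Li →
      Integrable (fun ω => S X ω * W ω) μ := fun X hX => hW _ (hS.mapsTo X hX)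
  -- closedness
  letI tX : TopologicalSpace (↥(XSub Li nrmX hLi)) := WeakBilin.instTopologicalSpace B
  have hopen : IsOpen {p : ↥(XSub Li nrmX hLi) × ℝ | φ p.1 < p.2} := by
    have hequ : {p : ↥(XSub Li nrmX hLi) × ℝ | φ p.1 < p.2} =
        ⋃ q : ℚ, ({x : ↥(XSub Li nrmX hLi) | φ x < (q : ℝ)} ×ˢ Set.Ioi (q : ℝ)) := by
      ext p
      simp only [Set.mem_setOf_eq, Set.mem_iUnion, Set.mem_prod, Set.mem_Ioi]
      constructor
      · intro h
        obtain ⟨q, hq1, hq2⟩ := exists_rat_btwn h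
        exact ⟨q, hq1, hq2⟩
      · rintro ⟨q, h1, h2⟩
        exact h1.trans h2
    rw [hequ]
    exact isOpen_iUnion fun q => (husc.isOpen_preimage _).prod isOpen_Ioi
  have hclP : IsClosed {p : ↥(XSub Li nrmX hLi) × ℝ | p.2 ≤ φ p.1} := by
    rw [← isOpen_compl_iff]
    have : {p : ↥(XSub Li nrmX hLi) × ℝ | p.2 ≤ φ p.1}ᶜ =
        {p : ↥(XSub Li nrmX hLi) × ℝ | φ p.1 < p.2} := by
      ext p
      simp [not_le]
    rw [this]
    exact hopen
  have hcl : IsClosed H := by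
    show @IsClosed _ (WeakBilin.instTopologicalSpace (prodBilin B)) H
    rw [prodBilin_topology B]
    exact hclP
  -- convexity
  have hconv : Convex ℝ H := by
    rintro ⟨X, t⟩ hp ⟨X', t'⟩ hq a b ha hb hab
    simp only [hH, Set.mem_setOf_eq] at hp hq ⊢
    have hb' : b = 1 - a := by linarith
    have ha1 : a ≤ 1 := by linarith
    have hcc := hS.concave _ X.2 _ X'.2 a ha ha1
    rw [← hb'] at hcc
    have hcomb : (a • X + b • X' : ↥(XSub Li nrmX hLi)) =
        (⟨a • (X : Fin d → (Ω →ₘ[μ] ℝ)) + b • (X' : Fin d → (Ω →ₘ[μ] ℝ)),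
          (XSub Li nrmX hLi).add_mem ((XSub Li nrmX hLi).smul_mem a X.2)
            ((XSub Li nrmX hLi).smul_mem b X'.2)⟩ : ↥(XSub Li nrmX hLi)) := rfl
    have hφcomb : a * φ X + b * φ X' ≤ φ (a • X + b • X') := by
      rw [hcomb]
      show a * ip (S ↑X) W + b * ip (S ↑X') W ≤
        ip (S (a • (X : Fin d → (Ω →ₘ[μ] ℝ)) + b • (X' : Fin d → (Ω →ₘ[μ] ℝ)))) W
      have hIa : Integrable (fun ω => (a • S (X : Fin d → (Ω →ₘ[μ] ℝ))) ω * W ω) μ :=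
        integ_mul_smul_left a (hint _ X.2)
      have hIb : Integrable (fun ω => (b • S (X' : Fin d → (Ω →ₘ[μ] ℝ))) ω * W ω) μ :=
        integ_mul_smul_left b (hint _ X'.2)
      have hmem : (a • (X : Fin d → (Ω →ₘ[μ] ℝ)) + b • (X' : Fin d → (Ω →ₘ[μ] ℝ))) ∈
          prodSet Li := (XSub Li nrmX hLi).add_mem
        ((XSub Li nrmX hLi).smul_mem a X.2) ((XSub Li nrmX hLi).smul_mem b X'.2)
      calc a * ip (S ↑X) W + b * ip (S ↑X') W
          = ip (a • S (X : Fin d → (Ω →ₘ[μ] ℝ)) + b • S (X' : Fin d → (Ω →ₘ[μ] ℝ))) W := by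
            rw [ip_add_left hIa hIb, ip_smul_left, ip_smul_left]
        _ ≤ ip (S (a • (X : Fin d → (Ω →ₘ[μ] ℝ)) + b • (X' : Fin d → (Ω →ₘ[μ] ℝ)))) W := by
            apply ip_mono_left hcc hW0 (integ_mul_add_left hIa hIb) (hint _ hmem)
    have : (a • (⟨X, t⟩ : WeakBilin (prodBilin B)) + b • (⟨X', t'⟩ : WeakBilin (prodBilin B))).2
        = a * t + b * t' := rfl
    show (a • (⟨X, t⟩ : WeakBilin (prodBilin B)) + b • ⟨X', t'⟩).2 ≤
      φ (a • (⟨X, t⟩ : WeakBilin (prodBilin B)) + b • ⟨X', t'⟩).1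
    rw [this]
    show a * t + b * t' ≤ φ (a • X + b • X')
    calc a * t + b * t' ≤ a * φ X + b * φ X' := by
          have := mul_le_mul_of_nonneg_left hp ha
          have := mul_le_mul_of_nonneg_left hq hb
          linarith
      _ ≤ φ (a • X + b • X') := hφcomb
  -- the point to separate
  set Yp : ↥(XSub Li nrmX hLi) := ⟨Y, hY⟩ with hYp
  have hq : ((Yp, φ Yp + ε) : WeakBilin (prodBilin B)) ∉ H := by
    intro hmem
    have : φ Yp + ε ≤ φ Yp := hmem
    linarith
  obtain ⟨⟨Zd, s⟩, u, h1, h2⟩ := weak_separation (prodBilin B) hconv hcl hq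
  rw [prodBilin_apply] at h1
  simp only at h1
  -- being in the hypograph
  have hmemH : ∀ (X : ↥(XSub Li nrmX hLi)) (t : ℝ), t ≤ φ X →
      u < B X Zd + t * s := by
    intro X t ht
    have := h2 ((X, t) : WeakBilin (prodBilin B)) ht
    rwa [prodBilin_apply] at this
  -- s < 0
  have hs_neg : s < 0 := by
    rcases lt_trichotomy s 0 with h | h | h
    · exact h
    · exfalso
      have h3 := hmemH Yp (φ Yp) le_rfl
      rw [h] at h1 h3
      simp at h1 h3
      linarith
    · exfalso
      obtain ⟨n, hn⟩ := exists_nat_gt ((B Yp Zd + φ Yp * s - u) / s)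
      have h3 := hmemH Yp (φ Yp - n) (by linarith)
      have : (B Yp Zd + φ Yp * s - u) < n * s := by
        have := (div_lt_iff₀ h).mp hn
        linarith
      nlinarith
  -- rescale
  set c : ℝ := -1 / s with hc
  have hcpos : 0 < c := by
    rw [hc]
    exact div_pos_iff.mpr (Or.inr ⟨by norm_num, hs_neg⟩)
  have hcs : c * s = -1 := by
    rw [hc]
    field_simp
    rw [div_self hs_neg.ne]
  set Zv : Fin d → (Ω →ₘ[μ] ℝ) := c • (Zd : Fin d → (Ω →ₘ[μ] ℝ)) with hZv
  have hZvmem : Zv ∈ prodSet fun i => kdual (Li i) := (DSub Li).smul_mem c Zd.2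
  refine ⟨Zv, hZvmem, ?_⟩
  intro X hX
  set Xp : ↥(XSub Li nrmX hLi) := ⟨X, hX⟩ with hXp
  have h3 := hmemH Xp (φ Xp) le_rfl
  have e1 : pairing X Zv = c * B Xp Zd := by
    rw [hZv, pairing_smul_right]
    rfl
  have e2 : pairing Y Zv = c * B Yp Zd := by
    rw [hZv, pairing_smul_right]
    rfl
  have h4 : c * u < c * (B Xp Zd + φ Xp * s) := (mul_lt_mul_iff_right₀ hcpos).mpr h3
  have ex4 : c * (B Xp Zd + φ Xp * s) = c * B Xp Zd + φ Xp * (c * s) := by ring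
  rw [ex4, hcs] at h4
  have h5 : c * (B Yp Zd + (φ Yp + ε) * s) < c * u := (mul_lt_mul_iff_right₀ hcpos).mpr h1
  have ex5 : c * (B Yp Zd + (φ Yp + ε) * s) = c * B Yp Zd + (φ Yp + ε) * (c * s) := by ring
  rw [ex5, hcs] at h5
  have hXid : ip (S X) W = φ Xp := rfl
  have hYid : ip (S Y) W = φ Yp := rfl
  rw [e1, e2, hXid, hYid]
  linarith

end SystemicRisk2

namespace SystemicRisk2
open SystemicRisk

variable {Ω : Type*} [MeasurableSpace Ω] {μ : Measure Ω} {d : ℕ}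
variable {Li : Fin d → Set (Ω →ₘ[μ] ℝ)} {nrmX : Fin d → ((Ω →ₘ[μ] ℝ) → ℝ)}
  {EE : Set (Ω →ₘ[μ] ℝ)} {nrmE : (Ω →ₘ[μ] ℝ) → ℝ}
  {S : (Fin d → (Ω →ₘ[μ] ℝ)) → (Ω →ₘ[μ] ℝ)} {A : Set (Ω →ₘ[μ] ℝ)}

/-- If the affine function `⟨Y, ·⟩` dominates `α`, then `Y` is acceptable. -/
theorem lemD (hLi : ∀ i, IsAdmissible (Li i) (nrmX i)) (hE : IsAdmissible EE nrmE)
    (hS : IsAdmissibleImpact (prodSet Li) (prodSet fun i => kdual (Li i)) EE (kdual EE) S)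
    (hA : IsAdmissibleAcceptance (prodSet Li) EE (kdual EE) S A)
    {Y : Fin d → (Ω →ₘ[μ] ℝ)} (hY : Y ∈ prodSet Li)
    (h : ∀ Z ∈ prodSet fun i => kdual (Li i),
      alpha (prodSet Li) (kdual EE) A S Z ≤ ((pairing Y Z : ℝ) : EReal)) : S Y ∈ A := by
  apply mem_A_of hE hA (hS.mapsTo Y hY)
  intro W hW
  have hW0 : (0 : Ω →ₘ[μ] ℝ) ≤ W := barr_nonneg hE hA hW
  have key : ∀ ε : ℝ, 0 < ε → suppS A W ≤ ((ip (S Y) W + ε : ℝ) : EReal) := by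
    intro ε hε
    obtain ⟨Z, hZ, hZall⟩ := fenchel_X hLi hE hS hW.1 hW0 hY hε
    have h1 : suppS A W + ((pairing Y Z - ip (S Y) W - ε : ℝ) : EReal) ≤
        alpha (prodSet Li) (kdual EE) A S Z := by
      refine le_trans ?_ (le_iSup₂ (f := fun W _ => suppS A W +
        ⨅ X ∈ prodSet Li,
          ((pairing X Z - ∫ ω, S X ω * W ω ∂μ : ℝ) : EReal)) W hW)
      apply add_le_add_right
      refine le_iInf₂ fun X hX => ?_
      exact_mod_cast hZall X hX
    have h2 := h1.trans (h Z hZ)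
    set s₀ := (suppS A W).toReal with hs₀def
    have hs₀ : ((s₀ : ℝ) : EReal) = suppS A W := suppS_real hA.zero_mem hW
    rw [← hs₀, ← EReal.coe_add] at h2
    have h3 : s₀ + (pairing Y Z - ip (S Y) W - ε) ≤ pairing Y Z := by exact_mod_cast h2
    rw [← hs₀]
    exact_mod_cast by linarith
  apply ereal_le_of_forall_real_lt
  intro r hr
  by_contra hc
  have hrc : ip (S Y) W < r := by
    by_contra h'
    push_neg at h'
    exact hc (by exact_mod_cast h')
  have := key ((r - ip (S Y) W) / 2) (by linarith)
  have h4 : (r : EReal) < ((ip (S Y) W + (r - ip (S Y) W) / 2 : ℝ) : EReal) :=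
    lt_of_lt_of_le hr this
  have : r < ip (S Y) W + (r - ip (S Y) W) / 2 := by exact_mod_cast h4
  linarith

/-- `α(0) ≥ 0`. -/
theorem alpha_zero_nonneg (hLi : ∀ i, IsAdmissible (Li i) (nrmX i))
    (hS : IsAdmissibleImpact (prodSet Li) (prodSet fun i => kdual (Li i)) EE (kdual EE) S)
    (hA : IsAdmissibleAcceptance (prodSet Li) EE (kdual EE) S A) :
    (0 : EReal) ≤ alpha (prodSet Li) (kdual EE) A S (0 : Fin d → (Ω →ₘ[μ] ℝ)) := by
  have hne : (prodSet Li).Nonempty := ⟨0, fun i => (hLi i).zero_mem⟩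
  have h0 : (0 : Ω →ₘ[μ] ℝ) ∈ barrS A (kdual EE) :=
    barrS_zero_mem hA.zero_mem (kdualSub EE).zero_mem
  have hval : (suppS A (0 : Ω →ₘ[μ] ℝ) + ⨅ X ∈ prodSet Li,
      ((pairing X (0 : Fin d → (Ω →ₘ[μ] ℝ)) - ∫ ω, S X ω * (0 : Ω →ₘ[μ] ℝ) ω ∂μ : ℝ) : EReal))
      = 0 := by
    rw [suppS_zero hA.zero_mem]
    have hterm : ∀ X ∈ prodSet Li,
        ((pairing X (0 : Fin d → (Ω →ₘ[μ] ℝ)) - ∫ ω, S X ω * (0 : Ω →ₘ[μ] ℝ) ω ∂μ : ℝ) : EReal)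
          = (0 : EReal) := by
      intro X hX
      rw [show (∫ ω, S X ω * (0 : Ω →ₘ[μ] ℝ) ω ∂μ) = ip (S X) 0 from rfl, ip_zero_right,
        pairing_zero_right]
      norm_num
    rw [iInf_congr fun X => iInf_congr fun hX => hterm X hX, ereal_biInf_const hne, zero_add]
  calc (0 : EReal) = _ := hval.symm
    _ ≤ _ := le_iSup₂ (f := fun W _ => suppS A W + ⨅ X ∈ prodSet Li,
        ((pairing X (0 : Fin d → (Ω →ₘ[μ] ℝ)) - ∫ ω, S X ω * W ω ∂μ : ℝ) : EReal))
        (0 : Ω →ₘ[μ] ℝ) h0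

/-- Reaching a value below `α(Z)`. -/
theorem alpha_reach (hLi : ∀ i, IsAdmissible (Li i) (nrmX i))
    (hS : IsAdmissibleImpact (prodSet Li) (prodSet fun i => kdual (Li i)) EE (kdual EE) S)
    (hA : IsAdmissibleAcceptance (prodSet Li) EE (kdual EE) S A)
    {Z : Fin d → (Ω →ₘ[μ] ℝ)} {r : ℝ}
    (hr : (r : EReal) < alpha (prodSet Li) (kdual EE) A S Z) :
    ∃ W ∈ barrS A (kdual EE), ∃ s t : ℝ,
      ((s : ℝ) : EReal) = suppS A W ∧
      (∀ X ∈ prodSet Li, t ≤ pairing X Z - ip (S X) W) ∧ r < s + t := by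
  have hne : (prodSet Li).Nonempty := ⟨0, fun i => (hLi i).zero_mem⟩
  obtain ⟨W, hW, hWlt⟩ := ereal_lt_biSup_iff.mp hr
  set g : EReal := ⨅ X ∈ prodSet Li, ((pairing X Z - ∫ ω, S X ω * W ω ∂μ : ℝ) : EReal) with hg
  have hgtop : g ≠ ⊤ := by
    intro htop
    have hle : g ≤ ((pairing (0 : Fin d → (Ω →ₘ[μ] ℝ)) Z -
        ∫ ω, S (0 : Fin d → (Ω →ₘ[μ] ℝ)) ω * W ω ∂μ : ℝ) : EReal) :=
      iInf₂_le (0 : Fin d → (Ω →ₘ[μ] ℝ)) (fun i => (hLi i).zero_mem)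
    rw [htop] at hle
    exact absurd (hle.trans_lt (EReal.coe_lt_top _)) (lt_irrefl _)
  have hgbot : g ≠ ⊥ := by
    intro hbot
    rw [hbot, EReal.add_bot] at hWlt
    exact absurd hWlt (not_lt_bot)
  set t := g.toReal with ht
  have hgt : ((t : ℝ) : EReal) = g := EReal.coe_toReal hgtop hgbot
  set s := (suppS A W).toReal with hs
  have hst : ((s : ℝ) : EReal) = suppS A W := suppS_real hA.zero_mem hW
  refine ⟨W, hW, s, t, hst, ?_, ?_⟩
  · intro X hX
    have : g ≤ ((pairing X Z - ∫ ω, S X ω * W ω ∂μ : ℝ) : EReal) := iInf₂_le X hX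
    rw [← hgt] at this
    exact_mod_cast this
  · rw [← hst, ← hgt, ← EReal.coe_add] at hWlt
    exact_mod_cast hWlt

/-- Lower bound for `α` from a dual element. -/
theorem alpha_ge (hLi : ∀ i, IsAdmissible (Li i) (nrmX i))
    {Z : Fin d → (Ω →ₘ[μ] ℝ)} {W : Ω →ₘ[μ] ℝ} (hW : W ∈ barrS A (kdual EE)) {s t : ℝ}
    (hs : ((s : ℝ) : EReal) ≤ suppS A W)
    (ht : ∀ X ∈ prodSet Li, t ≤ pairing X Z - ip (S X) W) :
    ((s + t : ℝ) : EReal) ≤ alpha (prodSet Li) (kdual EE) A S Z := by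
  refine le_trans ?_ (le_iSup₂ (f := fun W _ => suppS A W + ⨅ X ∈ prodSet Li,
      ((pairing X Z - ∫ ω, S X ω * W ω ∂μ : ℝ) : EReal)) W hW)
  rw [EReal.coe_add]
  refine add_le_add hs (le_iInf₂ fun X hX => ?_)
  exact_mod_cast ht X hX

end SystemicRisk2

namespace SystemicRisk2
open SystemicRisk

variable {Ω : Type*} [MeasurableSpace Ω] {μ : Measure Ω} {d : ℕ}
variable {Li : Fin d → Set (Ω →ₘ[μ] ℝ)} {nrmX : Fin d → ((Ω →ₘ[μ] ℝ) → ℝ)}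
  {EE : Set (Ω →ₘ[μ] ℝ)} {nrmE : (Ω →ₘ[μ] ℝ) → ℝ}
  {S : (Fin d → (Ω →ₘ[μ] ℝ)) → (Ω →ₘ[μ] ℝ)} {A : Set (Ω →ₘ[μ] ℝ)}

/-- Positive superhomogeneity of `α` (hypograph version). -/
theorem alpha_superhom (hLi : ∀ i, IsAdmissible (Li i) (nrmX i))
    (hS : IsAdmissibleImpact (prodSet Li) (prodSet fun i => kdual (Li i)) EE (kdual EE) S)
    (hA : IsAdmissibleAcceptance (prodSet Li) EE (kdual EE) S A)
    {Z : Fin d → (Ω →ₘ[μ] ℝ)} {c r : ℝ} (hc : 0 < c)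
    (h : (r : EReal) ≤ alpha (prodSet Li) (kdual EE) A S Z) :
    ((c * r : ℝ) : EReal) ≤ alpha (prodSet Li) (kdual EE) A S (c • Z) := by
  apply ereal_le_of_forall_real_lt
  intro r' hr'
  have hr'r : r' < c * r := by exact_mod_cast hr'
  set δ := (c * r - r') / c with hδ
  have hδpos : 0 < δ := div_pos (by linarith) hc
  have hlt : ((r - δ : ℝ) : EReal) < alpha (prodSet Li) (kdual EE) A S Z :=
    lt_of_lt_of_le (by exact_mod_cast (by linarith : r - δ < r)) h
  obtain ⟨W, hW, s, t, hs, ht, hsum⟩ := alpha_reach hLi hS hA hlt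
  have hcW : (c • W) ∈ kdual EE := (kdualSub EE).smul_mem c hW.1
  have hsupp : ((c * s : ℝ) : EReal) ≤ suppS A (c • W) := by
    refine le_iInf₂ fun U hU => ?_
    rw [ip_smul_right]
    have h5 : ((s : ℝ) : EReal) ≤ ((ip U W : ℝ) : EReal) := hs ▸ suppS_le_ip hU W
    have hsr : s ≤ ip U W := by exact_mod_cast h5
    exact_mod_cast mul_le_mul_of_nonneg_left hsr hc.le
  have hbarr : (c • W) ∈ barrS A (kdual EE) :=
    ⟨hcW, lt_of_lt_of_le (bot_lt_iff_ne_bot.mpr (EReal.coe_ne_bot _)) hsupp⟩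
  have htc : ∀ X ∈ prodSet Li, c * t ≤ pairing X (c • Z) - ip (S X) (c • W) := by
    intro X hX
    rw [pairing_smul_right, ip_smul_right]
    have h6 := ht X hX
    nlinarith
  have h7 := alpha_ge hLi hbarr hsupp htc
  refine le_trans ?_ h7
  have hcδ : c * (r - δ) = r' := by
    rw [hδ]
    field_simp
    ring
  have h8 := mul_lt_mul_of_pos_left hsum hc
  have h9 : r' < c * s + c * t := by nlinarith
  exact_mod_cast h9.le

/-- Concavity of `α` (hypograph version). -/
theorem alpha_concave_pt (hLi : ∀ i, IsAdmissible (Li i) (nrmX i))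
    (hE : IsAdmissible EE nrmE)
    (hS : IsAdmissibleImpact (prodSet Li) (prodSet fun i => kdual (Li i)) EE (kdual EE) S)
    (hA : IsAdmissibleAcceptance (prodSet Li) EE (kdual EE) S A)
    {Z₁ Z₂ : Fin d → (Ω →ₘ[μ] ℝ)} (hZ₁ : Z₁ ∈ prodSet fun i => kdual (Li i))
    (hZ₂ : Z₂ ∈ prodSet fun i => kdual (Li i)) {r₁ r₂ : ℝ}
    (h₁ : (r₁ : EReal) ≤ alpha (prodSet Li) (kdual EE) A S Z₁)
    (h₂ : (r₂ : EReal) ≤ alpha (prodSet Li) (kdual EE) A S Z₂)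
    {a b : ℝ} (ha : 0 ≤ a) (hb : 0 ≤ b) (hab : a + b = 1) :
    ((a * r₁ + b * r₂ : ℝ) : EReal) ≤
      alpha (prodSet Li) (kdual EE) A S (a • Z₁ + b • Z₂) := by
  rcases eq_or_lt_of_le ha with rfl | ha'
  · have hb1 : b = 1 := by linarith
    subst hb1
    rw [zero_smul, one_smul, zero_add]
    simpa using h₂
  rcases eq_or_lt_of_le hb with rfl | hb'
  · have ha1 : a = 1 := by linarith
    subst ha1
    rw [zero_smul, one_smul, add_zero]
    simpa using h₁
  apply ereal_le_of_forall_real_lt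
  intro r hr
  have hrr : r < a * r₁ + b * r₂ := by exact_mod_cast hr
  set ε := a * r₁ + b * r₂ - r with hε
  have hεpos : 0 < ε := by simp only [hε]; linarith
  have hlt₁ : ((r₁ - ε : ℝ) : EReal) < alpha (prodSet Li) (kdual EE) A S Z₁ :=
    lt_of_lt_of_le (by exact_mod_cast (by linarith : r₁ - ε < r₁)) h₁
  have hlt₂ : ((r₂ - ε : ℝ) : EReal) < alpha (prodSet Li) (kdual EE) A S Z₂ :=
    lt_of_lt_of_le (by exact_mod_cast (by linarith : r₂ - ε < r₂)) h₂
  obtain ⟨W₁, hW₁, s₁, t₁, hs₁, ht₁, hsum₁⟩ := alpha_reach hLi hS hA hlt₁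
  obtain ⟨W₂, hW₂, s₂, t₂, hs₂, ht₂, hsum₂⟩ := alpha_reach hLi hS hA hlt₂
  set W := a • W₁ + b • W₂ with hWdef
  have hkd : W ∈ kdual EE :=
    (kdualSub EE).add_mem ((kdualSub EE).smul_mem a hW₁.1) ((kdualSub EE).smul_mem b hW₂.1)
  have hipU : ∀ U ∈ EE, ip U W = a * ip U W₁ + b * ip U W₂ := by
    intro U hU
    rw [hWdef, ip_add_right (integ_mul_smul_right a (hW₁.1 U hU))
      (integ_mul_smul_right b (hW₂.1 U hU)), ip_smul_right, ip_smul_right]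
  have hsupp : ((a * s₁ + b * s₂ : ℝ) : EReal) ≤ suppS A W := by
    refine le_iInf₂ fun U hU => ?_
    rw [hipU U (hA.subset hU)]
    have e1 : s₁ ≤ ip U W₁ := by exact_mod_cast hs₁ ▸ suppS_le_ip hU W₁
    have e2 : s₂ ≤ ip U W₂ := by exact_mod_cast hs₂ ▸ suppS_le_ip hU W₂
    have := add_le_add (mul_le_mul_of_nonneg_left e1 ha) (mul_le_mul_of_nonneg_left e2 hb)
    exact_mod_cast this
  have hbarr : W ∈ barrS A (kdual EE) :=
    ⟨hkd, lt_of_lt_of_le (bot_lt_iff_ne_bot.mpr (EReal.coe_ne_bot _)) hsupp⟩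
  have htc : ∀ X ∈ prodSet Li,
      a * t₁ + b * t₂ ≤ pairing X (a • Z₁ + b • Z₂) - ip (S X) W := by
    intro X hX
    have hpair : pairing X (a • Z₁ + b • Z₂) = a * pairing X Z₁ + b * pairing X Z₂ := by
      have hI1 : ∀ i, Integrable (fun ω => X i ω * (a • Z₁) i ω) μ :=
        fun i => integ_mul_smul_right a ((hZ₁ i) _ (hX i))
      have hI2 : ∀ i, Integrable (fun ω => X i ω * (b • Z₂) i ω) μ :=
        fun i => integ_mul_smul_right b ((hZ₂ i) _ (hX i))
      rw [pairing_add_right hI1 hI2, pairing_smul_right, pairing_smul_right]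
    rw [hpair, hipU _ (hS.mapsTo X hX)]
    have e1 := mul_le_mul_of_nonneg_left (ht₁ X hX) ha
    have e2 := mul_le_mul_of_nonneg_left (ht₂ X hX) hb
    nlinarith
  have h7 := alpha_ge hLi hbarr hsupp htc
  refine le_trans ?_ h7
  have e1 := mul_lt_mul_of_pos_left hsum₁ ha'
  have e2 := mul_lt_mul_of_pos_left hsum₂ hb'
  have h9 : r < (a * s₁ + b * s₂) + (a * t₁ + b * t₂) := by nlinarith
  exact_mod_cast h9.le

end SystemicRisk2

namespace SystemicRisk2
open SystemicRisk

variable {Ω : Type*} [MeasurableSpace Ω] {μ : Measure Ω} {d : ℕ}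
variable {Li : Fin d → Set (Ω →ₘ[μ] ℝ)} {nrmX : Fin d → ((Ω →ₘ[μ] ℝ) → ℝ)}
  {EE : Set (Ω →ₘ[μ] ℝ)} {nrmE : (Ω →ₘ[μ] ℝ) → ℝ}
  {S : (Fin d → (Ω →ₘ[μ] ℝ)) → (Ω →ₘ[μ] ℝ)} {A : Set (Ω →ₘ[μ] ℝ)}

/-- The support function `σ` is weak* upper semicontinuous. -/
theorem suppV_usc (hLi : ∀ i, IsAdmissible (Li i) (nrmX i)) :
    @UpperSemicontinuous (↥(prodSet fun i => kdual (Li i))) EReal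
      (wtop (prodSet fun i => kdual (Li i)) (prodSet Li)) _
      (fun Z => suppV (sysAcc (prodSet Li) S A) ((Z : Fin d → (Ω →ₘ[μ] ℝ)))) := by
  set Bd := BXd Li nrmX hLi with hBd
  show @UpperSemicontinuous (WeakBilin Bd) EReal (WeakBilin.instTopologicalSpace Bd) _
      (fun Z => suppV (sysAcc (prodSet Li) S A) (Subtype.val Z))
  rw [upperSemicontinuous_iff_isOpen_preimage]
  intro y
  have hequ : (fun Z : WeakBilin Bd => suppV (sysAcc (prodSet Li) S A) (Subtype.val Z)) ⁻¹'
      (Set.Iio y) = ⋃ X ∈ sysAcc (prodSet Li) S A,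
        {Z : WeakBilin Bd | ((pairing X (Subtype.val Z) : ℝ) : EReal) < y} := by
    ext Z
    simp only [Set.mem_preimage, Set.mem_Iio, Set.mem_iUnion, Set.mem_setOf_eq]
    unfold suppV
    rw [ereal_biInf_lt_iff]
    constructor <;> rintro ⟨i, hi, h⟩ <;> exact ⟨i, hi, h⟩
  rw [hequ]
  refine isOpen_biUnion fun X hX => ?_
  have hcont : Continuous (fun Z : WeakBilin Bd => Bd Z ⟨X, hX.1⟩) :=
    WeakBilin.eval_continuous Bd _
  have hcont2 : Continuous (fun Z : WeakBilin Bd =>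
      ((pairing X (Subtype.val Z) : ℝ) : EReal)) := by
    refine continuous_coe_real_ereal.comp (hcont.congr fun Z => ?_)
    exact pairing_comm _ _
  exact IsOpen.preimage hcont2 isOpen_Iio

set_option maxHeartbeats 1000000 in
/-- If `α` is weak* u.s.c. then `σ = α` (the hard implication, via Fenchel–Moreau). -/
theorem usc_to_eq (hLi : ∀ i, IsAdmissible (Li i) (nrmX i)) (hE : IsAdmissible EE nrmE)
    (hS : IsAdmissibleImpact (prodSet Li) (prodSet fun i => kdual (Li i)) EE (kdual EE) S)
    (hA : IsAdmissibleAcceptance (prodSet Li) EE (kdual EE) S A)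
    (husc : @UpperSemicontinuous (↥(prodSet fun i => kdual (Li i))) EReal
      (wtop (prodSet fun i => kdual (Li i)) (prodSet Li)) _
      (fun Z => alpha (prodSet Li) (kdual EE) A S ((Z : Fin d → (Ω →ₘ[μ] ℝ)))))
    {Z₀ : Fin d → (Ω →ₘ[μ] ℝ)} (hZ₀ : Z₀ ∈ prodSet fun i => kdual (Li i)) :
    suppV (sysAcc (prodSet Li) S A) Z₀ = alpha (prodSet Li) (kdual EE) A S Z₀ := by
  refine le_antisymm ?_ (alpha_le_suppV hS Z₀)
  by_contra hcon
  push_neg at hcon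
  obtain ⟨t₀, ht₁, ht₂⟩ := EReal.exists_between_coe_real hcon
  set Bd := BXd Li nrmX hLi with hBd
  set α' : ↥(DSub Li) → EReal :=
    fun Z => alpha (prodSet Li) (kdual EE) A S (Subtype.val Z) with hα'
  have husc' : @UpperSemicontinuous (WeakBilin Bd) EReal (WeakBilin.instTopologicalSpace Bd)
      _ α' := husc
  letI tD : TopologicalSpace (↥(DSub Li)) := WeakBilin.instTopologicalSpace Bd
  set Ha : Set (WeakBilin (prodBilin Bd)) := {p | ((p.2 : ℝ) : EReal) ≤ α' p.1} with hHa
  -- closedness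
  have hopen : IsOpen {p : ↥(DSub Li) × ℝ | α' p.1 < ((p.2 : ℝ) : EReal)} := by
    have hequ : {p : ↥(DSub Li) × ℝ | α' p.1 < ((p.2 : ℝ) : EReal)} =
        ⋃ q : ℚ, ({Z : ↥(DSub Li) | α' Z < (((q : ℝ) : ℝ) : EReal)} ×ˢ Set.Ioi (q : ℝ)) := by
      ext p
      simp only [Set.mem_setOf_eq, Set.mem_iUnion, Set.mem_prod, Set.mem_Ioi]
      constructor
      · intro hp
        obtain ⟨y, hy1, hy2⟩ := EReal.exists_between_coe_real hp
        have hyp : y < p.2 := by exact_mod_cast hy2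
        obtain ⟨q, hq1, hq2⟩ := exists_rat_btwn hyp
        refine ⟨q, hy1.trans ?_, hq2⟩
        exact_mod_cast hq1
      · rintro ⟨q, h1, h2⟩
        refine h1.trans ?_
        exact_mod_cast h2
    rw [hequ]
    exact isOpen_iUnion fun q => (husc'.isOpen_preimage _).prod isOpen_Ioi
  have hclP : IsClosed {p : ↥(DSub Li) × ℝ | ((p.2 : ℝ) : EReal) ≤ α' p.1} := by
    rw [← isOpen_compl_iff]
    have hcompl : {p : ↥(DSub Li) × ℝ | ((p.2 : ℝ) : EReal) ≤ α' p.1}ᶜ =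
        {p : ↥(DSub Li) × ℝ | α' p.1 < ((p.2 : ℝ) : EReal)} := by
      ext p
      simp [not_le]
    rw [hcompl]
    exact hopen
  have hcl : IsClosed Ha := by
    show @IsClosed _ (WeakBilin.instTopologicalSpace (prodBilin Bd)) Ha
    rw [prodBilin_topology Bd]
    exact hclP
  -- convexity
  have hconv : Convex ℝ Ha := by
    rintro ⟨Z₁, t₁⟩ hp ⟨Z₂, t₂⟩ hq a b ha hb hab
    have hp' : ((t₁ : ℝ) : EReal) ≤ α' Z₁ := hp
    have hq' : ((t₂ : ℝ) : EReal) ≤ α' Z₂ := hq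
    show ((a • (⟨Z₁, t₁⟩ : WeakBilin (prodBilin Bd)) + b • ⟨Z₂, t₂⟩).2 : EReal) ≤
      α' (a • (⟨Z₁, t₁⟩ : WeakBilin (prodBilin Bd)) + b • ⟨Z₂, t₂⟩).1
    show ((a * t₁ + b * t₂ : ℝ) : EReal) ≤
      alpha (prodSet Li) (kdual EE) A S (Subtype.val (a • Z₁ + b • Z₂ : ↥(DSub Li)))
    have hcoe : Subtype.val (a • Z₁ + b • Z₂ : ↥(DSub Li)) =
        a • (Subtype.val Z₁) + b • (Subtype.val Z₂) := rfl
    rw [hcoe]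
    exact alpha_concave_pt hLi hE hS hA Z₁.2 Z₂.2 hp' hq' ha hb hab
  -- the point
  set Z₀p : ↥(DSub Li) := ⟨Z₀, hZ₀⟩ with hZ₀p
  have hq₀ : ((Z₀p, t₀) : WeakBilin (prodBilin Bd)) ∉ Ha := by
    intro hmem
    have hmem' : ((t₀ : ℝ) : EReal) ≤ α' Z₀p := hmem
    exact absurd (lt_of_le_of_lt hmem' ht₁) (lt_irrefl _)
  obtain ⟨⟨Yd, s⟩, u, h1, h2⟩ := weak_separation (prodBilin Bd) hconv hcl hq₀
  rw [prodBilin_apply] at h1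
  simp only at h1
  have hmem2 : ∀ (Z : ↥(DSub Li)) (t : ℝ), ((t : ℝ) : EReal) ≤ α' Z →
      u < Bd Z Yd + t * s := by
    intro Z t hZt
    have h3 := h2 ((Z, t) : WeakBilin (prodBilin Bd)) hZt
    rwa [prodBilin_apply] at h3
  have halpha0 : ((0 : ℝ) : EReal) ≤ α' (0 : ↥(DSub Li)) := by
    show ((0 : ℝ) : EReal) ≤ alpha (prodSet Li) (kdual EE) A S (Subtype.val (0 : ↥(DSub Li)))
    have hcoe : Subtype.val (0 : ↥(DSub Li)) = (0 : Fin d → (Ω →ₘ[μ] ℝ)) := rfl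
    rw [hcoe]
    exact_mod_cast alpha_zero_nonneg hLi hS hA
  have hu0 : u < 0 := by
    have h3 := hmem2 0 0 halpha0
    rw [map_zero] at h3
    simpa using h3
  -- nonnegativity of the functional on the hypograph
  have hfnn : ∀ (Z : ↥(DSub Li)) (t : ℝ), ((t : ℝ) : EReal) ≤ α' Z →
      0 ≤ Bd Z Yd + t * s := by
    intro Z t hZt
    by_contra hneg
    push_neg at hneg
    set v := Bd Z Yd + t * s with hv
    set lam := max 1 (u / v + 1) with hlam
    have hlampos : (0 : ℝ) < lam := lt_of_lt_of_le one_pos (le_max_left _ _)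
    have hZts : ((lam * t : ℝ) : EReal) ≤ α' (lam • Z) := by
      show ((lam * t : ℝ) : EReal) ≤
        alpha (prodSet Li) (kdual EE) A S (Subtype.val (lam • Z : ↥(DSub Li)))
      have hcoe : Subtype.val (lam • Z : ↥(DSub Li)) = lam • Subtype.val Z := rfl
      rw [hcoe]
      exact alpha_superhom hLi hS hA hlampos hZt
    have hscaled := hmem2 (lam • Z) (lam * t) hZts
    have hBl : Bd (lam • Z) Yd = lam * Bd Z Yd := by
      rw [_root_.map_smul]
      rfl
    rw [hBl] at hscaled
    have hlv : lam * v < u := by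
      have h4 : u / v < lam := lt_of_lt_of_le (by linarith) (le_max_right _ _)
      calc lam * v < (u / v) * v := mul_lt_mul_of_neg_right h4 hneg
        _ = u := div_mul_cancel₀ u (ne_of_lt hneg)
    nlinarith [hscaled, hlv]
  have hs0 : s ≤ 0 := by
    have halpham : ((-1 : ℝ) : EReal) ≤ α' (0 : ↥(DSub Li)) :=
      le_trans (by exact_mod_cast (by norm_num : (-1 : ℝ) ≤ 0)) halpha0
    have h3 := hfnn 0 (-1) halpham
    rw [map_zero] at h3
    simp at h3
    linarith
  rcases hs0.lt_or_eq with hsneg | hseq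
  · -- case s < 0
    set c : ℝ := -1 / s with hc
    have hcpos : 0 < c := by
      rw [hc]
      exact div_pos_iff.mpr (Or.inr ⟨by norm_num, hsneg⟩)
    have hcs : c * s = -1 := by
      rw [hc]
      field_simp
      rw [div_self hsneg.ne]
    set Yp : ↥(XSub Li nrmX hLi) := c • Yd with hYp
    have hdom : ∀ Z ∈ prodSet fun i => kdual (Li i),
        alpha (prodSet Li) (kdual EE) A S Z ≤
          ((pairing (Subtype.val Yp) Z : ℝ) : EReal) := by
      intro Z hZ
      apply ereal_le_of_forall_real_lt
      intro r hr
      have h4 := hfnn ⟨Z, hZ⟩ r hr.le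
      have h5 : pairing (Subtype.val Yp) Z = c * Bd ⟨Z, hZ⟩ Yd := by
        have hcoe : Subtype.val Yp = c • (Subtype.val Yd) := rfl
        rw [hcoe, pairing_comm, pairing_smul_right]
        rfl
      rw [h5]
      have h6a : 0 ≤ c * (Bd ⟨Z, hZ⟩ Yd + r * s) := mul_nonneg hcpos.le h4
      have h6b : c * (Bd ⟨Z, hZ⟩ Yd + r * s) = c * Bd ⟨Z, hZ⟩ Yd + r * (c * s) := by ring
      rw [h6b, hcs] at h6a
      have h6 : r ≤ c * Bd ⟨Z, hZ⟩ Yd := by linarith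
      exact_mod_cast h6
    have hSY : S (Subtype.val Yp) ∈ A := lemD hLi hE hS hA Yp.2 hdom
    have h5 : suppV (sysAcc (prodSet Li) S A) Z₀ ≤
        ((pairing (Subtype.val Yp) Z₀ : ℝ) : EReal) := iInf₂_le _ ⟨Yp.2, hSY⟩
    have h6 : pairing (Subtype.val Yp) Z₀ < t₀ := by
      have h7 : pairing (Subtype.val Yp) Z₀ = c * Bd Z₀p Yd := by
        have hcoe : Subtype.val Yp = c • (Subtype.val Yd) := rfl
        rw [hcoe, pairing_comm, pairing_smul_right]
        rfl
      rw [h7]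
      have h8 : Bd Z₀p Yd + t₀ * s < 0 := h1.trans hu0
      have h9a : c * (Bd Z₀p Yd + t₀ * s) < 0 := by
        have h9 := (mul_lt_mul_iff_right₀ hcpos).mpr h8
        simpa using h9
      have h9b : c * (Bd Z₀p Yd + t₀ * s) = c * Bd Z₀p Yd + t₀ * (c * s) := by ring
      rw [h9b, hcs] at h9a
      linarith
    have h10 : ((pairing (Subtype.val Yp) Z₀ : ℝ) : EReal) < ((t₀ : ℝ) : EReal) := by
      exact_mod_cast h6
    exact absurd ((h5.trans_lt h10).trans ht₂) (lt_irrefl _)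
  · -- case s = 0
    obtain ⟨Xb, hXb, hSXb⟩ := hA.preimage_nonempty
    have hq0 : Bd Z₀p Yd < 0 := by
      rw [hseq] at h1
      simp at h1
      linarith
    set lam0 : ℝ := (pairing Xb Z₀ - t₀) / (-(Bd Z₀p Yd)) with hlam0
    set lam : ℝ := max 0 (lam0 + 1) with hlam
    have hlamnn : 0 ≤ lam := le_max_left _ _
    have hlamgt : lam0 < lam := lt_max_iff.mpr (Or.inr (by linarith))
    set Yc : ↥(XSub Li nrmX hLi) := ⟨Xb, hXb⟩ + lam • Yd with hYc
    have hpairYc : ∀ (Z : Fin d → (Ω →ₘ[μ] ℝ)) (hZ : Z ∈ prodSet fun i => kdual (Li i)),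
        pairing (Subtype.val Yc) Z = pairing Xb Z + lam * Bd ⟨Z, hZ⟩ Yd := by
      intro Z hZ
      have hcoe : Subtype.val Yc = Xb + lam • (Subtype.val Yd) := rfl
      have hI1 : ∀ i, Integrable (fun ω => Xb i ω * Z i ω) μ :=
        fun i => (hZ i) _ (hXb i)
      have hI2 : ∀ i, Integrable (fun ω => (lam • (Subtype.val Yd)) i ω * Z i ω) μ :=
        fun i => integ_mul_smul_left lam ((hZ i) _ (Yd.2 i))
      rw [hcoe, pairing_add_left hI1 hI2, pairing_smul_left,
        pairing_comm (Subtype.val Yd) Z]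
      rfl
    have hdom : ∀ Z ∈ prodSet fun i => kdual (Li i),
        alpha (prodSet Li) (kdual EE) A S Z ≤
          ((pairing (Subtype.val Yc) Z : ℝ) : EReal) := by
      intro Z hZ
      apply ereal_le_of_forall_real_lt
      intro r hr
      have h4 := hfnn ⟨Z, hZ⟩ r hr.le
      rw [hseq] at h4
      simp at h4
      have h5 : (r : EReal) < suppV (sysAcc (prodSet Li) S A) Z :=
        hr.trans_le (alpha_le_suppV hS Z)
      have h6 : suppV (sysAcc (prodSet Li) S A) Z ≤ ((pairing Xb Z : ℝ) : EReal) :=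
        iInf₂_le _ ⟨hXb, hSXb⟩
      have h7 : r ≤ pairing Xb Z := by exact_mod_cast (h5.trans_le h6).le
      rw [hpairYc Z hZ]
      have h8 : r ≤ pairing Xb Z + lam * Bd ⟨Z, hZ⟩ Yd := by nlinarith
      exact_mod_cast h8
    have hSY : S (Subtype.val Yc) ∈ A := lemD hLi hE hS hA Yc.2 hdom
    have h5 : suppV (sysAcc (prodSet Li) S A) Z₀ ≤
        ((pairing (Subtype.val Yc) Z₀ : ℝ) : EReal) := iInf₂_le _ ⟨Yc.2, hSY⟩
    have h6 : pairing (Subtype.val Yc) Z₀ < t₀ := by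
      rw [hpairYc Z₀ hZ₀]
      have hpos : 0 < -(Bd Z₀p Yd) := by linarith
      have h9 := (div_lt_iff₀ hpos).mp hlamgt
      have h10 : lam * -(Bd Z₀p Yd) = -(lam * Bd Z₀p Yd) := by ring
      have : Bd ⟨Z₀, hZ₀⟩ Yd = Bd Z₀p Yd := rfl
      rw [this]
      linarith [h9, h10]
    have h10 : ((pairing (Subtype.val Yc) Z₀ : ℝ) : EReal) < ((t₀ : ℝ) : EReal) := by
      exact_mod_cast h6
    exact absurd ((h5.trans_lt h10).trans ht₂) (lt_irrefl _)

end SystemicRisk2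
/-- `σ_{S⁻¹(A)} = α` iff `α` is `σ(X',X)`-upper semicontinuous iff a minimax
identity for `K_Z` holds for every `Z ∈ X'`. -/
theorem statement11 {μ : Measure Ω} [IsProbabilityMeasure μ] {d : ℕ}
    (Li : Fin d → Set (Ω →ₘ[μ] ℝ)) (nrmX : Fin d → ((Ω →ₘ[μ] ℝ) → ℝ))
    (EE : Set (Ω →ₘ[μ] ℝ)) (nrmE : (Ω →ₘ[μ] ℝ) → ℝ)
    (S : (Fin d → (Ω →ₘ[μ] ℝ)) → (Ω →ₘ[μ] ℝ)) (A : Set (Ω →ₘ[μ] ℝ))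
    (hLi : ∀ i, IsAdmissible (Li i) (nrmX i))
    (hE : IsAdmissible EE nrmE)
    (hS : IsAdmissibleImpact (prodSet Li) (prodSet fun i => kdual (Li i)) EE (kdual EE) S)
    (hA : IsAdmissibleAcceptance (prodSet Li) EE (kdual EE) S A) :
    ((∀ Z ∈ prodSet fun i => kdual (Li i),
        suppV (sysAcc (prodSet Li) S A) Z = alpha (prodSet Li) (kdual EE) A S Z) ↔
      @UpperSemicontinuous (↥(prodSet fun i => kdual (Li i))) EReal
        (wtop (prodSet fun i => kdual (Li i)) (prodSet Li)) _
        (fun Z : ↥(prodSet fun i => kdual (Li i)) =>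
          alpha (prodSet Li) (kdual EE) A S (Z : Fin d → (Ω →ₘ[μ] ℝ)))) ∧
    ((∀ Z ∈ prodSet fun i => kdual (Li i),
        suppV (sysAcc (prodSet Li) S A) Z = alpha (prodSet Li) (kdual EE) A S Z) ↔
      ∀ Z ∈ prodSet fun i => kdual (Li i),
        (⨅ X ∈ prodSet Li, ⨆ W ∈ kdual EE, KZ A S Z X W) =
          (⨆ W ∈ kdual EE, ⨅ X ∈ prodSet Li, KZ A S Z X W)) := by
  have hA0 := hA.zero_mem
  have hiff_c : ∀ Z ∈ prodSet fun i => kdual (Li i),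
      (⨅ X ∈ prodSet Li, ⨆ W ∈ kdual EE, KZ A S Z X W) =
        suppV (sysAcc (prodSet Li) S A) Z := fun Z _ =>
    le_antisymm (SystemicRisk2.infsup_le_suppV Z)
      (SystemicRisk2.suppV_le_infsup hE hS hA Z)
  constructor
  · constructor
    · intro ha
      have hfe : (fun Z : ↥(prodSet fun i => kdual (Li i)) =>
          alpha (prodSet Li) (kdual EE) A S (Z : Fin d → (Ω →ₘ[μ] ℝ))) =
          (fun Z : ↥(prodSet fun i => kdual (Li i)) =>
            suppV (sysAcc (prodSet Li) S A) (Z : Fin d → (Ω →ₘ[μ] ℝ))) :=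
        funext fun Z => (ha _ Z.2).symm
      rw [hfe]
      exact SystemicRisk2.suppV_usc hLi
    · intro hb Z hZ
      exact SystemicRisk2.usc_to_eq hLi hE hS hA hb hZ
  · constructor
    · intro ha Z hZ
      rw [hiff_c Z hZ, SystemicRisk2.supinf_eq_alpha hLi hA0]
      exact ha Z hZ
    · intro hc Z hZ
      have hcz := hc Z hZ
      rw [hiff_c Z hZ, SystemicRisk2.supinf_eq_alpha hLi hA0] at hcz
      exact hcz

end SystemicRisk
end
end
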